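/- arXiv:1212.6342 — 11 statements merged into one kernel-verified Lean document; each statement's English description precedes it below -/
import Mathlib

section
/- Let γ > 1 be fixed and M > 0. Then there exist constants c, C > 0 such that for all 0 ≤ T ≤ S < ∞ and 0 < w ≤ M, the integral J_γ(T,S,w) = ∫_T^S t^γ/(t²+w²) dt satisfies c·((S−T)/S)·S^{γ+1}/(max(S,w))² ≤ J_γ(T,S,w) ≤ C·((S−T)/S)·S^{γ+1}/(max(S,w))². -/
open Real

lemma cont_f (γ w : ℝ) (hγ : 0 < γ) (hw : 0 < w) :
    Continuous (fun t : ℝ => t ^ γ / (t ^ 2 + w ^ 2)) := by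
  apply Continuous.div
  · exact continuous_iff_continuousAt.mpr fun x => Real.continuousAt_rpow_const x γ (Or.inr hγ.le)
  · continuity
  · intro t; positivity

lemma rpow_sub_le_aux (α T S : ℝ) (hα : 0 < α) (hT : 0 ≤ T) (hTS : T ≤ S) (hS : 0 < S) :
    S ^ α - T ^ α ≤ max α 1 * ((S - T) * S ^ (α - 1)) := by
  have hSa : S ^ α = S ^ (α - 1) * S := by
    rw [← Real.rpow_add_one hS.ne']; ring_nf
  rcases le_or_gt α 1 with h1 | h1
  · rw [max_eq_right h1]
    have hTa : T * S ^ (α - 1) ≤ T ^ α := by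
      rcases eq_or_lt_of_le hT with h0 | h0
      · simp [← h0, Real.zero_rpow hα.ne']
      · have : S ^ (α - 1) ≤ T ^ (α - 1) :=
          Real.rpow_le_rpow_of_nonpos h0 hTS (by linarith)
        calc T * S ^ (α - 1) ≤ T * T ^ (α - 1) := by nlinarith
          _ = T ^ α := by rw [mul_comm, ← Real.rpow_add_one h0.ne']; ring_nf
    nlinarith [Real.rpow_nonneg hS.le (α - 1)]
  · rw [max_eq_left h1.le]
    have hint : ∫ t in T..S, t ^ (α - 1) = (S ^ α - T ^ α) / α := by
      rw [integral_rpow (Or.inl (by linarith))]; ring_nf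
    have hmono : ∫ t in T..S, t ^ (α - 1) ≤ ∫ _ in T..S, S ^ (α - 1) := by
      apply intervalIntegral.integral_mono_on hTS
      · exact intervalIntegral.intervalIntegrable_rpow' (by linarith)
      · exact intervalIntegrable_const
      · intro t ht
        exact Real.rpow_le_rpow (le_trans hT ht.1) ht.2 (by linarith)
    rw [hint, intervalIntegral.integral_const, smul_eq_mul] at hmono
    have := (div_le_iff₀ (by linarith : (0:ℝ) < α)).mp hmono
    nlinarith

theorem stmt3 (γ M : ℝ) (hγ : 1 < γ) (hM : 0 < M) :
    ∃ c C : ℝ, 0 < c ∧ 0 < C ∧ ∀ T S w : ℝ, 0 ≤ T → T ≤ S → 0 < w → w ≤ M →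
      c * ((S - T) / S * (S ^ (γ + 1) / (max S w) ^ 2)) ≤ (∫ t in T..S, t ^ γ / (t ^ 2 + w ^ 2)) ∧
      (∫ t in T..S, t ^ γ / (t ^ 2 + w ^ 2)) ≤ C * ((S - T) / S * (S ^ (γ + 1) / (max S w) ^ 2)) := by
  have hγ0 : (0:ℝ) < γ := by linarith
  have hγ1 : (0:ℝ) < γ - 1 := by linarith
  refine ⟨1 / (2 * (γ + 1)), 1 + max (γ - 1) 1 / (γ - 1), by positivity, by positivity, ?_⟩
  intro T S w hT hTS hw hwM
  rcases eq_or_lt_of_le hTS with rfl | hTS'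
  · simp
  have hS : 0 < S := lt_of_le_of_lt hT hTS'
  set m := max S w with hm
  have hm0 : 0 < m := lt_of_lt_of_le hS (le_max_left S w)
  have hCge : (1:ℝ) ≤ 1 + max (γ - 1) 1 / (γ - 1) := by
    have : (0:ℝ) ≤ max (γ - 1) 1 / (γ - 1) := by positivity
    linarith
  have hshape : (S - T) / S * (S ^ (γ + 1) / m ^ 2) = (S - T) * S ^ γ / m ^ 2 := by
    rw [Real.rpow_add_one hS.ne']
    field_simp
  have hintf : IntervalIntegrable (fun t : ℝ => t ^ γ / (t ^ 2 + w ^ 2)) MeasureTheory.volume T S :=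
    (cont_f γ w hγ0 hw).intervalIntegrable T S
  constructor
  · -- lower bound
    rw [hshape]
    have hptw : ∀ t ∈ Set.Icc T S, t ^ γ / (2 * m ^ 2) ≤ t ^ γ / (t ^ 2 + w ^ 2) := by
      intro t ht
      have ht0 : 0 ≤ t := le_trans hT ht.1
      have h3 : t ≤ m := le_trans ht.2 (le_max_left S w)
      have h4 : w ≤ m := le_max_right S w
      have h2 : t ^ 2 + w ^ 2 ≤ 2 * m ^ 2 := by nlinarith
      gcongr
      all_goals first
        | exact Real.rpow_nonneg ht0 γ
        | positivity
        | nlinarith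
    have e2 : (∫ t in T..S, t ^ γ / (2 * m ^ 2)) ≤ ∫ t in T..S, t ^ γ / (t ^ 2 + w ^ 2) :=
      intervalIntegral.integral_mono_on hTS
        ((intervalIntegral.intervalIntegrable_rpow' (by linarith)).div_const _) hintf hptw
    have e1 : (∫ t in T..S, t ^ γ / (2 * m ^ 2))
        = (S ^ (γ + 1) - T ^ (γ + 1)) / (γ + 1) / (2 * m ^ 2) := by
      rw [intervalIntegral.integral_div, integral_rpow (Or.inl (by linarith))]
    have hkey : (S - T) * S ^ γ ≤ S ^ (γ + 1) - T ^ (γ + 1) := by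
      have hSa : S ^ (γ + 1) = S ^ γ * S := Real.rpow_add_one hS.ne' γ
      have hTa : T ^ (γ + 1) ≤ T * S ^ γ := by
        rcases eq_or_lt_of_le hT with h0 | h0
        · simp [← h0, Real.zero_rpow (by linarith : γ + 1 ≠ 0)]
        · have h5 : T ^ γ ≤ S ^ γ := Real.rpow_le_rpow h0.le hTS hγ0.le
          rw [Real.rpow_add_one h0.ne']
          nlinarith
      nlinarith
    calc 1 / (2 * (γ + 1)) * ((S - T) * S ^ γ / m ^ 2)
        = (S - T) * S ^ γ / (γ + 1) / (2 * m ^ 2) := by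
          rw [div_div, div_mul_div_comm, one_mul]
          ring
      _ ≤ (S ^ (γ + 1) - T ^ (γ + 1)) / (γ + 1) / (2 * m ^ 2) := by gcongr
      _ = (∫ t in T..S, t ^ γ / (2 * m ^ 2)) := e1.symm
      _ ≤ _ := e2
  · -- upper bound
    rw [hshape]
    have hST : 0 ≤ (S - T) * S ^ γ / m ^ 2 := by
      have := Real.rpow_nonneg hS.le γ
      have : 0 ≤ (S - T) * S ^ γ := by nlinarith
      positivity
    rcases le_total S w with hsw | hws
    · -- S ≤ w, m = w
      have hmw : m = w := max_eq_right hsw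
      have hptw : ∀ t ∈ Set.Icc T S, t ^ γ / (t ^ 2 + w ^ 2) ≤ S ^ γ / w ^ 2 := by
        intro t ht
        have ht0 : 0 ≤ t := le_trans hT ht.1
        have h5 : t ^ γ ≤ S ^ γ := Real.rpow_le_rpow ht0 ht.2 hγ0.le
        have h6 : w ^ 2 ≤ t ^ 2 + w ^ 2 := by nlinarith
        gcongr
        all_goals first
          | exact Real.rpow_nonneg hS.le γ
          | positivity
          | nlinarith
      have e2 : (∫ t in T..S, t ^ γ / (t ^ 2 + w ^ 2)) ≤ ∫ _ in T..S, S ^ γ / w ^ 2 :=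
        intervalIntegral.integral_mono_on hTS hintf intervalIntegrable_const hptw
      rw [intervalIntegral.integral_const, smul_eq_mul] at e2
      have : (S - T) * (S ^ γ / w ^ 2) = (S - T) * S ^ γ / m ^ 2 := by rw [hmw]; ring
      rw [this] at e2
      nlinarith [hST, e2, hCge]
    · -- w ≤ S, m = S
      have hms : m = S := max_eq_left hws
      have hptw : ∀ t ∈ Set.Icc T S, t ^ γ / (t ^ 2 + w ^ 2) ≤ t ^ (γ - 2) := by
        intro t ht
        have ht0 : 0 ≤ t := le_trans hT ht.1
        rcases eq_or_lt_of_le ht0 with h0 | h0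
        · rw [← h0]
          rw [Real.zero_rpow hγ0.ne']
          simp
          positivity
        · have h7 : t ^ γ / (t ^ 2 + w ^ 2) ≤ t ^ γ / t ^ 2 := by
            gcongr
            all_goals first
              | exact Real.rpow_nonneg ht0 γ
              | positivity
              | nlinarith
          have h8 : t ^ γ / t ^ 2 = t ^ (γ - 2) := by
            rw [show (t : ℝ) ^ (2 : ℕ) = t ^ ((2 : ℕ) : ℝ) from (Real.rpow_natCast t 2).symm,
              ← Real.rpow_sub h0]
            norm_num
          linarith
      have e2 : (∫ t in T..S, t ^ γ / (t ^ 2 + w ^ 2)) ≤ ∫ t in T..S, t ^ (γ - 2) :=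
        intervalIntegral.integral_mono_on hTS hintf
          (intervalIntegral.intervalIntegrable_rpow' (by linarith)) hptw
      have e1 : (∫ t in T..S, t ^ (γ - 2)) = (S ^ (γ - 1) - T ^ (γ - 1)) / (γ - 1) := by
        rw [integral_rpow (Or.inl (by linarith))]; ring_nf
      have hkey := rpow_sub_le_aux (γ - 1) T S hγ1 hT hTS hS
      have hSg : S ^ γ / S ^ 2 = S ^ (γ - 2) := by
        rw [show (S : ℝ) ^ (2 : ℕ) = S ^ ((2 : ℕ) : ℝ) from (Real.rpow_natCast S 2).symm,
          ← Real.rpow_sub hS]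
        norm_num
      have hspos : 0 ≤ (S - T) * S ^ (γ - 2) := by
        have := Real.rpow_nonneg hS.le (γ - 2)
        nlinarith
      have hgoal : (S - T) * S ^ γ / m ^ 2 = (S - T) * S ^ (γ - 2) := by
        rw [hms, mul_div_assoc, hSg]
      rw [hgoal]
      have h9 : γ - 1 - 1 = γ - 2 := by ring
      rw [h9] at hkey
      have h10 : (∫ t in T..S, t ^ (γ - 2)) ≤ max (γ - 1) 1 / (γ - 1) * ((S - T) * S ^ (γ - 2)) := by
        rw [e1, div_le_iff₀ hγ1]
        calc S ^ (γ - 1) - T ^ (γ - 1) ≤ max (γ - 1) 1 * ((S - T) * S ^ (γ - 2)) := hkey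
          _ = max (γ - 1) 1 / (γ - 1) * ((S - T) * S ^ (γ - 2)) * (γ - 1) := by
            field_simp
        -- done
      calc (∫ t in T..S, t ^ γ / (t ^ 2 + w ^ 2)) ≤ ∫ t in T..S, t ^ (γ - 2) := e2
        _ ≤ max (γ - 1) 1 / (γ - 1) * ((S - T) * S ^ (γ - 2)) := h10
        _ ≤ (1 + max (γ - 1) 1 / (γ - 1)) * ((S - T) * S ^ (γ - 2)) := by
            rw [add_mul, one_mul]
            linarith [hspos]
end

section
/- Let γ ∈ (−1, 1) be fixed and M > 0. Then there exist constants c, C > 0 such that for all 0 ≤ T ≤ S < ∞ and 0 < w ≤ M, the integral J_γ(T,S,w) = ∫_T^S t^γ/(t²+w²) dt satisfies c·((S−T)/S)·(S^{γ+1}/(max(S,w))²)·(max(T,w)/max(S,w))^{γ−1} ≤ J_γ(T,S,w) ≤ C·((S−T)/S)·(S^{γ+1}/(max(S,w))²)·(max(T,w)/max(S,w))^{γ−1}. -/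
open Real MeasureTheory intervalIntegral

lemma bern {p x : ℝ} (hp : 0 < p) (hx0 : 0 ≤ x) (hx1 : x ≤ 1) :
    min 1 p * (1 - x) ≤ 1 - x ^ p ∧ 1 - x ^ p ≤ max 1 p * (1 - x) := by
  have hs : -1 ≤ x - 1 := by linarith
  have hxid : (1 : ℝ) + (x - 1) = x := by ring
  rcases le_total p 1 with hp1 | hp1
  · have h1 : x ^ p ≤ 1 + p * (x - 1) := by
      have := rpow_one_add_le_one_add_mul_self hs hp.le hp1
      rwa [hxid] at this
    have h2 : x ≤ x ^ p := by
      rcases eq_or_lt_of_le hx0 with rfl | hx0'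
      · simp [Real.zero_rpow hp.ne']
      · calc x = x ^ (1:ℝ) := (Real.rpow_one x).symm
          _ ≤ x ^ p := Real.rpow_le_rpow_of_exponent_ge hx0' hx1 hp1
    exact ⟨by rw [min_eq_right hp1]; nlinarith, by rw [max_eq_left hp1]; linarith⟩
  · have h1 : 1 + p * (x - 1) ≤ x ^ p := by
      have := one_add_mul_self_le_rpow_one_add hs hp1
      rwa [hxid] at this
    have h2 : x ^ p ≤ x := by
      rcases eq_or_lt_of_le hx0 with rfl | hx0'
      · simp [Real.zero_rpow hp.ne']
      · calc x ^ p ≤ x ^ (1:ℝ) := Real.rpow_le_rpow_of_exponent_ge hx0' hx1 hp1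
          _ = x := Real.rpow_one x
    exact ⟨by rw [min_eq_left hp1]; linarith, by rw [max_eq_right hp1]; nlinarith⟩

lemma integ {γ w : ℝ} (hγ : -1 < γ) (hw : 0 < w) (a b : ℝ) :
    IntervalIntegrable (fun t : ℝ => t ^ γ / (t ^ 2 + w ^ 2)) volume a b := by
  have h : ∀ t : ℝ, t ^ γ / (t ^ 2 + w ^ 2) = t ^ γ * (t ^ 2 + w ^ 2)⁻¹ := fun t =>
    div_eq_mul_inv _ _
  simp_rw [h]
  apply (intervalIntegral.intervalIntegrable_rpow' hγ).mul_continuousOn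
  apply ContinuousOn.inv₀
  · fun_prop
  · intro t _
    positivity

lemma low {γ w a b : ℝ} (hγ1 : -1 < γ) (hw : 0 < w) (ha : 0 ≤ a) (hab : a ≤ b)
    (hbw : b ≤ w) (hb : 0 < b) :
    min 1 (γ+1)/(γ+1) * ((b-a) * b ^ γ / (2*w^2)) ≤ (∫ t in a..b, t ^ γ / (t ^ 2 + w ^ 2)) ∧
    (∫ t in a..b, t ^ γ / (t ^ 2 + w ^ 2)) ≤ max 1 (γ+1)/(γ+1) * ((b-a) * b ^ γ / w^2) := by
  have hα : 0 < γ + 1 := by linarith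
  have hx0 : 0 ≤ a/b := by positivity
  have hx1 : a/b ≤ 1 := (div_le_one hb).mpr hab
  obtain ⟨hb1, hb2⟩ := bern hα hx0 hx1
  have hone : (1:ℝ) - a/b = (b-a)/b := by field_simp
  rw [hone] at hb1 hb2
  have heval : (∫ t in a..b, t ^ γ) = b ^ γ * b * (1 - (a/b) ^ (γ+1)) / (γ+1) := by
    rw [integral_rpow (Or.inl hγ1)]
    have e2 : a ^ (γ+1) = b ^ (γ+1) * (a/b) ^ (γ+1) := by
      rw [Real.div_rpow ha hb.le, mul_div_cancel₀]
      exact (Real.rpow_pos_of_pos hb _).ne'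
    have e4 : b ^ (γ+1) = b ^ γ * b := by
      rw [Real.rpow_add hb, Real.rpow_one]
    rw [e2, e4]; ring
  have hBγ : (0:ℝ) ≤ b ^ γ := Real.rpow_nonneg hb.le γ
  have key1 : min 1 (γ+1) * ((b-a) * b ^ γ) ≤ b ^ γ * b * (1 - (a/b)^(γ+1)) := by
    have e5 : min 1 (γ+1) * ((b-a) * b ^ γ) = b ^ γ * b * (min 1 (γ+1) * ((b-a)/b)) := by
      field_simp
    rw [e5]
    gcongr
  have key2 : b ^ γ * b * (1 - (a/b)^(γ+1)) ≤ max 1 (γ+1) * ((b-a) * b ^ γ) := by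
    have e5 : max 1 (γ+1) * ((b-a) * b ^ γ) = b ^ γ * b * (max 1 (γ+1) * ((b-a)/b)) := by
      field_simp
    rw [e5]
    gcongr
  have hup : ∀ t ∈ Set.Icc a b, t ^ γ / (t ^ 2 + w ^ 2) ≤ t ^ γ / w^2 := by
    intro t ht
    have h0t : 0 ≤ t := ha.trans ht.1
    have : (0:ℝ) ≤ t ^ γ := Real.rpow_nonneg h0t γ
    gcongr
    nlinarith
  have hlo : ∀ t ∈ Set.Icc a b, t ^ γ / (2*w^2) ≤ t ^ γ / (t ^ 2 + w ^ 2) := by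
    intro t ht
    have h0t : 0 ≤ t := ha.trans ht.1
    have htw : t ≤ w := ht.2.trans hbw
    have : (0:ℝ) ≤ t ^ γ := Real.rpow_nonneg h0t γ
    gcongr
    nlinarith
  constructor
  · calc min 1 (γ+1)/(γ+1) * ((b-a) * b ^ γ / (2*w^2))
        = (min 1 (γ+1) * ((b-a) * b ^ γ)) / (γ+1) / (2*w^2) := by ring
      _ ≤ (b ^ γ * b * (1 - (a/b)^(γ+1))) / (γ+1) / (2*w^2) := by
          gcongr ?_ / (γ+1) / (2*w^2)
      _ = (∫ t in a..b, t ^ γ) / (2*w^2) := by rw [heval]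
      _ = ∫ t in a..b, t ^ γ / (2*w^2) := (intervalIntegral.integral_div _ _).symm
      _ ≤ ∫ t in a..b, t ^ γ / (t ^ 2 + w ^ 2) :=
          intervalIntegral.integral_mono_on hab
            ((intervalIntegral.intervalIntegrable_rpow' hγ1).div_const _) (integ hγ1 hw a b) hlo
  · calc (∫ t in a..b, t ^ γ / (t ^ 2 + w ^ 2))
        ≤ ∫ t in a..b, t ^ γ / w^2 :=
          intervalIntegral.integral_mono_on hab (integ hγ1 hw a b)
            ((intervalIntegral.intervalIntegrable_rpow' hγ1).div_const _) hup
      _ = (∫ t in a..b, t ^ γ) / w^2 := intervalIntegral.integral_div _ _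
      _ = (b ^ γ * b * (1 - (a/b)^(γ+1))) / (γ+1) / w^2 := by rw [heval]
      _ ≤ (max 1 (γ+1) * ((b-a) * b ^ γ)) / (γ+1) / w^2 := by
          gcongr ?_ / (γ+1) / w^2
      _ = max 1 (γ+1)/(γ+1) * ((b-a) * b ^ γ / w^2) := by ring

lemma high {γ w a b : ℝ} (hγ1 : -1 < γ) (hγ2 : γ < 1) (hw : 0 < w) (hwa : w ≤ a) (hab : a ≤ b) :
    min 1 (1-γ)/(1-γ) * ((b-a) * a ^ (γ-1) / (2*b)) ≤ (∫ t in a..b, t ^ γ / (t ^ 2 + w ^ 2)) ∧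
    (∫ t in a..b, t ^ γ / (t ^ 2 + w ^ 2)) ≤ max 1 (1-γ)/(1-γ) * ((b-a) * a ^ (γ-1) / b) := by
  have ha : 0 < a := hw.trans_le hwa
  have hb : 0 < b := ha.trans_le hab
  have hβ : 0 < 1 - γ := by linarith
  have h0 : (0:ℝ) ∉ Set.uIcc a b := by
    rw [Set.uIcc_of_le hab]
    intro h
    exact absurd h.1 (not_le.mpr ha)
  have hint : IntervalIntegrable (fun t : ℝ => t ^ (γ-2)) volume a b :=
    intervalIntegrable_rpow (Or.inr h0)
  -- pointwise bounds
  have hup : ∀ t ∈ Set.Icc a b, t ^ γ / (t ^ 2 + w ^ 2) ≤ t ^ (γ-2) := by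
    intro t ht
    have htpos : 0 < t := ha.trans_le ht.1
    have h2 : t ^ (γ-2) = t ^ γ / t ^ 2 := by
      rw [Real.rpow_sub htpos, Real.rpow_two]
    rw [h2]
    gcongr
    nlinarith
  have hlo : ∀ t ∈ Set.Icc a b, t ^ (γ-2) / 2 ≤ t ^ γ / (t ^ 2 + w ^ 2) := by
    intro t ht
    have htpos : 0 < t := ha.trans_le ht.1
    have hwt : w ≤ t := hwa.trans ht.1
    have h2 : t ^ (γ-2) = t ^ γ / t ^ 2 := by
      rw [Real.rpow_sub htpos, Real.rpow_two]
    rw [h2, div_div]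
    gcongr
    nlinarith
  -- exact value of rpow integral
  have heval : (∫ t in a..b, t ^ (γ-2)) = a ^ (γ-1) * (1 - (a/b) ^ (1-γ)) / (1-γ) := by
    have hne : γ - 2 ≠ -1 := by intro h; linarith
    rw [integral_rpow (Or.inr ⟨hne, h0⟩)]
    have e1 : γ - 2 + 1 = γ - 1 := by ring
    rw [e1]
    have e3 : a ^ (γ-1) * a ^ (1-γ) = 1 := by
      rw [← Real.rpow_add ha]; norm_num
    have e2 : b ^ (γ-1) = a ^ (γ-1) * (a/b) ^ (1-γ) := by
      rw [Real.div_rpow ha.le hb.le, ← mul_div_assoc, e3, one_div, ← Real.rpow_neg hb.le]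
      congr 1; ring
    rw [e2, div_eq_div_iff (by intro h; apply hγ2.ne'; linarith) hβ.ne']
    ring
  have hx0 : 0 ≤ a / b := by positivity
  have hx1 : a / b ≤ 1 := (div_le_one hb).mpr hab
  obtain ⟨hb1, hb2⟩ := bern hβ hx0 hx1
  have hone : (1:ℝ) - a/b = (b-a)/b := by field_simp
  rw [hone] at hb1 hb2
  have hA : (0:ℝ) ≤ a ^ (γ-1) := Real.rpow_nonneg ha.le _
  constructor
  · have step1 : min 1 (1-γ)/(1-γ) * ((b-a) * a ^ (γ-1) / b) ≤ ∫ t in a..b, t ^ (γ-2) := by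
      rw [heval]
      calc min 1 (1-γ)/(1-γ) * ((b-a) * a ^ (γ-1) / b)
          = a ^ (γ-1) * (min 1 (1-γ) * ((b-a)/b)) / (1-γ) := by ring
        _ ≤ a ^ (γ-1) * (1 - (a/b) ^ (1-γ)) / (1-γ) := by gcongr
    calc min 1 (1-γ)/(1-γ) * ((b-a) * a ^ (γ-1) / (2*b))
        = (min 1 (1-γ)/(1-γ) * ((b-a) * a ^ (γ-1) / b)) / 2 := by ring
      _ ≤ (∫ t in a..b, t ^ (γ-2)) / 2 := by linarith
      _ = ∫ t in a..b, t ^ (γ-2) / 2 := (intervalIntegral.integral_div 2 _).symm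
      _ ≤ ∫ t in a..b, t ^ γ / (t ^ 2 + w ^ 2) :=
          intervalIntegral.integral_mono_on hab (hint.div_const 2) (integ hγ1 hw a b) hlo
  · calc (∫ t in a..b, t ^ γ / (t ^ 2 + w ^ 2))
        ≤ ∫ t in a..b, t ^ (γ-2) :=
          intervalIntegral.integral_mono_on hab (integ hγ1 hw a b) hint hup
      _ = a ^ (γ-1) * (1 - (a/b) ^ (1-γ)) / (1-γ) := heval
      _ ≤ a ^ (γ-1) * (max 1 (1-γ) * ((b-a)/b)) / (1-γ) := by gcongr
      _ = max 1 (1-γ)/(1-γ) * ((b-a) * a ^ (γ-1) / b) := by ring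

lemma cross {T w S A : ℝ} (hT : 0 ≤ T) (hTw : T ≤ w) (hwS : w ≤ S) (hA : 0 ≤ A)
    (hw : 0 < w) (hS : 0 < S) : (w-T) * A / w ≤ 2*(S-T) * A / S := by
  rw [div_le_div_iff₀ hw hS]
  have hs : (w-T)*S ≤ 2*(S-T)*w := by
    nlinarith [mul_nonneg (sub_nonneg.2 (hTw.trans hwS)) hw.le,
      mul_nonneg hT (sub_nonneg.2 hwS)]
  nlinarith [mul_le_mul_of_nonneg_right hs hA]

theorem stmt4 (γ M : ℝ) (hγ1 : -1 < γ) (hγ2 : γ < 1) (hM : 0 < M) :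
    ∃ c C : ℝ, 0 < c ∧ 0 < C ∧ ∀ T S w : ℝ, 0 ≤ T → T ≤ S → 0 < w → w ≤ M →
      c * ((S - T) / S * (S ^ (γ + 1) / (max S w) ^ 2) * (max T w / max S w) ^ (γ - 1))
          ≤ (∫ t in T..S, t ^ γ / (t ^ 2 + w ^ 2)) ∧
      (∫ t in T..S, t ^ γ / (t ^ 2 + w ^ 2))
          ≤ C * ((S - T) / S * (S ^ (γ + 1) / (max S w) ^ 2) * (max T w / max S w) ^ (γ - 1)) := by
  have hα : 0 < γ + 1 := by linarith
  have hβ : 0 < 1 - γ := by linarith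
  set m₁ : ℝ := min 1 (γ+1)/(γ+1) with hm₁
  set k₁ : ℝ := min 1 (1-γ)/(1-γ) with hk₁
  set m₂ : ℝ := max 1 (γ+1)/(γ+1) with hm₂
  set k₂ : ℝ := max 1 (1-γ)/(1-γ) with hk₂
  have hm₁p : 0 < m₁ := by rw [hm₁]; positivity
  have hk₁p : 0 < k₁ := by rw [hk₁]; positivity
  have hm₂p : 0 < m₂ := by rw [hm₂]; positivity
  have hk₂p : 0 < k₂ := by rw [hk₂]; positivity
  refine ⟨min m₁ k₁ / 4, 2*m₂ + 2*k₂, by positivity, by positivity, ?_⟩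
  intro T S w hT hTS hw hwM
  rcases eq_or_lt_of_le hTS with rfl | hTS'
  · simp [intervalIntegral.integral_same, sub_self]
  have hS : 0 < S := lt_of_le_of_lt hT hTS'
  have hminm : min m₁ k₁ ≤ m₁ := min_le_left _ _
  have hmink : min m₁ k₁ ≤ k₁ := min_le_right _ _
  have hminp : 0 < min m₁ k₁ := lt_min hm₁p hk₁p
  rcases le_or_gt w T with hwT | hTw
  · -- Case 1 : w ≤ T
    have hT' : 0 < T := hw.trans_le hwT
    have hwS' : w ≤ S := hwT.trans hTS
    have hSne : S ^ (γ-1) ≠ 0 := (Real.rpow_pos_of_pos hS _).ne'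
    have hS2 : S ^ (γ+1) = S ^ (γ-1) * S^2 := by
      rw [← Real.rpow_natCast S 2, ← Real.rpow_add hS]; congr 1; ring
    have hB : (S - T) / S * (S ^ (γ + 1) / (max S w) ^ 2) * (max T w / max S w) ^ (γ - 1)
        = (S-T) * T ^ (γ-1) / S := by
      rw [max_eq_left hwS', max_eq_left hwT, Real.div_rpow hT'.le hS.le, hS2]
      field_simp
    rw [hB]
    have hE : 0 ≤ (S-T) * T ^ (γ-1) / S :=
      div_nonneg (mul_nonneg (by linarith) (Real.rpow_nonneg hT'.le _)) hS.le
    obtain ⟨L, U⟩ := high hγ1 hγ2 hw hwT hTS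
    constructor
    · calc min m₁ k₁ / 4 * ((S-T) * T ^ (γ-1) / S)
          ≤ k₁/2 * ((S-T) * T ^ (γ-1) / S) :=
            mul_le_mul_of_nonneg_right (by linarith) hE
        _ = k₁ * ((S-T) * T ^ (γ-1) / (2*S)) := by ring
        _ ≤ _ := L
    · calc (∫ t in T..S, t ^ γ / (t ^ 2 + w ^ 2))
          ≤ k₂ * ((S-T) * T ^ (γ-1) / S) := U
        _ ≤ (2*m₂ + 2*k₂) * ((S-T) * T ^ (γ-1) / S) :=
            mul_le_mul_of_nonneg_right (by linarith) hE
  rcases le_or_gt S w with hSw | hwS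
  · -- Case 2 : S ≤ w
    have hB : (S - T) / S * (S ^ (γ + 1) / (max S w) ^ 2) * (max T w / max S w) ^ (γ - 1)
        = (S-T) * S ^ γ / w^2 := by
      rw [max_eq_right hSw, max_eq_right (hTw.le.trans (le_refl w)), div_self hw.ne', Real.one_rpow,
        Real.rpow_add hS, Real.rpow_one]
      field_simp
    rw [hB]
    have hE : 0 ≤ (S-T) * S ^ γ / w^2 :=
      div_nonneg (mul_nonneg (by linarith) (Real.rpow_nonneg hS.le _)) (by positivity)
    obtain ⟨L, U⟩ := low hγ1 hw hT hTS hSw hS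
    constructor
    · calc min m₁ k₁ / 4 * ((S-T) * S ^ γ / w^2)
          ≤ m₁/2 * ((S-T) * S ^ γ / w^2) := mul_le_mul_of_nonneg_right (by linarith) hE
        _ = m₁ * ((S-T) * S ^ γ / (2*w^2)) := by ring
        _ ≤ _ := L
    · calc (∫ t in T..S, t ^ γ / (t ^ 2 + w ^ 2))
          ≤ m₂ * ((S-T) * S ^ γ / w^2) := U
        _ ≤ (2*m₂ + 2*k₂) * ((S-T) * S ^ γ / w^2) :=
            mul_le_mul_of_nonneg_right (by linarith) hE
  · -- Case 3 : T < w < S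
    have hSne : S ^ (γ-1) ≠ 0 := (Real.rpow_pos_of_pos hS _).ne'
    have hS2 : S ^ (γ+1) = S ^ (γ-1) * S^2 := by
      rw [← Real.rpow_natCast S 2, ← Real.rpow_add hS]; congr 1; ring
    have hB : (S - T) / S * (S ^ (γ + 1) / (max S w) ^ 2) * (max T w / max S w) ^ (γ - 1)
        = (S-T) * w ^ (γ-1) / S := by
      rw [max_eq_left hwS.le, max_eq_right hTw.le, Real.div_rpow hw.le hS.le, hS2]
      field_simp
    rw [hB]
    set A : ℝ := w ^ (γ-1) with hA'
    have hA : 0 ≤ A := Real.rpow_nonneg hw.le _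
    have hwγ : w ^ γ = A * w := by
      rw [hA', ← Real.rpow_add_one hw.ne' (γ-1)]; congr 1; ring
    have hsplit : (∫ t in T..w, t ^ γ / (t ^ 2 + w ^ 2)) + (∫ t in w..S, t ^ γ / (t ^ 2 + w ^ 2))
        = ∫ t in T..S, t ^ γ / (t ^ 2 + w ^ 2) :=
      intervalIntegral.integral_add_adjacent_intervals (integ hγ1 hw T w) (integ hγ1 hw w S)
    obtain ⟨L1, U1⟩ := low hγ1 hw hT hTw.le le_rfl hw
    obtain ⟨L2, U2⟩ := high hγ1 hγ2 hw le_rfl hwS.le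
    rw [hwγ] at L1 U1
    have e1 : (w-T) * (A*w) / (2*w^2) = (w-T) * A / (2*w) := by
      field_simp
    have e2 : (w-T) * (A*w) / w^2 = (w-T) * A / w := by
      field_simp
    rw [e1] at L1
    rw [e2] at U1
    have hE : 0 ≤ (S-T) * A / S :=
      div_nonneg (mul_nonneg (by linarith) hA) hS.le
    constructor
    · -- lower bound
      have hwS' : w ≤ S := hwS.le
      have l1 : min m₁ k₁ / 2 * ((w-T) * A / S) ≤ m₁ * ((w-T) * A / (2*w)) := by
        have h1 : (w-T) * A / S ≤ (w-T) * A / w := by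
          gcongr
        calc min m₁ k₁ / 2 * ((w-T) * A / S) ≤ m₁ / 2 * ((w-T) * A / w) := by
              apply mul_le_mul (by linarith) h1
                (div_nonneg (mul_nonneg (by linarith) hA) hS.le) (by positivity)
          _ = m₁ * ((w-T) * A / (2*w)) := by ring
      have l2 : min m₁ k₁ / 2 * ((S-w) * A / S) ≤ k₁ * ((S-w) * A / (2*S)) := by
        calc min m₁ k₁ / 2 * ((S-w) * A / S) ≤ k₁ / 2 * ((S-w) * A / S) := by
              apply mul_le_mul_of_nonneg_right (by linarith)
                (div_nonneg (mul_nonneg (by linarith) hA) hS.le)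
          _ = k₁ * ((S-w) * A / (2*S)) := by ring
      calc min m₁ k₁ / 4 * ((S-T) * A / S)
          ≤ min m₁ k₁ / 2 * ((w-T) * A / S) + min m₁ k₁ / 2 * ((S-w) * A / S) := by
            have : min m₁ k₁ / 2 * ((w-T) * A / S) + min m₁ k₁ / 2 * ((S-w) * A / S)
                = min m₁ k₁ / 2 * ((S-T) * A / S) := by ring
            rw [this]
            exact mul_le_mul_of_nonneg_right (by linarith) hE
        _ ≤ m₁ * ((w-T) * A / (2*w)) + k₁ * ((S-w) * A / (2*S)) := add_le_add l1 l2
        _ ≤ (∫ t in T..w, t ^ γ / (t ^ 2 + w ^ 2)) + ∫ t in w..S, t ^ γ / (t ^ 2 + w ^ 2) :=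
            add_le_add L1 L2
        _ = _ := hsplit
    · -- upper bound
      have u_key : (w-T) * A / w ≤ 2*(S-T) * A / S :=
        cross hT hTw.le hwS.le hA hw hS
      have u1 : (∫ t in T..w, t ^ γ / (t ^ 2 + w ^ 2)) ≤ 2*m₂ * ((S-T) * A / S) := by
        calc (∫ t in T..w, t ^ γ / (t ^ 2 + w ^ 2)) ≤ m₂ * ((w-T) * A / w) := U1
          _ ≤ m₂ * (2*(S-T) * A / S) := mul_le_mul_of_nonneg_left u_key hm₂p.le
          _ = 2*m₂ * ((S-T) * A / S) := by ring
      have u2 : (∫ t in w..S, t ^ γ / (t ^ 2 + w ^ 2)) ≤ 2*k₂ * ((S-T) * A / S) := by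
        calc (∫ t in w..S, t ^ γ / (t ^ 2 + w ^ 2)) ≤ k₂ * ((S-w) * A / S) := U2
          _ ≤ 2*k₂ * ((S-T) * A / S) := by
              have h4 : (S-w) * A / S ≤ (S-T) * A / S := by gcongr <;> linarith
              apply mul_le_mul (by linarith) h4
                (div_nonneg (mul_nonneg (by linarith) hA) hS.le) (by positivity)

      calc (∫ t in T..S, t ^ γ / (t ^ 2 + w ^ 2))
          = (∫ t in T..w, t ^ γ / (t ^ 2 + w ^ 2)) + ∫ t in w..S, t ^ γ / (t ^ 2 + w ^ 2) :=
            hsplit.symm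
        _ ≤ 2*m₂ * ((S-T) * A / S) + 2*k₂ * ((S-T) * A / S) := add_le_add u1 u2
        _ = (2*m₂ + 2*k₂) * ((S-T) * A / S) := by ring
end

section
/- Let γ < −1 be fixed and M > 0. Then there exist constants c, C > 0 such that for all 0 < T ≤ S < ∞ and 0 < w ≤ M, the integral J_γ(T,S,w) = ∫_T^S t^γ/(t²+w²) dt satisfies c·((S−T)/S)·T^{γ+1}/(max(T,w))² ≤ J_γ(T,S,w) ≤ C·((S−T)/S)·T^{γ+1}/(max(T,w))². -/
open Real

theorem stmt5 (γ M : ℝ) (hγ : γ < -1) (hM : 0 < M) :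
    ∃ c C : ℝ, 0 < c ∧ 0 < C ∧ ∀ T S w : ℝ, 0 < T → T ≤ S → 0 < w → w ≤ M →
      c * ((S - T) / S * (T ^ (γ + 1) / (max T w) ^ 2)) ≤ (∫ t in T..S, t ^ γ / (t ^ 2 + w ^ 2)) ∧
      (∫ t in T..S, t ^ γ / (t ^ 2 + w ^ 2)) ≤ C * ((S - T) / S * (T ^ (γ + 1) / (max T w) ^ 2)) := by
  set β := -(γ + 1) with hβdef
  have hβ : 0 < β := by rw [hβdef]; linarith
  have hβne : β ≠ 0 := hβ.ne'
  refine ⟨(2:ℝ) ^ γ / 8, max 1 β / β, by positivity, by positivity, ?_⟩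
  intro T S w hT hTS hw hwM
  have hS : 0 < S := lt_of_lt_of_le hT hTS
  set m := max T w with hm
  have hm0 : 0 < m := lt_of_lt_of_le hT (le_max_left _ _)
  have hTm : T ≤ m := le_max_left _ _
  have hwm : w ≤ m := le_max_right _ _
  have hcont : ∀ a b : ℝ, T ≤ a → a ≤ b → b ≤ S →
      IntervalIntegrable (fun t => t ^ γ / (t ^ 2 + w ^ 2)) MeasureTheory.volume a b := by
    intro a b ha hab hbS
    apply ContinuousOn.intervalIntegrable
    rw [Set.uIcc_of_le hab]
    apply ContinuousOn.div
    · intro x hx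
      exact (Real.continuousAt_rpow_const x γ (Or.inl (by nlinarith [hx.1]))).continuousWithinAt
    · fun_prop
    · intro x hx
      have : 0 < x := by linarith [hx.1]
      positivity
  constructor
  · -- lower bound
    set S' := min S (2 * T) with hS'
    have hTS' : T ≤ S' := le_min hTS (by linarith)
    have hS'S : S' ≤ S := min_le_left _ _
    have hsplit : (∫ t in T..S', t ^ γ / (t ^ 2 + w ^ 2)) +
        (∫ t in S'..S, t ^ γ / (t ^ 2 + w ^ 2)) = ∫ t in T..S, t ^ γ / (t ^ 2 + w ^ 2) :=
      intervalIntegral.integral_add_adjacent_intervals (hcont T S' le_rfl hTS' hS'S)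
        (hcont S' S hTS' hS'S le_rfl)
    have h2 : (0:ℝ) ≤ ∫ t in S'..S, t ^ γ / (t ^ 2 + w ^ 2) := by
      apply intervalIntegral.integral_nonneg hS'S
      intro x hx
      have hx0 : 0 < x := lt_of_lt_of_le hT (le_trans hTS' hx.1)
      exact div_nonneg (Real.rpow_nonneg hx0.le γ) (by positivity)
    have h1 : (S' - T) * ((2 * T) ^ γ / (8 * m ^ 2)) ≤
        ∫ t in T..S', t ^ γ / (t ^ 2 + w ^ 2) := by
      have := intervalIntegral.integral_mono_on hTS'
        (intervalIntegrable_const (c := (2 * T) ^ γ / (8 * m ^ 2)))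
        (hcont T S' le_rfl hTS' hS'S) ?_
      · simpa [intervalIntegral.integral_const, smul_eq_mul, mul_div_assoc] using this
      · intro x hx
        have hx0 : 0 < x := lt_of_lt_of_le hT hx.1
        have hx2 : x ≤ 2 * T := le_trans hx.2 (min_le_right _ _)
        have hnum : (2 * T) ^ γ ≤ x ^ γ :=
          Real.rpow_le_rpow_of_nonpos hx0 hx2 (by linarith)
        have hden0 : 0 < x ^ 2 + w ^ 2 := by positivity
        have hden : x ^ 2 + w ^ 2 ≤ 8 * m ^ 2 := by nlinarith
        exact div_le_div₀ (Real.rpow_nonneg hx0.le γ) hnum hden0 hden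
    have key : (2:ℝ) ^ γ / 8 * ((S - T) / S * (T ^ (γ + 1) / m ^ 2)) ≤
        (S' - T) * ((2 * T) ^ γ / (8 * m ^ 2)) := by
      have h2T : (2 * T) ^ γ = 2 ^ γ * T ^ γ := Real.mul_rpow (by norm_num) hT.le
      have hT1 : T ^ (γ + 1) = T ^ γ * T := Real.rpow_add_one hT.ne' γ
      have hS'ineq : (S - T) / S * T ≤ S' - T := by
        rcases le_total S (2 * T) with h | h
        · rw [hS', min_eq_left h, div_mul_eq_mul_div, div_le_iff₀ hS]
          nlinarith
        · rw [hS', min_eq_right h, div_mul_eq_mul_div, div_le_iff₀ hS]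
          nlinarith
      have hTγ : 0 < T ^ γ := Real.rpow_pos_of_pos hT γ
      have h2γ : 0 < (2:ℝ) ^ γ := Real.rpow_pos_of_pos (by norm_num) γ
      rw [h2T, hT1]
      calc (2:ℝ) ^ γ / 8 * ((S - T) / S * (T ^ γ * T / m ^ 2))
          = ((S - T) / S * T) * (2 ^ γ * T ^ γ / (8 * m ^ 2)) := by ring
        _ ≤ (S' - T) * (2 ^ γ * T ^ γ / (8 * m ^ 2)) := by
            apply mul_le_mul_of_nonneg_right hS'ineq
            exact div_nonneg (mul_nonneg h2γ.le hTγ.le) (by positivity)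
    linarith
  · -- upper bound
    have hmono : (∫ t in T..S, t ^ γ / (t ^ 2 + w ^ 2)) ≤ ∫ t in T..S, t ^ γ / m ^ 2 := by
      apply intervalIntegral.integral_mono_on hTS (hcont T S le_rfl hTS le_rfl)
      · apply ContinuousOn.intervalIntegrable
        rw [Set.uIcc_of_le hTS]
        apply ContinuousOn.div_const
        intro x hx
        exact (Real.continuousAt_rpow_const x γ (Or.inl (by nlinarith [hx.1]))).continuousWithinAt
      · intro x hx
        have hx0 : 0 < x := lt_of_lt_of_le hT hx.1
        have hden : m ^ 2 ≤ x ^ 2 + w ^ 2 := by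
          rcases max_cases T w with ⟨h1, _⟩ | ⟨h1, _⟩ <;> rw [hm, h1] <;> nlinarith [hx.1]
        exact div_le_div₀ (Real.rpow_nonneg hx0.le γ) le_rfl (pow_pos hm0 2) hden
    have hval : (∫ t in T..S, t ^ γ / m ^ 2) =
        (S ^ (γ + 1) - T ^ (γ + 1)) / (γ + 1) / m ^ 2 := by
      rw [intervalIntegral.integral_div, integral_rpow]
      right
      refine ⟨by linarith, ?_⟩
      rw [Set.uIcc_of_le hTS]; intro h; exact absurd h.1 (by linarith)
    rw [hval] at hmono
    refine le_trans hmono ?_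
    have hkey : (S ^ (γ + 1) - T ^ (γ + 1)) / (γ + 1) ≤
        max 1 β / β * ((S - T) / S * T ^ (γ + 1)) := by
      have hγβ : γ + 1 = -β := by rw [hβdef]; ring
      have hbern : T ^ (γ + 1) - S ^ (γ + 1) ≤ max 1 β * ((S - T) / S) * T ^ (γ + 1) := by
        set r := T / S with hr
        have hr0 : 0 < r := by positivity
        have hr1 : r ≤ 1 := by rw [hr, div_le_one hS]; exact hTS
        have hrS : S ^ (γ + 1) = T ^ (γ + 1) * r ^ β := by
          rw [hr, Real.div_rpow hT.le hS.le, ← mul_div_assoc, ← Real.rpow_add hT]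
          have h0 : γ + 1 + β = 0 := by rw [hβdef]; ring
          rw [h0, Real.rpow_zero, hγβ, Real.rpow_neg hS.le, one_div]
        have hrγ : 1 - r ^ β ≤ max 1 β * (1 - r) := by
          rcases le_total β 1 with h | h
          · have hle : r ^ (1:ℝ) ≤ r ^ β := Real.rpow_le_rpow_of_exponent_ge hr0 hr1 h
            rw [Real.rpow_one] at hle
            calc 1 - r ^ β ≤ 1 - r := by linarith
              _ ≤ max 1 β * (1 - r) := by nlinarith [le_max_left (1:ℝ) β]
          · have hb := one_add_mul_self_le_rpow_one_add (s := r - 1) (by linarith) (p := β) h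
            have he : (1 + (r - 1) : ℝ) = r := by ring
            rw [he] at hb
            rw [max_eq_right h]
            nlinarith
        have hTp : 0 < T ^ (γ + 1) := Real.rpow_pos_of_pos hT _
        have hmul := mul_le_mul_of_nonneg_left hrγ hTp.le
        have hone : 1 - r = (S - T) / S := by rw [hr]; field_simp
        rw [hone] at hmul
        rw [hrS]
        nlinarith [hmul]
      have e1 : (S ^ (γ + 1) - T ^ (γ + 1)) / (γ + 1)
          = (T ^ (γ + 1) - S ^ (γ + 1)) / β := by
        rw [hγβ, div_neg, ← neg_div, neg_sub]
      have e2 : max 1 β / β * ((S - T) / S * T ^ (γ + 1))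
          = (max 1 β * ((S - T) / S) * T ^ (γ + 1)) / β := by
        rw [div_mul_eq_mul_div, ← mul_assoc]
      rw [e1, e2]
      gcongr
    calc (S ^ (γ + 1) - T ^ (γ + 1)) / (γ + 1) / m ^ 2
        ≤ max 1 β / β * ((S - T) / S * T ^ (γ + 1)) / m ^ 2 := by gcongr
      _ = max 1 β / β * ((S - T) / S * (T ^ (γ + 1) / m ^ 2)) := by ring
end

section
/- Let M > 0 be fixed. Then there exist constants c, C > 0 such that for all 0 < T ≤ S < ∞ and 0 < w ≤ M, the integral J₁(T,S,w) = ∫_T^S t/(t²+w²) dt satisfies c·((S−T)/S)·(S²/(max(S,w))²)·(1 + log⁺(S/max(T,w))) ≤ J₁(T,S,w) ≤ C·((S−T)/S)·(S²/(max(S,w))²)·(1 + log⁺(S/max(T,w))), where log⁺ x = max(log x, 0). -/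
open Real

lemma J1_eval (T S w : ℝ) (hw : 0 < w) :
    (∫ t in T..S, t / (t ^ 2 + w ^ 2))
      = (Real.log (S ^ 2 + w ^ 2) - Real.log (T ^ 2 + w ^ 2)) / 2 := by
  have hpos : ∀ t : ℝ, 0 < t ^ 2 + w ^ 2 := fun t => by positivity
  have hderiv : ∀ t ∈ Set.uIcc T S,
      HasDerivAt (fun t => Real.log (t ^ 2 + w ^ 2) / 2) (t / (t ^ 2 + w ^ 2)) t := by
    intro t _
    have h1 : HasDerivAt (fun t : ℝ => t ^ 2 + w ^ 2) (2 * t) t := by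
      simpa using ((hasDerivAt_pow 2 t).add_const (w ^ 2))
    have h2 := (h1.log (hpos t).ne').div_const 2
    rw [show t / (t ^ 2 + w ^ 2) = 2 * t / (t ^ 2 + w ^ 2) / 2 by ring]
    exact h2
  have hint : IntervalIntegrable (fun t => t / (t ^ 2 + w ^ 2)) MeasureTheory.volume T S := by
    apply Continuous.intervalIntegrable
    exact continuous_id.div (by continuity) (fun t => (hpos t).ne')
  have h := intervalIntegral.integral_eq_sub_of_hasDerivAt hderiv hint
  simpa [sub_div] using h

set_option maxHeartbeats 1000000 in
theorem stmt6 (M : ℝ) (hM : 0 < M) :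
    ∃ c C : ℝ, 0 < c ∧ 0 < C ∧ ∀ T S w : ℝ, 0 < T → T ≤ S → 0 < w → w ≤ M →
      c * ((S - T) / S * (S ^ 2 / (max S w) ^ 2) * (1 + max (Real.log (S / max T w)) 0))
          ≤ (∫ t in T..S, t / (t ^ 2 + w ^ 2)) ∧
      (∫ t in T..S, t / (t ^ 2 + w ^ 2))
          ≤ C * ((S - T) / S * (S ^ 2 / (max S w) ^ 2) * (1 + max (Real.log (S / max T w)) 0)) := by
  refine ⟨1/8, 9, by norm_num, by norm_num, ?_⟩
  intro T S w hT hTS hw hwM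
  have hS : 0 < S := lt_of_lt_of_le hT hTS
  obtain ⟨A, hAdef⟩ : ∃ A : ℝ, A = max S w := ⟨_, rfl⟩
  obtain ⟨B, hBdef⟩ : ∃ B : ℝ, B = max T w := ⟨_, rfl⟩
  rw [← hAdef, ← hBdef]
  have hApos : 0 < A := hAdef ▸ lt_of_lt_of_le hS (le_max_left _ _)
  have hBpos : 0 < B := hBdef ▸ lt_of_lt_of_le hT (le_max_left _ _)
  have hBA : B ≤ A := hAdef ▸ hBdef ▸ max_le_max hTS le_rfl
  have hSA : S ≤ A := hAdef ▸ le_max_left _ _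
  have hwA : w ≤ A := hAdef ▸ le_max_right _ _
  have hTB : T ≤ B := hBdef ▸ le_max_left _ _
  have hwB : w ≤ B := hBdef ▸ le_max_right _ _
  obtain ⟨L, hLdef⟩ : ∃ L : ℝ, L = Real.log A - Real.log B := ⟨_, rfl⟩
  have hL : 0 ≤ L := hLdef ▸ sub_nonneg.mpr (Real.log_le_log hBpos hBA)
  -- the log-plus term equals L
  have hmaxlog : max (Real.log (S / B)) 0 = L := by
    rcases le_total w S with h | h
    · have hAS : A = S := by rw [hAdef]; exact max_eq_left h
      have hBS : B ≤ S := hAS ▸ hBA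
      rw [Real.log_div hS.ne' hBpos.ne', hLdef, hAS]
      exact max_eq_left (sub_nonneg.mpr (Real.log_le_log hBpos hBS))
    · have hAw : A = w := by rw [hAdef]; exact max_eq_right h
      have hBw : B = w := by rw [hBdef]; exact max_eq_right (hTS.trans h)
      rw [hLdef, hAw, hBw, sub_self]
      apply max_eq_right
      exact Real.log_nonpos (by positivity) ((div_le_one hw).mpr h)
  rw [J1_eval T S w hw, hmaxlog]
  obtain ⟨X, hXdef⟩ : ∃ X : ℝ, X = S ^ 2 + w ^ 2 := ⟨_, rfl⟩
  obtain ⟨Y, hYdef⟩ : ∃ Y : ℝ, Y = T ^ 2 + w ^ 2 := ⟨_, rfl⟩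
  rw [← hXdef, ← hYdef]
  have hXpos : 0 < X := by rw [hXdef]; positivity
  have hYpos : 0 < Y := by rw [hYdef]; positivity
  obtain ⟨G, hGdef⟩ : ∃ G : ℝ, G = Real.log X - Real.log Y := ⟨_, rfl⟩
  rw [← hGdef]
  have hYX : Y ≤ X := by rw [hXdef, hYdef]; nlinarith
  have hG0 : 0 ≤ G := hGdef ▸ sub_nonneg.mpr (Real.log_le_log hYpos hYX)
  have hXY : X - Y = S ^ 2 - T ^ 2 := by rw [hXdef, hYdef]; ring
  -- basic comparisons
  have hXA : A ^ 2 ≤ X := by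
    rw [hXdef]
    rcases max_cases S w with ⟨h1, _⟩ | ⟨h1, _⟩ <;> rw [hAdef, h1] <;> nlinarith
  have hX2A : X ≤ 2 * A ^ 2 := by rw [hXdef]; nlinarith
  have hYB : B ^ 2 ≤ Y := by
    rw [hYdef]
    rcases max_cases T w with ⟨h1, _⟩ | ⟨h1, _⟩ <;> rw [hBdef, h1] <;> nlinarith
  have hY2B : Y ≤ 2 * B ^ 2 := by rw [hYdef]; nlinarith
  have hlog2 : Real.log 2 ≤ 1 := by
    have := Real.log_le_sub_one_of_pos (show (0:ℝ) < 2 by norm_num); linarith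
  -- F1 : G ≤ log 2 + 2 L
  have hF1 : G ≤ Real.log 2 + 2 * L := by
    have h1 : Real.log X ≤ Real.log (2 * A ^ 2) := Real.log_le_log hXpos hX2A
    have h2 : Real.log (B ^ 2) ≤ Real.log Y := Real.log_le_log (by positivity) hYB
    rw [Real.log_mul (by norm_num) (by positivity), Real.log_pow] at h1
    rw [Real.log_pow] at h2
    push_cast at h1 h2
    rw [hGdef, hLdef]; linarith
  -- F2 : 2 L - log 2 ≤ G
  have hF2 : 2 * L - Real.log 2 ≤ G := by
    have h1 : Real.log (A ^ 2) ≤ Real.log X := Real.log_le_log (by positivity) hXA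
    have h2 : Real.log Y ≤ Real.log (2 * B ^ 2) := Real.log_le_log hYpos hY2B
    rw [Real.log_mul (by norm_num) (by positivity), Real.log_pow] at h2
    rw [Real.log_pow] at h1
    push_cast at h1 h2
    rw [hGdef, hLdef]; linarith
  -- F3 : G * Y ≤ X - Y
  have hF3 : G * Y ≤ X - Y := by
    have h := Real.log_le_sub_one_of_pos (show 0 < X / Y by positivity)
    rw [Real.log_div hXpos.ne' hYpos.ne', ← hGdef] at h
    have h2 := mul_le_mul_of_nonneg_right h hYpos.le
    have h3 : (X / Y - 1) * Y = X - Y := by field_simp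
    rw [h3] at h2; exact h2
  -- F4 : X - Y ≤ G * X
  have hF4 : X - Y ≤ G * X := by
    have h := Real.log_le_sub_one_of_pos (show 0 < Y / X by positivity)
    rw [Real.log_div hYpos.ne' hXpos.ne'] at h
    have h2 := mul_le_mul_of_nonneg_right h hXpos.le
    have h3 : (Y / X - 1) * X = Y - X := by field_simp
    rw [h3] at h2
    rw [hGdef]; nlinarith
  have hEeq : (S - T) / S * (S ^ 2 / A ^ 2) * (1 + L) = (S - T) * S * (1 + L) / A ^ 2 := by
    field_simp
  have hST : 0 ≤ S - T := sub_nonneg.mpr hTS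
  -- case facts for L ≥ 1
  have hcase : ∀ _ : 1 ≤ L, A = S ∧ S - T ≥ S / 2 := by
    intro hL1
    have hwS : w ≤ S := by
      by_contra hc
      push_neg at hc
      have hAw : A = w := by rw [hAdef]; exact max_eq_right hc.le
      have hBw : B = w := by rw [hBdef]; exact max_eq_right (hTS.trans hc.le)
      rw [hLdef, hAw, hBw, sub_self] at hL1
      linarith
    have hAS : A = S := by rw [hAdef]; exact max_eq_left hwS
    have h2B : 2 * B ≤ S := by
      have h1 : Real.log (2 * B) ≤ Real.log S := by
        rw [Real.log_mul (by norm_num) hBpos.ne']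
        have hlogAS : Real.log A = Real.log S := by rw [hAS]
        rw [hLdef] at hL1
        linarith
      calc 2 * B = Real.exp (Real.log (2 * B)) := (Real.exp_log (by positivity)).symm
        _ ≤ Real.exp (Real.log S) := Real.exp_le_exp.mpr h1
        _ = S := Real.exp_log hS
    constructor
    · exact hAS
    · nlinarith [hTB]
  constructor
  · -- lower bound
    rw [hEeq, show (1:ℝ)/8 * ((S - T) * S * (1 + L) / A ^ 2)
        = (S - T) * S * (1 + L) / (8 * A ^ 2) by ring,
      div_le_iff₀ (by positivity)]
    rcases le_total L 1 with hL1 | hL1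
    · -- L ≤ 1 : use F4
      have e3 : G * X ≤ G * (2 * A ^ 2) := mul_le_mul_of_nonneg_left hX2A hG0
      linarith [hF4, hXY, mul_nonneg (mul_nonneg hST hS.le) (sub_nonneg.mpr hL1),
        mul_nonneg hT.le hST]
    · -- L ≥ 1
      obtain ⟨hAS, _⟩ := hcase hL1
      have key : 1 + L ≤ 2 * G := by linarith
      have h1 : (1 + L) * A ^ 2 ≤ 2 * G * A ^ 2 :=
        mul_le_mul_of_nonneg_right key (by positivity)
      have h2 : (S - T) * S ≤ A ^ 2 := by nlinarith
      have h3 : (S - T) * S * (1 + L) ≤ A ^ 2 * (1 + L) :=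
        mul_le_mul_of_nonneg_right h2 (by linarith)
      linarith [mul_nonneg hG0 (sq_nonneg A)]
  · -- upper bound
    rw [hEeq, show (9:ℝ) * ((S - T) * S * (1 + L) / A ^ 2)
        = 9 * ((S - T) * S * (1 + L)) / A ^ 2 by ring,
      le_div_iff₀ (by positivity)]
    rcases le_total L 1 with hL1 | hL1
    · -- L ≤ 1 : A ≤ 3 B
      have hexp3 : Real.exp 1 < 3 := by linarith [Real.exp_one_lt_d9]
      have hlog3 : (1:ℝ) < Real.log 3 := by
        calc (1:ℝ) = Real.log (Real.exp 1) := by rw [Real.log_exp]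
          _ < Real.log 3 := Real.log_lt_log (Real.exp_pos 1) hexp3
      have hA3B : A ≤ 3 * B := by
        have h1 : Real.log A ≤ Real.log (3 * B) := by
          rw [Real.log_mul (by norm_num) hBpos.ne']
          rw [hLdef] at hL1
          linarith
        calc A = Real.exp (Real.log A) := (Real.exp_log hApos).symm
          _ ≤ Real.exp (Real.log (3 * B)) := Real.exp_le_exp.mpr h1
          _ = 3 * B := Real.exp_log (by positivity)
      have hA9B : A ^ 2 ≤ 9 * B ^ 2 := by nlinarith
      have e3 : G * B ^ 2 ≤ G * Y := mul_le_mul_of_nonneg_left hYB hG0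
      have e4 : G * A ^ 2 ≤ G * (9 * B ^ 2) := mul_le_mul_of_nonneg_left hA9B hG0
      have e7 : 9 * (S ^ 2 - T ^ 2) ≤ 18 * ((S - T) * S) := by
        linarith [sq_nonneg (S - T)]
      linarith [hF3, hXY, mul_nonneg (mul_nonneg hST hS.le) hL]
    · -- L ≥ 1
      obtain ⟨hAS, hhalf⟩ := hcase hL1
      have key : G ≤ 2 * (1 + L) := by linarith
      have h1 : G * A ^ 2 ≤ 2 * (1 + L) * A ^ 2 :=
        mul_le_mul_of_nonneg_right key (by positivity)
      have h2 : A ^ 2 ≤ 2 * (S - T) * S := by rw [hAS]; nlinarith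
      have h3 : 2 * (1 + L) * A ^ 2 ≤ 2 * (1 + L) * (2 * (S - T) * S) :=
        mul_le_mul_of_nonneg_left h2 (by linarith)
      linarith [mul_nonneg (mul_nonneg hST hS.le) (by linarith : (0:ℝ) ≤ 1 + L)]
end

section
/- Let M > 0 be fixed. Then there exist constants c, C > 0 such that for all 0 < T ≤ S < ∞ and 0 < w ≤ M, the integral J_{−1}(T,S,w) = ∫_T^S t^{−1}/(t²+w²) dt satisfies c·((S−T)/S)·(1/(max(T,w))²)·(1 + log⁺(min(S,w)/T)) ≤ J_{−1}(T,S,w) ≤ C·((S−T)/S)·(1/(max(T,w))²)·(1 + log⁺(min(S,w)/T)). -/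
open Real

lemma log_ge_one_sub_inv {x : ℝ} (hx : 0 < x) : 1 - 1/x ≤ Real.log x := by
  have h := Real.log_le_sub_one_of_pos (show 0 < x⁻¹ by positivity)
  rw [Real.log_inv] at h
  rw [one_div]
  linarith

lemma aux_low (u : ℝ) (hu : 1 ≤ u) :
    (1/2) * ((1 - 1/u) * (1 + Real.log u)) ≤ Real.log ((1 + u^2)/2) := by
  have hu0 : 0 < u := lt_of_lt_of_le one_pos hu
  have h1 : Real.log u ≤ Real.log ((1+u^2)/2) := by
    apply Real.log_le_log hu0
    nlinarith [sq_nonneg (u-1)]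
  have h2 : 1 - 1/u ≤ Real.log u := log_ge_one_sub_inv hu0
  have h3 : 0 ≤ Real.log u := Real.log_nonneg hu
  have h4 : 1 - 1/u ≤ 1 := by
    have : 0 ≤ 1/u := by positivity
    linarith
  have h5 : 0 ≤ 1 - 1/u := by
    have : 1/u ≤ 1 := by rw [div_le_one hu0]; exact hu
    linarith
  nlinarith [mul_le_of_le_one_left h3 h4]

lemma aux_up (u : ℝ) (hu : 1 ≤ u) :
    Real.log u ≤ 2 * ((1 - 1/u) * (1 + Real.log u)) := by
  have hu0 : 0 < u := lt_of_lt_of_le one_pos hu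
  have h3 : 0 ≤ Real.log u := Real.log_nonneg hu
  have h5 : 0 ≤ 1 - 1/u := by
    have : 1/u ≤ 1 := by rw [div_le_one hu0]; exact hu
    linarith
  rcases le_total u 2 with h | h
  · have hlog : Real.log u ≤ u - 1 := Real.log_le_sub_one_of_pos hu0
    have e : u * (1 - 1/u) = u - 1 := by field_simp
    have h6 : u * (1 - 1/u) ≤ 2 * (1 - 1/u) := mul_le_mul_of_nonneg_right h h5
    nlinarith [mul_nonneg h5 h3]
  · have h6 : 1/u ≤ 1/2 := by
      rw [div_le_div_iff₀ hu0 (by norm_num)]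
      linarith
    nlinarith [mul_le_mul_of_nonneg_right (show (1:ℝ)/2 ≤ 1 - 1/u by linarith)
      (show (0:ℝ) ≤ 1 + Real.log u by linarith)]


lemma eval_int (T S w : ℝ) (hT : 0 < T) (hTS : T ≤ S) (hw : 0 < w) :
    ∫ t in T..S, (1 / t) / (t ^ 2 + w ^ 2)
      = Real.log ((S^2*(T^2+w^2))/(T^2*(S^2+w^2))) / (2*w^2) := by
  have hS : 0 < S := lt_of_lt_of_le hT hTS
  have hderiv : ∀ x ∈ Set.uIcc T S,
      HasDerivAt (fun t => (1/(2*w^2)) * (Real.log (t^2) - Real.log (t^2+w^2)))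
        ((1/x)/(x^2+w^2)) x := by
    intro x hx
    rw [Set.uIcc_of_le hTS] at hx
    have hx0 : 0 < x := lt_of_lt_of_le hT hx.1
    have hxw : 0 < x^2 + w^2 := by positivity
    have h1 : HasDerivAt (fun t : ℝ => Real.log (t^2)) ((2*x)/(x^2)) x := by
      have := (hasDerivAt_pow 2 x).log (pow_ne_zero 2 (ne_of_gt hx0))
      convert this using 1
      norm_num
    have h2 : HasDerivAt (fun t : ℝ => Real.log (t^2 + w^2)) ((2*x)/(x^2+w^2)) x := by
      have := ((hasDerivAt_pow 2 x).add_const (w^2)).log (ne_of_gt hxw)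
      convert this using 1
      norm_num
    have h3 := (h1.sub h2).const_mul (1/(2*w^2))
    refine h3.congr_deriv ?_
    field_simp [ne_of_gt hx0, ne_of_gt hw]
    ring
  have hcont : ContinuousOn (fun t : ℝ => (1/t)/(t^2+w^2)) (Set.uIcc T S) := by
    apply ContinuousOn.div
    · apply ContinuousOn.div continuousOn_const continuousOn_id
      intro x hx
      rw [Set.uIcc_of_le hTS] at hx
      exact ne_of_gt (lt_of_lt_of_le hT hx.1)
    · exact ((continuous_pow 2).add continuous_const).continuousOn
    · intro x hx
      positivity
  have hint := intervalIntegral.integral_eq_sub_of_hasDerivAt hderiv hcont.intervalIntegrable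
  rw [hint]
  have hT2 : (0:ℝ) < T^2 := pow_pos hT 2
  have hS2 : (0:ℝ) < S^2 := pow_pos hS 2
  have hT2w : (0:ℝ) < T^2 + w^2 := by positivity
  have hS2w : (0:ℝ) < S^2 + w^2 := by positivity
  rw [Real.log_div (by positivity) (by positivity),
      Real.log_mul (ne_of_gt hS2) (ne_of_gt hT2w),
      Real.log_mul (ne_of_gt hT2) (ne_of_gt hS2w)]
  ring


set_option maxHeartbeats 1000000 in
lemma stmt7_case1 (T S w : ℝ) (hT : 0 < T) (hTS : T ≤ S) (hw : 0 < w) (hwT : w ≤ T)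
    (X : ℝ) (hX : X = Real.log ((S^2*(T^2+w^2))/(T^2*(S^2+w^2)))) :
    (1/8) * ((S - T) / S * (1 / T ^ 2) * (1 + 0)) ≤ X / (2*w^2) ∧
    X / (2*w^2) ≤ 3 * ((S - T) / S * (1 / T ^ 2) * (1 + 0)) := by
  have hS : 0 < S := lt_of_lt_of_le hT hTS
  have hN : (0:ℝ) < S^2*(T^2+w^2) := by positivity
  have hD : (0:ℝ) < T^2*(S^2+w^2) := by positivity
  have hST : 0 ≤ S - T := by linarith
  have hw2T2 : w^2 ≤ T^2 := by nlinarith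
  have hlow : w^2*(S-T)/(2*S*T^2) ≤ X := by
    have h1 : 1 - (T^2*(S^2+w^2))/(S^2*(T^2+w^2)) ≤ X := by
      rw [hX]
      have h := log_ge_one_sub_inv (show 0 < (S^2*(T^2+w^2))/(T^2*(S^2+w^2)) by positivity)
      rwa [one_div_div] at h
    have e : 1 - (T^2*(S^2+w^2))/(S^2*(T^2+w^2))
        = (S^2*(T^2+w^2) - T^2*(S^2+w^2))/(S^2*(T^2+w^2)) := by
      field_simp
    have h2 : w^2*(S-T)/(2*S*T^2) ≤ (S^2*(T^2+w^2) - T^2*(S^2+w^2))/(S^2*(T^2+w^2)) := by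
      rw [div_le_div_iff₀ (by positivity) hN]
      nlinarith [mul_nonneg (mul_nonneg (sq_nonneg w) hST) (mul_nonneg (sq_nonneg S) (sub_nonneg.2 hw2T2)),
        mul_nonneg (mul_nonneg (sq_nonneg w) hST) (mul_pos hS (pow_pos hT 3)).le]
    linarith [e ▸ h1]
  have hup : X ≤ 2*w^2*(S-T)/(S*T^2) := by
    have h1 : X ≤ (S^2*(T^2+w^2))/(T^2*(S^2+w^2)) - 1 := by
      rw [hX]; exact Real.log_le_sub_one_of_pos (by positivity)
    have e : (S^2*(T^2+w^2))/(T^2*(S^2+w^2)) - 1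
        = (S^2*(T^2+w^2) - T^2*(S^2+w^2))/(T^2*(S^2+w^2)) := by
      field_simp
    have h2 : (S^2*(T^2+w^2) - T^2*(S^2+w^2))/(T^2*(S^2+w^2)) ≤ 2*w^2*(S-T)/(S*T^2) := by
      rw [div_le_div_iff₀ hD (by positivity)]
      nlinarith [mul_nonneg (mul_nonneg (sq_nonneg w) hST) (mul_nonneg (sq_nonneg T)
        (mul_nonneg hS.le hST)),
        mul_nonneg (mul_nonneg (sq_nonneg w) hST) (mul_nonneg (sq_nonneg T) (sq_nonneg w))]
    linarith [e ▸ h1]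
  constructor
  · rw [le_div_iff₀ (by positivity : (0:ℝ) < 2*w^2)]
    calc (1/8) * ((S - T) / S * (1 / T ^ 2) * (1 + 0)) * (2*w^2)
        = w^2*(S-T)/(4*S*T^2) := by field_simp; ring
      _ ≤ w^2*(S-T)/(2*S*T^2) := by
          rw [div_le_div_iff₀ (by positivity) (by positivity)]
          nlinarith [mul_nonneg (mul_nonneg (sq_nonneg w) hST) (mul_nonneg hS.le (sq_nonneg T))]
      _ ≤ X := hlow
  · rw [div_le_iff₀ (by positivity : (0:ℝ) < 2*w^2)]
    calc X ≤ 2*w^2*(S-T)/(S*T^2) := hup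
      _ ≤ 3 * ((S - T) / S * (1 / T ^ 2) * (1 + 0)) * (2*w^2) := by
          rw [div_le_iff₀ (by positivity)]
          field_simp
          nlinarith [mul_nonneg (sq_nonneg w) hST]


set_option maxHeartbeats 1000000 in
lemma stmt7_case2 (T S w : ℝ) (hT : 0 < T) (hTS : T ≤ S) (hw : 0 < w) (hSw : S ≤ w)
    (X : ℝ) (hX : X = Real.log ((S^2*(T^2+w^2))/(T^2*(S^2+w^2)))) :
    (1/8) * ((S - T) / S * (1 / w ^ 2) * (1 + Real.log (S/T))) ≤ X / (2*w^2) ∧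
    X / (2*w^2) ≤ 3 * ((S - T) / S * (1 / w ^ 2) * (1 + Real.log (S/T))) := by
  have hS : 0 < S := lt_of_lt_of_le hT hTS
  have hN : (0:ℝ) < S^2*(T^2+w^2) := by positivity
  have hD : (0:ℝ) < T^2*(S^2+w^2) := by positivity
  have hST : 0 ≤ S - T := by linarith
  set ℓ := Real.log (S/T) with hℓ
  have hu : 1 ≤ S/T := (one_le_div hT).2 hTS
  have hℓnn : 0 ≤ ℓ := Real.log_nonneg hu
  have hβnn : 0 ≤ 1 - T/S := by
    have : T/S ≤ 1 := by rw [div_le_one hS]; exact hTS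
    linarith
  -- lower bound
  have hlow : (1/2) * ((1 - T/S) * (1 + ℓ)) ≤ X := by
    have h1 := aux_low (S/T) hu
    rw [one_div_div] at h1
    have h2 : Real.log ((1 + (S/T)^2)/2) ≤ X := by
      rw [hX]
      apply Real.log_le_log (by positivity)
      have e : (1 + (S/T)^2)/2 = (T^2+S^2)/(2*T^2) := by
        rw [div_eq_div_iff (by norm_num) (by positivity)]
        field_simp
      rw [e, div_le_div_iff₀ (by positivity) hD]
      nlinarith [mul_nonneg (sq_nonneg T) (mul_nonneg (sub_nonneg.2 (by nlinarith : T^2 ≤ S^2))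
        (sub_nonneg.2 (by nlinarith : S^2 ≤ w^2)))]
    linarith
  -- upper bound
  have hup : X ≤ 2*ℓ := by
    have h1 : X ≤ Real.log ((S/T)^2) := by
      rw [hX]
      apply Real.log_le_log (by positivity)
      have e : (S/T)^2 = S^2/T^2 := by rw [div_pow]
      rw [e, div_le_div_iff₀ hD (by positivity)]
      nlinarith [mul_nonneg (sq_nonneg S) (mul_nonneg (sq_nonneg T) (sub_nonneg.2 (by nlinarith : T^2 ≤ S^2)))]
    rw [Real.log_pow] at h1
    push_cast at h1
    linarith
  have haux := aux_up (S/T) hu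
  rw [one_div_div] at haux
  constructor
  · rw [le_div_iff₀ (by positivity : (0:ℝ) < 2*w^2)]
    have e : (1/8) * ((S - T) / S * (1 / w ^ 2) * (1 + ℓ)) * (2*w^2)
        = (1/4) * ((1 - T/S) * (1 + ℓ)) := by field_simp; ring
    rw [e]
    nlinarith [mul_nonneg hβnn (by linarith : (0:ℝ) ≤ 1 + ℓ)]
  · rw [div_le_iff₀ (by positivity : (0:ℝ) < 2*w^2)]
    have e : 3 * ((S - T) / S * (1 / w ^ 2) * (1 + ℓ)) * (2*w^2)
        = 6 * ((1 - T/S) * (1 + ℓ)) := by field_simp; ring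
    rw [e]
    nlinarith [mul_nonneg hβnn (by linarith : (0:ℝ) ≤ 1 + ℓ)]


set_option maxHeartbeats 1600000 in
lemma stmt7_case3 (T S w : ℝ) (hT : 0 < T) (hTS : T ≤ S) (hw : 0 < w) (hTw : T ≤ w) (hwS : w ≤ S)
    (X : ℝ) (hX : X = Real.log ((S^2*(T^2+w^2))/(T^2*(S^2+w^2)))) :
    (1/8) * ((S - T) / S * (1 / w ^ 2) * (1 + Real.log (w/T))) ≤ X / (2*w^2) ∧
    X / (2*w^2) ≤ 3 * ((S - T) / S * (1 / w ^ 2) * (1 + Real.log (w/T))) := by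
  have hS : 0 < S := lt_of_lt_of_le hT hTS
  have hST : 0 ≤ S - T := by linarith
  set L := Real.log (w/T) with hLdef
  have hu : 1 ≤ w/T := (one_le_div hT).2 hTw
  have hLnn : 0 ≤ L := Real.log_nonneg hu
  have hP1pos : (0:ℝ) < (T^2+w^2)/(2*T^2) := by positivity
  have hP2pos : (0:ℝ) < (2*S^2)/(S^2+w^2) := by positivity
  set P1 := Real.log ((T^2+w^2)/(2*T^2)) with hP1def
  set P2 := Real.log ((2*S^2)/(S^2+w^2)) with hP2def
  have hXsplit : X = P1 + P2 := by
    rw [hX, hP1def, hP2def, ← Real.log_mul (ne_of_gt hP1pos) (ne_of_gt hP2pos)]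
    congr 1
    rw [div_mul_div_comm, div_eq_div_iff (by positivity) (by positivity)]
    ring
  have hP1nn : 0 ≤ P1 := Real.log_nonneg (by rw [le_div_iff₀ (by positivity)]; nlinarith)
  have hP2nn : 0 ≤ P2 := Real.log_nonneg (by rw [le_div_iff₀ (by positivity)]; nlinarith)
  -- P1 bounds
  have hP1low : (1/2) * ((1 - T/w) * (1 + L)) ≤ P1 := by
    have h1 := aux_low (w/T) hu
    rw [one_div_div] at h1
    have e : (1 + (w/T)^2)/2 = (T^2+w^2)/(2*T^2) := by
      rw [div_eq_div_iff (by norm_num) (by positivity)]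
      field_simp
    rw [e] at h1
    exact h1
  have hP1up : P1 ≤ 2*L := by
    have h1 : P1 ≤ Real.log ((w/T)^2) := by
      apply Real.log_le_log hP1pos
      rw [div_pow, div_le_div_iff₀ (by positivity) (by positivity)]
      nlinarith [mul_le_mul_of_nonneg_right (show T^2 ≤ w^2 by nlinarith) (sq_nonneg T)]
    rw [Real.log_pow] at h1
    push_cast at h1
    linarith
  -- P2 bounds
  have hP2low : (S-w)/S ≤ 2*P2 := by
    have h1 := log_ge_one_sub_inv hP2pos
    rw [one_div_div] at h1
    have h2 : (S-w)/S ≤ 2*(1 - (S^2+w^2)/(2*S^2)) := by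
      have e : 2*(1 - (S^2+w^2)/(2*S^2)) = (S^2-w^2)/S^2 := by
        rw [eq_div_iff (by positivity : S^2 ≠ 0)]
        field_simp
        ring
      rw [e, div_le_div_iff₀ hS (by positivity)]
      nlinarith [mul_nonneg (sub_nonneg.2 hwS) (mul_nonneg hS.le hw.le)]
    linarith
  have hP2up : P2 ≤ 2*((S-w)/S) := by
    have h1 : P2 ≤ (2*S^2)/(S^2+w^2) - 1 := Real.log_le_sub_one_of_pos hP2pos
    have e : (2*S^2)/(S^2+w^2) - 1 = (S^2-w^2)/(S^2+w^2) := by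
      rw [sub_eq_iff_eq_add, div_add' _ _ _ (by positivity : S^2+w^2 ≠ 0)]
      rw [div_eq_div_iff (by positivity) (by positivity)]
      ring
    have h2 : (S^2-w^2)/(S^2+w^2) ≤ (2*(S-w))/S := by
      rw [div_le_div_iff₀ (by positivity) hS]
      nlinarith [mul_nonneg (sub_nonneg.2 hwS) (mul_nonneg hS.le (sub_nonneg.2 hwS)),
        mul_nonneg (sub_nonneg.2 hwS) (sq_nonneg w)]
    have e2 : (2*(S-w))/S = 2*((S-w)/S) := by ring
    linarith [e ▸ h1, e2 ▸ h2]
  -- comparison of fractions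
  have hbeta : 0 ≤ (S-T)/S := div_nonneg hST hS.le
  have hfr0 : 0 ≤ 1 - T/w := by
    have : T/w ≤ 1 := by rw [div_le_one hw]; exact hTw
    linarith
  have hfr1 : 1 - T/w ≤ (S-T)/S := by
    have e : 1 - T/w = (w-T)/w := by
      rw [eq_div_iff (ne_of_gt hw)]
      field_simp
    rw [e, div_le_div_iff₀ hw hS]
    nlinarith [mul_le_mul_of_nonneg_left hwS hT.le]
  have hfr2 : (S-w)/S ≤ (S-T)/S := by
    rw [div_le_div_iff₀ hS hS]
    nlinarith
  have hbeta1 : (S-T)/S ≤ 1 := by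
    rw [div_le_one hS]; linarith
  have haux := aux_up (w/T) hu
  rw [one_div_div, ← hLdef] at haux
  clear_value L P1 P2
  constructor
  · -- lower bound
    rw [le_div_iff₀ (by positivity : (0:ℝ) < 2*w^2)]
    have e : (1/8) * ((S - T) / S * (1 / w ^ 2) * (1 + L)) * (2*w^2)
        = (1/4) * ((S-T)/S * (1 + L)) := by field_simp; ring
    rw [e, hXsplit]
    rcases le_total w (2*T) with hc | hc
    · -- w ≤ 2T : L ≤ 1, 1+L ≤ 2
      have hL1 : L ≤ 1 := by
        have ha : Real.log (w/T) ≤ w/T - 1 := Real.log_le_sub_one_of_pos (by positivity)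
        have hb : w/T ≤ 2 := by rw [div_le_iff₀ hT]; linarith
        rw [hLdef]
        linarith
      have hsplit : (S-T)/S = (S-w)/S + (w-T)/S := by
        rw [← add_div]; ring_nf
      have h2 : (w-T)/S ≤ (w-T)/w := by
        rcases eq_or_lt_of_le hTw with h | h
        · rw [← h]; simp
        · rw [div_le_div_iff₀ hS hw]
          nlinarith [mul_le_mul_of_nonneg_left hwS (le_of_lt (sub_pos.2 h))]
      have e2 : (w-T)/w = 1 - T/w := by field_simp
      have hprod : (1 - T/w) * 1 ≤ (1 - T/w) * (1 + L) :=
        mul_le_mul_of_nonneg_left (by linarith) hfr0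
      have hprod2 : (S-T)/S * (1+L) ≤ (S-T)/S * 2 :=
        mul_le_mul_of_nonneg_left (by linarith) hbeta
      linarith [hP1low, hP2low, hsplit, h2, e2, hprod, hprod2]
    · -- 2T ≤ w : 1 - T/w ≥ 1/2
      have hhalf : (1:ℝ)/2 ≤ 1 - T/w := by
        have : T/w ≤ 1/2 := by
          rw [div_le_div_iff₀ hw (by norm_num)]
          linarith
        linarith
      have hprod : (1/2) * ((1/2) * (1+L)) ≤ (1/2) * ((1 - T/w) * (1+L)) := by
        have := mul_le_mul_of_nonneg_right hhalf (show (0:ℝ) ≤ 1 + L by linarith)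
        linarith
      have hprod2 : (S-T)/S * (1+L) ≤ 1 * (1+L) :=
        mul_le_mul_of_nonneg_right hbeta1 (by linarith)
      linarith [hP1low, hP2nn, hprod, hprod2]
  · -- upper bound
    rw [div_le_iff₀ (by positivity : (0:ℝ) < 2*w^2)]
    have e : 3 * ((S - T) / S * (1 / w ^ 2) * (1 + L)) * (2*w^2)
        = 6 * ((S-T)/S * (1 + L)) := by field_simp; ring
    rw [e, hXsplit]
    have hA : (1 - T/w) * (1+L) ≤ (S-T)/S * (1+L) :=
      mul_le_mul_of_nonneg_right hfr1 (by linarith)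
    have hB : (S-w)/S ≤ (S-T)/S * (1+L) := by
      have h1 : (S-T)/S ≤ (S-T)/S * (1+L) :=
        le_mul_of_one_le_right hbeta (by linarith)
      linarith
    have u1 : P1 ≤ 4*((S-T)/S*(1+L)) := by linarith only [haux, hA, hP1up]
    have u2 : P2 ≤ 2*((S-T)/S*(1+L)) := by linarith [hP2up, hB]
    linarith [u1, u2]


theorem stmt7 (M : ℝ) (hM : 0 < M) :
    ∃ c C : ℝ, 0 < c ∧ 0 < C ∧ ∀ T S w : ℝ, 0 < T → T ≤ S → 0 < w → w ≤ M →
      c * ((S - T) / S * (1 / (max T w) ^ 2) * (1 + max (Real.log (min S w / T)) 0))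
          ≤ (∫ t in T..S, (1 / t) / (t ^ 2 + w ^ 2)) ∧
      (∫ t in T..S, (1 / t) / (t ^ 2 + w ^ 2))
          ≤ C * ((S - T) / S * (1 / (max T w) ^ 2) * (1 + max (Real.log (min S w / T)) 0)) := by
  refine ⟨1/8, 3, by norm_num, by norm_num, ?_⟩
  intro T S w hT hTS hw hwM
  have hS : 0 < S := lt_of_lt_of_le hT hTS
  rw [eval_int T S w hT hTS hw]
  rcases le_or_gt w T with hwT | hwT
  · rw [max_eq_left hwT, min_eq_right (hwT.trans hTS),
      max_eq_right (Real.log_nonpos (by positivity) ((div_le_one hT).2 hwT))]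
    exact stmt7_case1 T S w hT hTS hw hwT _ rfl
  · rcases le_or_gt S w with hSw | hSw
    · rw [max_eq_right hwT.le, min_eq_left hSw,
        max_eq_left (Real.log_nonneg ((one_le_div hT).2 hTS))]
      exact stmt7_case2 T S w hT hTS hw hSw _ rfl
    · rw [max_eq_right hwT.le, min_eq_right hSw.le,
        max_eq_left (Real.log_nonneg ((one_le_div hT).2 hwT.le))]
      exact stmt7_case3 T S w hT hTS hw hwT.le hSw.le _ rfl
end

section
/- Let 0 < w ≤ 1 and 0 < T < w, and let γ > 1. Then the quantity (1/w²)·∫_T^w t^γ dt + ∫_w^1 t^{γ−2} dt is comparable (with constants depending only on γ) to 1−T, uniformly in 0 < T < w ≤ 1. -/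
open Real

/-- Bernoulli upper bound: for `0 ≤ w ≤ 1` and `1 ≤ β`, `1 - w ^ β ≤ β * (1 - w)`. -/
lemma bern_up {w β : ℝ} (hw0 : 0 ≤ w) (hβ : 1 ≤ β) :
    1 - w ^ β ≤ β * (1 - w) := by
  have h := one_add_mul_self_le_rpow_one_add (s := w - 1) (by linarith) hβ
  rw [show (1 : ℝ) + (w - 1) = w by ring] at h
  nlinarith

/-- Bernoulli lower bound: for `0 ≤ w ≤ 1` and `0 < β`,
`min 1 β * (1 - w) ≤ 1 - w ^ β`. -/
lemma bern_low {w β : ℝ} (hw0 : 0 ≤ w) (hw1 : w ≤ 1) (hβ0 : 0 < β) :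
    min 1 β * (1 - w) ≤ 1 - w ^ β := by
  rcases le_total β 1 with h | h
  · have hb := rpow_one_add_le_one_add_mul_self (s := w - 1) (by linarith) hβ0.le h
    rw [show (1 : ℝ) + (w - 1) = w by ring] at hb
    rw [min_eq_right h]
    nlinarith
  · rw [min_eq_left h, one_mul]
    have hwb : w ^ β ≤ w := by
      rcases eq_or_lt_of_le hw0 with rfl | hw0'
      · rw [Real.zero_rpow (by linarith : β ≠ 0)]
      · calc w ^ β ≤ w ^ (1 : ℝ) := Real.rpow_le_rpow_of_exponent_ge hw0' hw1 h
          _ = w := Real.rpow_one w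
    linarith

set_option maxHeartbeats 1000000 in
theorem stmt8 (γ : ℝ) (hγ : 1 < γ) :
    ∃ c C : ℝ, 0 < c ∧ 0 < C ∧ ∀ T w : ℝ, 0 < T → T < w → w ≤ 1 →
      c * (1 - T) ≤ (1 / w ^ 2) * (∫ t in T..w, t ^ γ) + (∫ t in w..(1 : ℝ), t ^ (γ - 2)) ∧
      (1 / w ^ 2) * (∫ t in T..w, t ^ γ) + (∫ t in w..(1 : ℝ), t ^ (γ - 2)) ≤ C * (1 - T) := by
  have hγ1 : (0 : ℝ) < γ - 1 := by linarith
  have hγp : (0 : ℝ) < γ + 1 := by linarith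
  set k₁ : ℝ := (2 : ℝ) ^ (-γ) / (γ + 1) with hk₁
  set k₂ : ℝ := min 1 (γ - 1) / (γ - 1) with hk₂
  have hk₁0 : 0 < k₁ := div_pos (Real.rpow_pos_of_pos (by norm_num) _) hγp
  have hk₂0 : 0 < k₂ := div_pos (lt_min one_pos hγ1) hγ1
  have hM0 : (0 : ℝ) ≤ max 1 (γ - 1) / (γ - 1) :=
    div_nonneg (le_trans zero_le_one (le_max_left _ _)) hγ1.le
  refine ⟨min k₁ k₂ / 2, 1 + max 1 (γ - 1) / (γ - 1), by positivity, by linarith, ?_⟩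
  intro T w hT hTw hw1
  have hw0 : 0 < w := hT.trans hTw
  have hT1 : T < 1 := hTw.trans_le hw1
  -- compute the integrals
  have hI1 : (∫ t in T..w, t ^ γ) = (w ^ (γ + 1) - T ^ (γ + 1)) / (γ + 1) :=
    integral_rpow (Or.inl (by linarith))
  have hI2 : (∫ t in w..(1 : ℝ), t ^ (γ - 2)) = (1 - w ^ (γ - 1)) / (γ - 1) := by
    rw [integral_rpow (Or.inl (by linarith : (-1 : ℝ) < γ - 2)),
      show γ - 2 + 1 = γ - 1 by ring, Real.one_rpow]
  rw [hI1, hI2]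
  -- basic rpow facts
  have hwγ1 : w ^ (γ - 1) ≤ 1 := Real.rpow_le_one hw0.le hw1 (by linarith)
  have hwγ1' : 0 ≤ w ^ (γ - 1) := Real.rpow_nonneg hw0.le _
  have hTle : T ^ (γ + 1) ≤ w ^ (γ + 1) :=
    Real.rpow_le_rpow hT.le hTw.le (by linarith)
  have hTγ : T ^ γ ≤ w ^ γ := Real.rpow_le_rpow hT.le hTw.le (by linarith)
  have hTγ0 : 0 ≤ T ^ γ := Real.rpow_nonneg hT.le _
  have hwγ0 : 0 ≤ w ^ γ := Real.rpow_nonneg hw0.le _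
  have hws : w ^ (γ + 1) = w ^ (γ - 1) * w ^ 2 := by
    rw [show γ + 1 = (γ - 1) + ((2 : ℕ) : ℝ) by push_cast; ring,
      Real.rpow_add hw0, Real.rpow_natCast]
  have hwsγ : w ^ (γ + 1) = w ^ γ * w := by
    rw [show γ + 1 = γ + (1 : ℝ) by ring, Real.rpow_add hw0, Real.rpow_one]
  have hTsγ : T ^ (γ + 1) = T ^ γ * T := by
    rw [show γ + 1 = γ + (1 : ℝ) by ring, Real.rpow_add hT, Real.rpow_one]
  have hw2 : (0 : ℝ) < w ^ 2 := by positivity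
  have hw2le : w ^ 2 ≤ 1 := by nlinarith
  -- x = T / w
  set x : ℝ := T / w with hx
  have hx0 : 0 < x := div_pos hT hw0
  have hx1 : x ≤ 1 := (div_le_one hw0).mpr hTw.le
  have hTx : T = w * x := by rw [hx, mul_comm, div_mul_cancel₀ T hw0.ne']
  have hTxe : T ^ (γ + 1) = w ^ (γ + 1) * x ^ (γ + 1) := by
    rw [hTx, Real.mul_rpow hw0.le hx0.le]
  have hTlex : T ≤ x := by
    rw [hx, le_div_iff₀ hw0]; nlinarith
  -- upper bound for the first integral numerator
  have hup1 : w ^ (γ + 1) - T ^ (γ + 1) ≤ (γ + 1) * (w ^ 2 * (1 - T)) := by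
    have hb : 1 - x ^ (γ + 1) ≤ (γ + 1) * (1 - x) := bern_up hx0.le (by linarith)
    have h1 : w ^ (γ + 1) - T ^ (γ + 1) = w ^ (γ - 1) * w ^ 2 * (1 - x ^ (γ + 1)) := by
      rw [hTxe, hws]; ring
    have h2 : (0 : ℝ) ≤ (γ + 1) * (1 - x) := by nlinarith
    calc w ^ (γ + 1) - T ^ (γ + 1)
        = w ^ (γ - 1) * w ^ 2 * (1 - x ^ (γ + 1)) := h1
      _ ≤ w ^ (γ - 1) * w ^ 2 * ((γ + 1) * (1 - x)) :=
          mul_le_mul_of_nonneg_left hb (mul_nonneg hwγ1' hw2.le)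
      _ ≤ w ^ 2 * ((γ + 1) * (1 - x)) := by
          nlinarith [mul_le_mul_of_nonneg_right hwγ1 (mul_nonneg hw2.le h2)]
      _ ≤ w ^ 2 * ((γ + 1) * (1 - T)) := by
          have hxt : (1 : ℝ) - x ≤ 1 - T := by linarith
          nlinarith [mul_le_mul_of_nonneg_left hxt (mul_nonneg hw2.le hγp.le)]
      _ = (γ + 1) * (w ^ 2 * (1 - T)) := by ring
  -- lower bound for the first integral numerator
  have hlow1 : w ^ γ * (w - T) ≤ w ^ (γ + 1) - T ^ (γ + 1) := by
    rw [hwsγ, hTsγ]; nlinarith [mul_le_mul_of_nonneg_right hTγ hT.le]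
  have hnum0 : 0 ≤ w ^ (γ + 1) - T ^ (γ + 1) := by linarith
  -- bounds for the second term
  have hsec_low : k₂ * (1 - w) ≤ (1 - w ^ (γ - 1)) / (γ - 1) := by
    rw [hk₂, div_mul_eq_mul_div, div_le_div_iff_of_pos_right hγ1]
    exact bern_low hw0.le hw1 hγ1
  have hsec_up : (1 - w ^ (γ - 1)) / (γ - 1) ≤ max 1 (γ - 1) / (γ - 1) * (1 - T) := by
    have h1 : 1 - w ^ (γ - 1) ≤ max 1 (γ - 1) * (1 - w) := by
      rcases le_total (γ - 1) 1 with h | h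
      · rw [max_eq_left h]
        have : w ^ (γ - 1) ≥ w := by
          calc w = w ^ (1 : ℝ) := (Real.rpow_one w).symm
            _ ≤ w ^ (γ - 1) := Real.rpow_le_rpow_of_exponent_ge hw0 hw1 h
        linarith
      · rw [max_eq_right h]; exact bern_up hw0.le h
    have h2 : max 1 (γ - 1) * (1 - w) ≤ max 1 (γ - 1) * (1 - T) :=
      mul_le_mul_of_nonneg_left (by linarith : (1:ℝ) - w ≤ 1 - T)
        (le_trans zero_le_one (le_max_left _ _))
    rw [div_mul_eq_mul_div, div_le_div_iff_of_pos_right hγ1]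
    linarith
  -- first term upper bound
  have hfirst_up : (1 / w ^ 2) * ((w ^ (γ + 1) - T ^ (γ + 1)) / (γ + 1)) ≤ 1 - T := by
    rw [one_div, inv_mul_le_iff₀ hw2]
    rw [div_le_iff₀ hγp] at *
    nlinarith
  have hfirst_nonneg : 0 ≤ (1 / w ^ 2) * ((w ^ (γ + 1) - T ^ (γ + 1)) / (γ + 1)) := by
    positivity
  constructor
  · -- lower bound
    rcases le_total w (1 / 2) with hwhalf | hwhalf
    · -- small w : second term alone suffices
      have h1 : k₂ * (1 - w) ≥ k₂ / 2 := by nlinarith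
      have h2 : min k₁ k₂ / 2 * (1 - T) ≤ k₂ / 2 := by
        have h3 : min k₁ k₂ ≤ k₂ := min_le_right _ _
        nlinarith
      linarith [hsec_low, hfirst_nonneg]
    · -- w ≥ 1/2
      have hwg : (2 : ℝ) ^ (-γ) ≤ w ^ γ := by
        calc (2 : ℝ) ^ (-γ) = (1 / 2 : ℝ) ^ γ := by
              rw [Real.rpow_neg (by norm_num : (0:ℝ) ≤ 2), one_div,
                ← Real.inv_rpow (by norm_num : (0:ℝ) ≤ 2)]
          _ ≤ w ^ γ := Real.rpow_le_rpow (by norm_num) hwhalf (by linarith)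
      have hfirst_low : k₁ * (w - T) ≤
          (1 / w ^ 2) * ((w ^ (γ + 1) - T ^ (γ + 1)) / (γ + 1)) := by
        have hA : (2 : ℝ) ^ (-γ) * (w - T) ≤ w ^ (γ + 1) - T ^ (γ + 1) := by
          nlinarith [Real.rpow_pos_of_pos (by norm_num : (0:ℝ) < 2) (-γ)]
        have hB : k₁ * (w - T) ≤ (w ^ (γ + 1) - T ^ (γ + 1)) / (γ + 1) := by
          rw [hk₁, div_mul_eq_mul_div, div_le_div_iff_of_pos_right hγp]
          exact hA
        have hC : (w ^ (γ + 1) - T ^ (γ + 1)) / (γ + 1) ≤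
            (1 / w ^ 2) * ((w ^ (γ + 1) - T ^ (γ + 1)) / (γ + 1)) := by
          have hone : (1 : ℝ) ≤ 1 / w ^ 2 := by
            rw [le_div_iff₀ hw2]; linarith
          nlinarith [div_nonneg hnum0 hγp.le]
        linarith
      have hm1 : min k₁ k₂ ≤ k₁ := min_le_left _ _
      have hm2 : min k₁ k₂ ≤ k₂ := min_le_right _ _
      have hm0 : 0 < min k₁ k₂ := lt_min hk₁0 hk₂0
      nlinarith [hfirst_low, hsec_low]
  · -- upper bound
    have h0 : (0:ℝ) ≤ max 1 (γ - 1) / (γ - 1) * (1 - T) := mul_nonneg hM0 (by linarith)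
    nlinarith [hfirst_up, hsec_up]
end

section
/- Let 0 < w ≤ 1 and 0 < T < w. Then the quantity (1/w²)·log(w/T) + (1/w²)·(1−w) is comparable (with absolute constants) to (1−T)·(1/w²)·(1 + log(w/T)), uniformly in 0 < T < w ≤ 1. -/
open Real

theorem stmt9 :
    ∃ c C : ℝ, 0 < c ∧ 0 < C ∧ ∀ T w : ℝ, 0 < T → T < w → w ≤ 1 →
      c * ((1 - T) * (1 / w ^ 2) * (1 + Real.log (w / T)))
          ≤ (1 / w ^ 2) * Real.log (w / T) + (1 / w ^ 2) * (1 - w) ∧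
      (1 / w ^ 2) * Real.log (w / T) + (1 / w ^ 2) * (1 - w)
          ≤ C * ((1 - T) * (1 / w ^ 2) * (1 + Real.log (w / T))) := by
  refine ⟨1/2, 3, by norm_num, by norm_num, fun T w hT hTw hw1 => ?_⟩
  have hw : 0 < w := hT.trans hTw
  set L := Real.log (w / T) with hLdef
  have hL0 : 0 ≤ L := Real.log_nonneg (by rw [le_div_iff₀ hT]; linarith)
  have h1 : L ≤ w / T - 1 := Real.log_le_sub_one_of_pos (by positivity)
  have h1' : (L + 1) * T ≤ w := by rw [← le_div_iff₀ hT]; linarith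
  have h2 : Real.log (T / w) ≤ T / w - 1 := Real.log_le_sub_one_of_pos (by positivity)
  have h3 : Real.log (T / w) = -L := by
    rw [hLdef, ← Real.log_inv]; congr 1; field_simp
  have h4 : (w - T) / w ≤ L := by
    have : 1 - T / w ≤ L := by rw [h3] at h2; linarith
    have e : (w - T) / w = 1 - T / w := by field_simp
    linarith [e.le]
  have h4' : w - T ≤ L * w := by rw [div_le_iff₀ hw] at h4; linarith
  have h5 : w - T ≤ L := by nlinarith [mul_le_mul_of_nonneg_left hw1 hL0]
  have hT1 : T < 1 := hTw.trans_le hw1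
  -- L ≤ 2 (1-T)(1+L)
  have h6 : L ≤ 2 * ((1 - T) * (1 + L)) := by
    rcases le_or_gt T (1/2) with hc | hc
    · nlinarith
    · nlinarith [h1', hL0]
  have hinv : (0:ℝ) < 1 / w ^ 2 := by positivity
  have key1 : (1/2 : ℝ) * ((1 - T) * (1 + L)) ≤ L + (1 - w) := by
    nlinarith [mul_nonneg hL0 hT.le]
  have key2 : L + (1 - w) ≤ 3 * ((1 - T) * (1 + L)) := by
    nlinarith [h6, hL0, hT1]
  constructor
  · calc (1/2 : ℝ) * ((1 - T) * (1 / w ^ 2) * (1 + L))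
        = (1 / w ^ 2) * ((1/2 : ℝ) * ((1 - T) * (1 + L))) := by ring
      _ ≤ (1 / w ^ 2) * (L + (1 - w)) := mul_le_mul_of_nonneg_left key1 hinv.le
      _ = (1 / w ^ 2) * L + (1 / w ^ 2) * (1 - w) := by ring
  · calc (1 / w ^ 2) * L + (1 / w ^ 2) * (1 - w)
        = (1 / w ^ 2) * (L + (1 - w)) := by ring
      _ ≤ (1 / w ^ 2) * (3 * ((1 - T) * (1 + L))) := mul_le_mul_of_nonneg_left key2 hinv.le
      _ = 3 * ((1 - T) * (1 / w ^ 2) * (1 + L)) := by ring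
end

section
/- Let γ < −1 be fixed. Then the quantity ((w−T)/w)·(T^{γ+1}/w²) + (w^{γ+1}/w²)·(1−w) is comparable, with constants depending only on γ, to (1−T)·T^{γ+1}/w², uniformly in 0 < T < w ≤ 1. -/
open Real

theorem stmt10 (γ : ℝ) (hγ : γ < -1) :
    ∃ c C : ℝ, 0 < c ∧ 0 < C ∧ ∀ T w : ℝ, 0 < T → T < w → w ≤ 1 →
      c * ((1 - T) * T ^ (γ + 1) / w ^ 2)
          ≤ (w - T) / w * (T ^ (γ + 1) / w ^ 2) + w ^ (γ + 1) / w ^ 2 * (1 - w) ∧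
      (w - T) / w * (T ^ (γ + 1) / w ^ 2) + w ^ (γ + 1) / w ^ 2 * (1 - w)
          ≤ C * ((1 - T) * T ^ (γ + 1) / w ^ 2) := by
  have h2pos : (0:ℝ) < 2 ^ (γ + 1) := Real.rpow_pos_of_pos (by norm_num) _
  refine ⟨2 ^ (γ + 1) / 2, 2, by positivity, by norm_num, ?_⟩
  intro T w hT hTw hw1
  have hw : 0 < w := hT.trans hTw
  have hT1 : T < 1 := hTw.trans_le hw1
  have hTp : 0 < T ^ (γ + 1) := Real.rpow_pos_of_pos hT _
  have hwp : 0 < w ^ (γ + 1) := Real.rpow_pos_of_pos hw _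
  have hle : w ^ (γ + 1) ≤ T ^ (γ + 1) :=
    Real.rpow_le_rpow_of_nonpos hT hTw.le (by linarith)
  have h2le1 : (2:ℝ) ^ (γ + 1) ≤ 1 :=
    Real.rpow_le_one_of_one_le_of_nonpos (by norm_num) (by linarith)
  have hw2 : (0:ℝ) < w ^ 2 := by positivity
  have hr1 : w - T ≤ (w - T) / w := by
    rw [le_div_iff₀ hw]; nlinarith
  have hr2 : (w - T) / w ≤ 1 - T := by
    rw [div_le_iff₀ hw]; nlinarith
  have hrw : (w - T) / w * (T ^ (γ + 1) / w ^ 2) + w ^ (γ + 1) / w ^ 2 * (1 - w)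
      = ((w - T) / w * T ^ (γ + 1) + w ^ (γ + 1) * (1 - w)) / w ^ 2 := by ring
  constructor
  · rw [hrw]
    have hlhs : 2 ^ (γ + 1) / 2 * ((1 - T) * T ^ (γ + 1) / w ^ 2)
        = (2 ^ (γ + 1) / 2 * ((1 - T) * T ^ (γ + 1))) / w ^ 2 := by ring
    rw [hlhs, div_le_div_iff₀ hw2 hw2]
    have key : 2 ^ (γ + 1) / 2 * ((1 - T) * T ^ (γ + 1))
        ≤ (w - T) / w * T ^ (γ + 1) + w ^ (γ + 1) * (1 - w) := by
      rcases le_or_gt T (w / 2) with h | h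
      · -- w - T ≥ w/2, so (w-T)/w ≥ 1/2
        have h1 : (1:ℝ) / 2 ≤ (w - T) / w := by
          rw [le_div_iff₀ hw]; nlinarith
        nlinarith [mul_le_mul_of_nonneg_right h1 hTp.le,
          mul_nonneg hwp.le (by linarith : (0:ℝ) ≤ 1 - w),
          mul_le_mul_of_nonneg_right h2le1 (mul_nonneg (by linarith : (0:ℝ) ≤ 1 - T) hTp.le)]
      · -- T > w/2 so T^(γ+1) ≤ (w/2)^(γ+1) = w^(γ+1)/2^(γ+1)
        have hab : 2 ^ (γ + 1) * T ^ (γ + 1) ≤ w ^ (γ + 1) := by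
          have h3 : T ^ (γ + 1) ≤ (w / 2) ^ (γ + 1) :=
            Real.rpow_le_rpow_of_nonpos (by linarith) h.le (by linarith)
          have h4 : (w / 2) ^ (γ + 1) = w ^ (γ + 1) / 2 ^ (γ + 1) :=
            Real.div_rpow hw.le (by norm_num : (0:ℝ) ≤ 2) (γ + 1)
          rw [h4] at h3
          rw [mul_comm]
          exact (le_div_iff₀ h2pos).mp h3
        nlinarith [mul_le_mul_of_nonneg_right hr1 hTp.le,
          mul_le_mul_of_nonneg_left (mul_le_mul_of_nonneg_right h2le1 hTp.le)
            (by linarith : (0:ℝ) ≤ w - T),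
          mul_le_mul_of_nonneg_right hab (by linarith : (0:ℝ) ≤ 1 - w)]
    nlinarith [key]
  · rw [hrw]
    have hlhs : 2 * ((1 - T) * T ^ (γ + 1) / w ^ 2)
        = (2 * ((1 - T) * T ^ (γ + 1))) / w ^ 2 := by ring
    rw [hlhs, div_le_div_iff₀ hw2 hw2]
    have key : (w - T) / w * T ^ (γ + 1) + w ^ (γ + 1) * (1 - w)
        ≤ 2 * ((1 - T) * T ^ (γ + 1)) := by
      nlinarith [mul_le_mul_of_nonneg_right hr2 hTp.le,
        mul_le_mul_of_nonneg_right hle (by linarith : (0:ℝ) ≤ 1 - w)]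
    nlinarith [key]
end

section
/- Let α > −1. For small ε > 0, let f_ε = χ_{(0,ε)}. Then ‖f_ε‖_{L¹(dμ_{α,β})} ≍ ε^{2α+2} and ∫₀^ε log(2π/φ) dμ_{α,β}(φ) ≍ ε^{2α+2} log(2π/ε) as ε → 0⁺. Consequently the operator f ↦ ∫₀^π log(2π/(θ+φ)) f(φ) dμ_{α,β}(φ) is not bounded from L¹(dμ_{α,β}) to L^∞(0,π). -/
open Real MeasureTheory Set
open scoped ENNReal

noncomputable def jacobiMeasure (α β : ℝ) : Measure ℝ :=
  (volume.restrict (Set.Ioo 0 π)).withDensity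
    (fun φ => ENNReal.ofReal ((Real.sin (φ / 2)) ^ (2 * α + 1) * (Real.cos (φ / 2)) ^ (2 * β + 1)))

noncomputable def wdens (α β : ℝ) (φ : ℝ) : ℝ :=
  (Real.sin (φ / 2)) ^ (2 * α + 1) * (Real.cos (φ / 2)) ^ (2 * β + 1)

lemma aux_rpow {a b x p : ℝ} (ha : 0 < a) (h1 : a ≤ x) (h2 : x ≤ b) :
    min (a ^ p) (b ^ p) ≤ x ^ p ∧ x ^ p ≤ max (a ^ p) (b ^ p) := by
  rcases le_or_gt 0 p with hp | hp
  · exact ⟨le_trans (min_le_left _ _) (Real.rpow_le_rpow ha.le h1 hp),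
      le_trans (Real.rpow_le_rpow (ha.trans_le h1).le h2 hp) (le_max_right _ _)⟩
  · exact ⟨le_trans (min_le_right _ _) (Real.rpow_le_rpow_of_nonpos (ha.trans_le h1) h2 hp.le),
      le_trans (Real.rpow_le_rpow_of_nonpos ha h1 hp.le) (le_max_left _ _)⟩

lemma wdens_meas (α β : ℝ) : Measurable (wdens α β) := by
  apply Measurable.mul
  · exact (Real.measurable_sin.comp (measurable_id.div_const 2)).pow measurable_const
  · exact (Real.measurable_cos.comp (measurable_id.div_const 2)).pow measurable_const

lemma wdens_pos (α β : ℝ) (φ : ℝ) (hφ : φ ∈ Ioo (0:ℝ) π) : 0 < wdens α β φ := by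
  have h1 : 0 < Real.sin (φ / 2) :=
    Real.sin_pos_of_pos_of_lt_pi (by linarith [hφ.1]) (by linarith [hφ.2, Real.pi_pos])
  have h2 : 0 < Real.cos (φ / 2) :=
    Real.cos_pos_of_mem_Ioo ⟨by linarith [hφ.1, Real.pi_pos], by linarith [hφ.2]⟩
  exact mul_pos (Real.rpow_pos_of_pos h1 _) (Real.rpow_pos_of_pos h2 _)

lemma density_bounds (α β : ℝ) :
    ∃ c₁ C₁ : ℝ, 0 < c₁ ∧ 0 < C₁ ∧ ∀ φ ∈ Ioo (0:ℝ) 1,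
      c₁ * φ ^ (2*α+1) ≤ wdens α β φ ∧ wdens α β φ ≤ C₁ * φ ^ (2*α+1) := by
  set p := 2*α+1
  set q := 2*β+1
  have hπ := Real.pi_pos
  refine ⟨min (π⁻¹ ^ p) ((2:ℝ)⁻¹ ^ p) * min (Real.cos 2⁻¹ ^ q) 1,
    max (π⁻¹ ^ p) ((2:ℝ)⁻¹ ^ p) * max (Real.cos 2⁻¹ ^ q) 1, ?_, ?_, ?_⟩
  · have hc : 0 < Real.cos (2⁻¹:ℝ) :=
      Real.cos_pos_of_mem_Ioo ⟨by norm_num; linarith, by norm_num; linarith [Real.pi_gt_three]⟩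
    exact mul_pos (lt_min (Real.rpow_pos_of_pos (by positivity) _) (Real.rpow_pos_of_pos (by norm_num) _))
      (lt_min (Real.rpow_pos_of_pos hc _) one_pos)
  · have hc : 0 < Real.cos (2⁻¹:ℝ) :=
      Real.cos_pos_of_mem_Ioo ⟨by norm_num; linarith, by norm_num; linarith [Real.pi_gt_three]⟩
    exact mul_pos (lt_of_lt_of_le (Real.rpow_pos_of_pos (by positivity) p) (le_max_left _ _))
      (lt_of_lt_of_le one_pos (le_max_right _ _))
  · intro φ hφ
    obtain ⟨hφ0, hφ1⟩ := hφ
    have hs_lb : π⁻¹ * φ ≤ Real.sin (φ / 2) := by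
      have := Real.mul_le_sin (x := φ/2) (by linarith) (by
        have : (1:ℝ) < π := by linarith [Real.pi_gt_three]
        nlinarith)
      calc π⁻¹ * φ = 2 / π * (φ/2) := by field_simp
        _ ≤ _ := this
    have hs_ub : Real.sin (φ / 2) ≤ (2:ℝ)⁻¹ * φ := by
      have := Real.sin_le (by linarith : (0:ℝ) ≤ φ/2)
      linarith
    have hsin := aux_rpow (a := π⁻¹ * φ) (b := (2:ℝ)⁻¹ * φ) (p := p)
      (by positivity) hs_lb hs_ub
    have hcos_lb : Real.cos (2⁻¹:ℝ) ≤ Real.cos (φ/2) :=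
      Real.cos_le_cos_of_nonneg_of_le_pi (by linarith) (by norm_num; linarith [Real.pi_gt_three]) (by linarith)
    have hc : 0 < Real.cos (2⁻¹:ℝ) :=
      Real.cos_pos_of_mem_Ioo ⟨by norm_num; linarith, by norm_num; linarith [Real.pi_gt_three]⟩
    have hcos := aux_rpow (a := Real.cos (2⁻¹:ℝ)) (b := 1) (p := q) hc hcos_lb
      (Real.cos_le_one _)
    rw [Real.one_rpow] at hcos
    have e1 : (π⁻¹ * φ) ^ p = π⁻¹ ^ p * φ ^ p := Real.mul_rpow (by positivity) hφ0.le
    have e2 : ((2:ℝ)⁻¹ * φ) ^ p = (2:ℝ)⁻¹ ^ p * φ ^ p := Real.mul_rpow (by norm_num) hφ0.le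
    rw [e1, e2] at hsin
    have hφp : (0:ℝ) ≤ φ ^ p := (Real.rpow_pos_of_pos hφ0 _).le
    have hmin : min (π⁻¹ ^ p * φ ^ p) ((2:ℝ)⁻¹ ^ p * φ ^ p) = min (π⁻¹ ^ p) ((2:ℝ)⁻¹ ^ p) * φ ^ p :=
      (min_mul_of_nonneg _ _ hφp).symm
    have hmax : max (π⁻¹ ^ p * φ ^ p) ((2:ℝ)⁻¹ ^ p * φ ^ p) = max (π⁻¹ ^ p) ((2:ℝ)⁻¹ ^ p) * φ ^ p :=
      (max_mul_of_nonneg _ _ hφp).symm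
    rw [hmin, hmax] at hsin
    have hsinpos : (0:ℝ) < min (π⁻¹ ^ p) ((2:ℝ)⁻¹ ^ p) * φ ^ p := by
      have : (0:ℝ) < min (π⁻¹ ^ p) ((2:ℝ)⁻¹ ^ p) :=
        lt_min (Real.rpow_pos_of_pos (by positivity) _) (Real.rpow_pos_of_pos (by norm_num) _)
      positivity
    have hcospos : (0:ℝ) < min (Real.cos 2⁻¹ ^ q) 1 :=
      lt_min (Real.rpow_pos_of_pos hc _) one_pos
    constructor
    · calc min (π⁻¹ ^ p) ((2:ℝ)⁻¹ ^ p) * min (Real.cos 2⁻¹ ^ q) 1 * φ ^ p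
          = (min (π⁻¹ ^ p) ((2:ℝ)⁻¹ ^ p) * φ ^ p) * min (Real.cos 2⁻¹ ^ q) 1 := by ring
        _ ≤ Real.sin (φ/2) ^ p * Real.cos (φ/2) ^ q := by
            apply mul_le_mul hsin.1 hcos.1 hcospos.le
            exact le_trans hsinpos.le hsin.1
        _ = wdens α β φ := rfl
    · calc wdens α β φ = Real.sin (φ/2) ^ p * Real.cos (φ/2) ^ q := rfl
        _ ≤ (max (π⁻¹ ^ p) ((2:ℝ)⁻¹ ^ p) * φ ^ p) * max (Real.cos 2⁻¹ ^ q) 1 := by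
            apply mul_le_mul hsin.2 hcos.2 (Real.rpow_pos_of_pos (lt_of_lt_of_le hc hcos_lb) q).le
            exact le_trans (le_trans hsinpos.le hsin.1) hsin.2
        _ = max (π⁻¹ ^ p) ((2:ℝ)⁻¹ ^ p) * max (Real.cos 2⁻¹ ^ q) 1 * φ ^ p := by ring

lemma integrableOn_Ioo_rpow {r : ℝ} (hr : -1 < r) (ε : ℝ) :
    IntegrableOn (fun φ => φ ^ r) (Ioo (0:ℝ) ε) := by
  rcases le_or_gt ε 0 with h | h
  · rw [Ioo_eq_empty (by intro hh; linarith [hh.trans_le h])]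
    exact integrableOn_empty
  · have h1 := intervalIntegral.intervalIntegrable_rpow' (a := 0) (b := ε) hr
    rw [intervalIntegrable_iff_integrableOn_Ioc_of_le h.le] at h1
    exact h1.mono_set Ioo_subset_Ioc_self

lemma integral_Ioo_rpow {r : ℝ} (hr : -1 < r) {ε : ℝ} (hε : 0 < ε) :
    ∫ φ in Ioo (0:ℝ) ε, φ ^ r = ε ^ (r+1) / (r+1) := by
  rw [← integral_Ioc_eq_integral_Ioo, ← intervalIntegral.integral_of_le hε.le,
    integral_rpow (Or.inl hr), Real.zero_rpow (by linarith : r + 1 ≠ 0)]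
  ring

lemma jacobi_restrict (α β : ℝ) {ε : ℝ} (hε0 : 0 < ε) (hεπ : ε ≤ π) :
    (jacobiMeasure α β).restrict (Ioo 0 ε)
      = (volume.restrict (Ioo 0 ε)).withDensity
          (fun φ => ENNReal.ofReal (wdens α β φ)) := by
  rw [jacobiMeasure, restrict_withDensity measurableSet_Ioo,
    Measure.restrict_restrict measurableSet_Ioo,
    inter_eq_self_of_subset_left (Ioo_subset_Ioo_right hεπ)]
  rfl

lemma jacobi_setIntegral (α β : ℝ) {ε : ℝ} (hε0 : 0 < ε) (hεπ : ε ≤ π) (g : ℝ → ℝ) :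
    ∫ φ in Ioo (0:ℝ) ε, g φ ∂(jacobiMeasure α β)
      = ∫ φ in Ioo (0:ℝ) ε, wdens α β φ * g φ := by
  rw [jacobi_restrict α β hε0 hεπ]
  have hmeas : Measurable fun φ => (wdens α β φ).toNNReal := (wdens_meas α β).real_toNNReal
  have hd : (fun φ => ENNReal.ofReal (wdens α β φ))
      = fun φ => ((wdens α β φ).toNNReal : ℝ≥0∞) := rfl
  rw [hd, integral_withDensity_eq_integral_smul hmeas]
  refine integral_congr_ae ?_
  filter_upwards [ae_restrict_mem measurableSet_Ioo] with φ hφ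
  have hw : 0 ≤ wdens α β φ :=
    (wdens_pos α β φ ⟨hφ.1, lt_of_lt_of_le hφ.2 hεπ⟩).le
  simp [NNReal.smul_def, Real.coe_toNNReal _ hw]

lemma jacobi_apply (α β : ℝ) {ε : ℝ} (hε0 : 0 < ε) (hεπ : ε ≤ π)
    (hint : IntegrableOn (wdens α β) (Ioo 0 ε)) :
    jacobiMeasure α β (Ioo 0 ε) = ENNReal.ofReal (∫ φ in Ioo (0:ℝ) ε, wdens α β φ) := by
  have h1 : jacobiMeasure α β (Ioo 0 ε) = (jacobiMeasure α β).restrict (Ioo 0 ε) (Ioo 0 ε) := by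
    rw [Measure.restrict_apply_self]
  have hnn : 0 ≤ᵐ[volume.restrict (Ioo (0:ℝ) ε)] wdens α β := by
    filter_upwards [ae_restrict_mem measurableSet_Ioo] with φ hφ
    exact (wdens_pos α β φ ⟨hφ.1, lt_of_lt_of_le hφ.2 hεπ⟩).le
  rw [h1, jacobi_restrict α β hε0 hεπ, withDensity_apply _ measurableSet_Ioo,
    Measure.restrict_restrict measurableSet_Ioo, inter_self,
    ← ofReal_integral_eq_lintegral_ofReal hint hnn]

lemma jacobi_main (α β : ℝ) (hα : -1 < α) (hβ : -1 < β) :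
    ∃ c C : ℝ, 0 < c ∧ 0 < C ∧ ∀ ε : ℝ, 0 < ε → ε < 1 →
      (c * ε ^ (2*α+2) ≤ ((jacobiMeasure α β) (Ioo 0 ε)).toReal ∧
        ((jacobiMeasure α β) (Ioo 0 ε)).toReal ≤ C * ε ^ (2*α+2)) ∧
      (c * (ε ^ (2*α+2) * Real.log (2*π/ε))
          ≤ (∫ φ in Ioo (0:ℝ) ε, Real.log (2*π/φ) ∂(jacobiMeasure α β)) ∧
        (∫ φ in Ioo (0:ℝ) ε, Real.log (2*π/φ) ∂(jacobiMeasure α β))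
          ≤ C * (ε ^ (2*α+2) * Real.log (2*π/ε))) ∧
      jacobiMeasure α β (Ioo 0 ε) ≠ ⊤ := by
  obtain ⟨c₁, C₁, hc₁, hC₁, hcomp⟩ := density_bounds α β
  have hp : (-1:ℝ) < 2*α+1 := by linarith
  have hα1 : (0:ℝ) < α+1 := by linarith
  have h2α : (0:ℝ) < 2*α+2 := by linarith
  have hπ3 := Real.pi_gt_three
  refine ⟨c₁/(2*α+2), C₁/(2*α+2) + C₁/((α+1)*(α+1)), by positivity, by positivity, ?_⟩
  intro ε hε0 hε1
  have hεπ : ε ≤ π := by linarith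
  have hsub : Ioo (0:ℝ) ε ⊆ Ioo (0:ℝ) 1 := Ioo_subset_Ioo_right hε1.le
  have hrint : IntegrableOn (fun φ => φ ^ (2*α+1)) (Ioo (0:ℝ) ε) := integrableOn_Ioo_rpow hp ε
  have hαint : IntegrableOn (fun φ => φ ^ α) (Ioo (0:ℝ) ε) := integrableOn_Ioo_rpow hα ε
  have hwint : IntegrableOn (wdens α β) (Ioo (0:ℝ) ε) := by
    refine Integrable.mono (hrint.const_mul C₁) (wdens_meas α β).aestronglyMeasurable ?_
    filter_upwards [ae_restrict_mem measurableSet_Ioo] with φ hφ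
    have h := hcomp φ (hsub hφ)
    have hwpos := wdens_pos α β φ ⟨hφ.1, lt_of_lt_of_le hφ.2 hεπ⟩
    rw [Real.norm_eq_abs, Real.norm_eq_abs, abs_of_pos hwpos]
    exact h.2.trans (le_abs_self _)
  have hμeq := jacobi_apply α β hε0 hεπ hwint
  have hμtoReal : (jacobiMeasure α β (Ioo 0 ε)).toReal = ∫ φ in Ioo (0:ℝ) ε, wdens α β φ := by
    rw [hμeq, ENNReal.toReal_ofReal]
    exact setIntegral_nonneg measurableSet_Ioo fun φ hφ =>
      (wdens_pos α β φ ⟨hφ.1, lt_of_lt_of_le hφ.2 hεπ⟩).le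
  have hrpow_int : ∫ φ in Ioo (0:ℝ) ε, φ ^ (2*α+1) = ε ^ (2*α+2) / (2*α+2) := by
    have h := integral_Ioo_rpow hp hε0
    rw [show (2*α+1+1 : ℝ) = 2*α+2 by ring] at h
    exact h
  have hαpow_int : ∫ φ in Ioo (0:ℝ) ε, φ ^ α = ε ^ (α+1) / (α+1) := integral_Ioo_rpow hα hε0
  set E := ε ^ (2*α+2) with hE
  have hEpos : 0 < E := Real.rpow_pos_of_pos hε0 _
  -- measure bounds
  have hlow : c₁ * (E/(2*α+2)) ≤ ∫ φ in Ioo (0:ℝ) ε, wdens α β φ := by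
    have h : ∫ φ in Ioo (0:ℝ) ε, c₁ * φ^(2*α+1) ≤ ∫ φ in Ioo (0:ℝ) ε, wdens α β φ :=
      setIntegral_mono_on (hrint.const_mul c₁) hwint measurableSet_Ioo
        (fun φ hφ => (hcomp φ (hsub hφ)).1)
    rwa [integral_const_mul, hrpow_int] at h
  have hupp : (∫ φ in Ioo (0:ℝ) ε, wdens α β φ) ≤ C₁ * (E/(2*α+2)) := by
    have h : ∫ φ in Ioo (0:ℝ) ε, wdens α β φ ≤ ∫ φ in Ioo (0:ℝ) ε, C₁ * φ^(2*α+1) :=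
      setIntegral_mono_on hwint (hrint.const_mul C₁) measurableSet_Ioo
        (fun φ hφ => (hcomp φ (hsub hφ)).2)
    rwa [integral_const_mul, hrpow_int] at h
  -- log facts
  set Lε := Real.log (2*π/ε) with hLεdef
  have hLε1 : 1 ≤ Lε := by
    rw [hLεdef, Real.le_log_iff_exp_le (by positivity)]
    have h1 : Real.exp 1 < 2.7182818286 := Real.exp_one_lt_d9
    have h2 : (2*π:ℝ) ≤ 2*π/ε := by
      rw [le_div_iff₀ hε0]; nlinarith
    nlinarith
  have hLφfacts : ∀ φ ∈ Ioo (0:ℝ) ε, Lε ≤ Real.log (2*π/φ) := by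
    intro φ hφ
    apply Real.log_le_log (by positivity)
    exact div_le_div_of_nonneg_left (by positivity) hφ.1 hφ.2.le
  set K := C₁ * (α+1)⁻¹ * ε^(α+1) with hKdef
  set U : ℝ → ℝ := fun φ => C₁*Lε*φ^(2*α+1) + K * φ^α with hUdef
  have hUint : IntegrableOn U (Ioo (0:ℝ) ε) :=
    (hrint.const_mul (C₁*Lε)).add (hαint.const_mul K)
  have key : ∀ φ ∈ Ioo (0:ℝ) ε,
      0 ≤ wdens α β φ * Real.log (2*π/φ) ∧
      wdens α β φ * Real.log (2*π/φ) ≤ U φ ∧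
      (c₁ * Lε) * φ^(2*α+1) ≤ wdens α β φ * Real.log (2*π/φ) := by
    intro φ hφ
    obtain ⟨hφ0, hφε⟩ := hφ
    have hw := hcomp φ (hsub ⟨hφ0, hφε⟩)
    have hwpos := wdens_pos α β φ ⟨hφ0, lt_of_lt_of_le hφε hεπ⟩
    have hLφ := hLφfacts φ ⟨hφ0, hφε⟩
    have hLφ0 : 0 < Real.log (2*π/φ) := lt_of_lt_of_le (by linarith) hLφ
    have hφp : 0 < φ^(2*α+1) := Real.rpow_pos_of_pos hφ0 _
    refine ⟨mul_nonneg hwpos.le hLφ0.le, ?_, ?_⟩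
    · -- upper
      have hsplit : Real.log (2*π/φ) = Lε + Real.log (ε/φ) := by
        rw [hLεdef, ← Real.log_mul (by positivity) (by positivity)]
        congr 1; field_simp
      have hx : 0 < ε/φ := by positivity
      have hlog2 : Real.log (ε/φ) ≤ (α+1)⁻¹ * (ε/φ)^(α+1) := by
        have h1 := Real.log_le_sub_one_of_pos (Real.rpow_pos_of_pos hx (α+1))
        rw [Real.log_rpow hx] at h1
        have h2 : (α+1) * Real.log (ε/φ) ≤ (ε/φ)^(α+1) := by linarith
        calc Real.log (ε/φ) = (α+1)⁻¹ * ((α+1) * Real.log (ε/φ)) := by field_simp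
          _ ≤ (α+1)⁻¹ * (ε/φ)^(α+1) := mul_le_mul_of_nonneg_left h2 (by positivity)
      have hr3 : φ^(2*α+1) * (ε/φ)^(α+1) = ε^(α+1) * φ^α := by
        rw [Real.div_rpow hε0.le hφ0.le,
          show (α:ℝ) = 2*α+1 - (α+1) by ring, Real.rpow_sub hφ0]
        ring
      have hstep : φ^(2*α+1) * Real.log (ε/φ) ≤ (α+1)⁻¹ * (ε^(α+1) * φ^α) := by
        calc φ^(2*α+1) * Real.log (ε/φ) ≤ φ^(2*α+1) * ((α+1)⁻¹ * (ε/φ)^(α+1)) :=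
              mul_le_mul_of_nonneg_left hlog2 hφp.le
          _ = (α+1)⁻¹ * (φ^(2*α+1) * (ε/φ)^(α+1)) := by ring
          _ = (α+1)⁻¹ * (ε^(α+1) * φ^α) := by rw [hr3]
      calc wdens α β φ * Real.log (2*π/φ) ≤ C₁ * φ^(2*α+1) * Real.log (2*π/φ) :=
            mul_le_mul_of_nonneg_right hw.2 hLφ0.le
        _ = C₁ * (φ^(2*α+1) * Lε) + C₁ * (φ^(2*α+1) * Real.log (ε/φ)) := by
            rw [hsplit]; ring
        _ ≤ C₁ * (φ^(2*α+1) * Lε) + C₁ * ((α+1)⁻¹ * (ε^(α+1) * φ^α)) := by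
            have := mul_le_mul_of_nonneg_left hstep hC₁.le
            linarith
        _ = U φ := by rw [hUdef, hKdef]; ring
    · -- lower
      calc (c₁ * Lε) * φ^(2*α+1) = (c₁ * φ^(2*α+1)) * Lε := by ring
        _ ≤ wdens α β φ * Real.log (2*π/φ) :=
            mul_le_mul hw.1 hLφ (by linarith) hwpos.le
  have hWLint : IntegrableOn (fun φ => wdens α β φ * Real.log (2*π/φ)) (Ioo (0:ℝ) ε) := by
    refine Integrable.mono hUint
      ((wdens_meas α β).mul
        (Real.measurable_log.comp (measurable_const.div measurable_id))).aestronglyMeasurable ?_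
    filter_upwards [ae_restrict_mem measurableSet_Ioo] with φ hφ
    obtain ⟨h0, hU, _⟩ := key φ hφ
    rw [Real.norm_eq_abs, Real.norm_eq_abs, abs_of_nonneg h0]
    exact hU.trans (le_abs_self _)
  have hU_int_val : ∫ φ in Ioo (0:ℝ) ε, U φ = C₁*Lε*(E/(2*α+2)) + K * (ε^(α+1)/(α+1)) := by
    rw [hUdef]
    rw [integral_add (hrint.const_mul (C₁*Lε)) (hαint.const_mul K),
      integral_const_mul, integral_const_mul, hrpow_int, hαpow_int]
  have hEE : ε^(α+1) * ε^(α+1) = E := by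
    rw [hE, ← Real.rpow_add hε0]; congr 1; ring
  -- convert the μ-integral
  have hjs := jacobi_setIntegral α β hε0 hεπ (fun φ => Real.log (2*π/φ))
  refine ⟨⟨?_, ?_⟩, ⟨?_, ?_⟩, ?_⟩
  · rw [hμtoReal]
    calc c₁/(2*α+2) * E = c₁ * (E/(2*α+2)) := by ring
      _ ≤ _ := hlow
  · rw [hμtoReal]
    refine hupp.trans ?_
    have h1 : 0 ≤ C₁/((α+1)*(α+1)) * E := by positivity
    have h2 : (C₁/(2*α+2) + C₁/((α+1)*(α+1))) * E
        = C₁ * (E/(2*α+2)) + C₁/((α+1)*(α+1)) * E := by ring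
    linarith
  · rw [hjs]
    have h : ∫ φ in Ioo (0:ℝ) ε, (c₁ * Lε) * φ^(2*α+1)
        ≤ ∫ φ in Ioo (0:ℝ) ε, wdens α β φ * Real.log (2*π/φ) :=
      setIntegral_mono_on (hrint.const_mul (c₁*Lε)) hWLint measurableSet_Ioo
        (fun φ hφ => (key φ hφ).2.2)
    rw [integral_const_mul, hrpow_int] at h
    calc c₁/(2*α+2) * (E * Lε) = c₁ * Lε * (E/(2*α+2)) := by ring
      _ ≤ _ := h
  · rw [hjs]
    have h : ∫ φ in Ioo (0:ℝ) ε, wdens α β φ * Real.log (2*π/φ)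
        ≤ ∫ φ in Ioo (0:ℝ) ε, U φ :=
      setIntegral_mono_on hWLint hUint measurableSet_Ioo (fun φ hφ => (key φ hφ).2.1)
    rw [hU_int_val] at h
    refine h.trans ?_
    have hKE : K * (ε^(α+1)/(α+1)) = C₁ * E / ((α+1)*(α+1)) := by
      rw [hKdef, ← hEE]; field_simp
    rw [hKE]
    have h2 : C₁ * E / ((α+1)*(α+1)) ≤ C₁ * E / ((α+1)*(α+1)) * Lε :=
      le_mul_of_one_le_right (by positivity) hLε1
    have h3 : (C₁/(2*α+2) + C₁/((α+1)*(α+1))) * (E * Lε)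
        = C₁*Lε*(E/(2*α+2)) + C₁ * E / ((α+1)*(α+1)) * Lε := by ring
    linarith
  · rw [hμeq]; exact ENNReal.ofReal_ne_top

theorem stmt12 (α β : ℝ) (hα : -1 < α) (hβ : -1 < β) :
    (∃ c C ε₀ : ℝ, 0 < c ∧ 0 < C ∧ 0 < ε₀ ∧ ∀ ε : ℝ, 0 < ε → ε < ε₀ →
      (c * ε ^ (2 * α + 2) ≤ ((jacobiMeasure α β) (Set.Ioo 0 ε)).toReal ∧
        ((jacobiMeasure α β) (Set.Ioo 0 ε)).toReal ≤ C * ε ^ (2 * α + 2)) ∧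
      (c * (ε ^ (2 * α + 2) * Real.log (2 * π / ε))
          ≤ (∫ φ in Set.Ioo (0 : ℝ) ε, Real.log (2 * π / φ) ∂(jacobiMeasure α β)) ∧
        (∫ φ in Set.Ioo (0 : ℝ) ε, Real.log (2 * π / φ) ∂(jacobiMeasure α β))
          ≤ C * (ε ^ (2 * α + 2) * Real.log (2 * π / ε)))) ∧
    ¬ ∃ C : ℝ, 0 < C ∧ ∀ f : ℝ → ℝ, Integrable f (jacobiMeasure α β) →
      eLpNorm (fun θ => ∫ φ, Real.log (2 * π / (θ + φ)) * f φ ∂(jacobiMeasure α β)) ⊤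
          (jacobiMeasure α β)
        ≤ ENNReal.ofReal (C * ∫ φ, |f φ| ∂(jacobiMeasure α β)) := by
  obtain ⟨c, C0, hc, hC0, hmain⟩ := jacobi_main α β hα hβ
  constructor
  · exact ⟨c, C0, 1, hc, hC0, one_pos, fun ε hε0 hε1 =>
      ⟨(hmain ε hε0 hε1).1, (hmain ε hε0 hε1).2.1⟩⟩
  · rintro ⟨C, hC, hbound⟩
    set μ := jacobiMeasure α β with hμdef
    have hπ := Real.pi_pos
    set ε := min (2⁻¹ : ℝ) (π * Real.exp (-(C+1))) with hεdef
    have hε0 : 0 < ε := lt_min (by norm_num) (by positivity)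
    have hεhalf : ε ≤ 2⁻¹ := min_le_left _ _
    have hε1 : ε < 1 := lt_of_le_of_lt hεhalf (by norm_num)
    obtain ⟨⟨hlow, _⟩, _, hfin⟩ := hmain ε hε0 hε1
    have hMpos : 0 < (μ (Ioo (0:ℝ) ε)).toReal :=
      lt_of_lt_of_le (mul_pos hc (Real.rpow_pos_of_pos hε0 _)) hlow
    have hμ0 : μ (Ioo (0:ℝ) ε) ≠ 0 := by
      intro h; rw [h, ENNReal.toReal_zero] at hMpos; exact lt_irrefl _ hMpos
    set M := (μ (Ioo (0:ℝ) ε)).toReal with hMdef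
    have hlogC : C + 1 ≤ Real.log (π/ε) := by
      rw [Real.le_log_iff_exp_le (by positivity), le_div_iff₀ hε0]
      have h2 : ε ≤ π * Real.exp (-(C+1)) := min_le_right _ _
      have h3 : Real.exp (C+1) * Real.exp (-(C+1)) = 1 := by
        rw [← Real.exp_add, show C+1 + -(C+1) = 0 by ring, Real.exp_zero]
      calc Real.exp (C+1) * ε ≤ Real.exp (C+1) * (π * Real.exp (-(C+1))) :=
            mul_le_mul_of_nonneg_left h2 (Real.exp_pos _).le
        _ = π := by rw [show Real.exp (C+1) * (π * Real.exp (-(C+1)))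
              = (Real.exp (C+1) * Real.exp (-(C+1))) * π by ring, h3, one_mul]
    set f := (Ioo (0:ℝ) ε).indicator (fun _ => (1:ℝ)) with hfdef
    have hfint : Integrable f μ := by
      rw [hfdef, integrable_indicator_iff measurableSet_Ioo]
      exact integrableOn_const hfin
    have hfabs : ∫ φ, |f φ| ∂μ = M := by
      have h1 : (fun φ => |f φ|) = f := by
        funext φ; rw [hfdef]; by_cases h : φ ∈ Ioo (0:ℝ) ε <;> simp [h]
      rw [h1, hfdef, integral_indicator_const (1:ℝ) measurableSet_Ioo, smul_eq_mul, mul_one, measureReal_def, hMdef]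
    have hLbound : ∀ θ ∈ Ioo (0:ℝ) ε, ∀ φ ∈ Ioo (0:ℝ) ε,
        Real.log (π/ε) ≤ Real.log (2*π/(θ+φ)) ∧
        Real.log (2*π/(θ+φ)) ≤ Real.log (2*π/θ) ∧ 0 < Real.log (2*π/(θ+φ)) := by
      intro θ hθ φ hφ
      have hθ0 := hθ.1
      have hsum : 0 < θ + φ := by linarith [hφ.1]
      have hsum2 : θ + φ < 2*ε := by linarith [hθ.2, hφ.2]
      refine ⟨?_, ?_, ?_⟩
      · apply Real.log_le_log (by positivity)
        rw [div_le_div_iff₀ hε0 hsum]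
        nlinarith
      · apply Real.log_le_log (by positivity)
        exact div_le_div_of_nonneg_left (by positivity) hθ0 (by linarith [hφ.1])
      · apply Real.log_pos
        rw [lt_div_iff₀ hsum]
        have : 2*ε ≤ 1 := by linarith
        nlinarith [Real.pi_gt_three]
    have hglb : ∀ θ ∈ Ioo (0:ℝ) ε,
        Real.log (π/ε) * M ≤ ∫ φ, Real.log (2*π/(θ+φ)) * f φ ∂μ := by
      intro θ hθ
      have hrw : (fun φ => Real.log (2*π/(θ+φ)) * f φ)
          = (Ioo (0:ℝ) ε).indicator (fun φ => Real.log (2*π/(θ+φ))) := by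
        funext φ; rw [hfdef]; by_cases h : φ ∈ Ioo (0:ℝ) ε <;> simp [h]
      rw [hrw, integral_indicator measurableSet_Ioo]
      have hconst : IntegrableOn (fun _ : ℝ => Real.log (2*π/θ)) (Ioo (0:ℝ) ε) μ :=
        integrableOn_const hfin
      have hconst2 : IntegrableOn (fun _ : ℝ => Real.log (π/ε)) (Ioo (0:ℝ) ε) μ :=
        integrableOn_const hfin
      have hLint : IntegrableOn (fun φ => Real.log (2*π/(θ+φ))) (Ioo (0:ℝ) ε) μ := by
        refine Integrable.mono hconst
          (Real.measurable_log.comp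
            (measurable_const.div (measurable_const.add measurable_id))).aestronglyMeasurable ?_
        filter_upwards [ae_restrict_mem measurableSet_Ioo] with φ hφ
        obtain ⟨h1, h2, h3⟩ := hLbound θ hθ φ hφ
        rw [Real.norm_eq_abs, Real.norm_eq_abs, abs_of_pos h3, abs_of_pos (lt_of_lt_of_le h3 h2)]
        exact h2
      have h := setIntegral_mono_on hconst2 hLint measurableSet_Ioo
        (fun φ hφ => (hLbound θ hθ φ hφ).1)
      rw [setIntegral_const, smul_eq_mul] at h
      calc Real.log (π/ε) * M = M * Real.log (π/ε) := by ring
        _ ≤ _ := h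
    have hEb := hbound f hfint
    rw [hfabs] at hEb
    have hae : ∀ᵐ θ ∂μ, ‖∫ φ, Real.log (2*π/(θ+φ)) * f φ ∂μ‖ ≤ C * M := by
      filter_upwards [ae_le_eLpNormEssSup
        (f := fun θ => ∫ φ, Real.log (2*π/(θ+φ)) * f φ ∂μ) (μ := μ)] with θ hθ
      have h2 : (‖∫ φ, Real.log (2*π/(θ+φ)) * f φ ∂μ‖₊ : ℝ≥0∞) ≤ ENNReal.ofReal (C*M) :=
        le_trans hθ (by rw [← eLpNorm_exponent_top]; exact hEb)
      rwa [← enorm_eq_nnnorm, ← ofReal_norm,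
        ENNReal.ofReal_le_ofReal_iff (by positivity)] at h2
    have hbad : Ioo (0:ℝ) ε ⊆ {θ | ¬ ‖∫ φ, Real.log (2*π/(θ+φ)) * f φ ∂μ‖ ≤ C * M} := by
      intro θ hθ
      have h1 := hglb θ hθ
      have h2 : C * M < Real.log (π/ε) * M := by nlinarith
      simp only [mem_setOf_eq, not_le]
      calc C * M < Real.log (π/ε) * M := h2
        _ ≤ ∫ φ, Real.log (2*π/(θ+φ)) * f φ ∂μ := h1
        _ ≤ ‖∫ φ, Real.log (2*π/(θ+φ)) * f φ ∂μ‖ := le_abs_self _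
    exact hμ0 (le_antisymm (le_trans (measure_mono hbad) (le_of_eq (ae_iff.mp hae)))
      (zero_le))
end

section
/- Let α, β ≥ −1/2 and set δ = max(α+1, β+1, 1/2). Then for every ball B(θ, r) in (0, π) with radius 0 < r < π, centered at θ ∈ (0, π), one has μ_{α,β}(B(θ,r)) ≥ c·r^{2δ} for a constant c > 0 depending only on α and β, where μ_{α,β} is the Jacobi measure with density (sin(θ/2))^{2α+1}(cos(θ/2))^{2β+1}. In fact μ_{α,β}(B(θ,r)) ≍ r·(r+θ)^{2α+1}·(r+π−θ)^{2β+1}. -/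
open Real MeasureTheory Set
open scoped ENNReal

private lemma meas_density (a b : ℝ) :
    Measurable (fun φ : ℝ => ENNReal.ofReal (Real.sin (φ/2) ^ a * Real.cos (φ/2) ^ b)) := by
  measurability

/-- Pick up a power of `r` from the two factors. -/
private lemma aux_pow_min (a b : ℝ) (ha : 0 ≤ a) (hb : 0 ≤ b) {θ r : ℝ}
    (hθ0 : 0 < θ) (hθπ : θ < π) (hr : 0 < r) (hrπ : r < π) :
    min ((π/2) ^ a * π ^ (b - max a b)) ((π/2) ^ b * π ^ (a - max a b)) * r ^ max a b
      ≤ (r + θ) ^ a * (r + π - θ) ^ b := by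
  have hπ := Real.pi_pos
  have hA : (0:ℝ) < r + θ := by linarith
  have hB : (0:ℝ) < r + π - θ := by linarith
  have hkey : ∀ z : ℝ, 0 ≤ z → z ≤ max a b →
      π ^ (z - max a b) * r ^ max a b ≤ r ^ z := by
    intro z hz hzM
    have h1 : π ^ (z - max a b) ≤ r ^ (z - max a b) :=
      Real.rpow_le_rpow_of_nonpos hr hrπ.le (by linarith)
    calc π ^ (z - max a b) * r ^ max a b
        ≤ r ^ (z - max a b) * r ^ max a b :=
          mul_le_mul_of_nonneg_right h1 (Real.rpow_nonneg hr.le _)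
      _ = r ^ z := by rw [← Real.rpow_add hr]; ring_nf
  rcases le_or_gt (π/2) (r + θ) with h | h
  · have h1 : (π/2) ^ a ≤ (r + θ) ^ a :=
      Real.rpow_le_rpow (by positivity) h ha
    have h2 : π ^ (b - max a b) * r ^ max a b ≤ r ^ b :=
      hkey b hb (le_max_right _ _)
    have h3 : r ^ b ≤ (r + π - θ) ^ b :=
      Real.rpow_le_rpow hr.le (by linarith) hb
    calc min ((π/2) ^ a * π ^ (b - max a b)) ((π/2) ^ b * π ^ (a - max a b)) * r ^ max a b
        ≤ (π/2) ^ a * π ^ (b - max a b) * r ^ max a b :=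
          mul_le_mul_of_nonneg_right (min_le_left _ _) (Real.rpow_nonneg hr.le _)
      _ = (π/2) ^ a * (π ^ (b - max a b) * r ^ max a b) := by ring
      _ ≤ (r + θ) ^ a * r ^ b :=
          mul_le_mul h1 h2
            (mul_nonneg (Real.rpow_nonneg hπ.le _) (Real.rpow_nonneg hr.le _))
            (Real.rpow_nonneg hA.le _)
      _ ≤ (r + θ) ^ a * (r + π - θ) ^ b :=
          mul_le_mul_of_nonneg_left h3 (Real.rpow_nonneg hA.le _)
  · have h' : π/2 ≤ r + π - θ := by linarith
    have h1 : (π/2) ^ b ≤ (r + π - θ) ^ b :=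
      Real.rpow_le_rpow (by positivity) h' hb
    have h2 : π ^ (a - max a b) * r ^ max a b ≤ r ^ a :=
      hkey a ha (le_max_left _ _)
    have h3 : r ^ a ≤ (r + θ) ^ a :=
      Real.rpow_le_rpow hr.le (by linarith) ha
    calc min ((π/2) ^ a * π ^ (b - max a b)) ((π/2) ^ b * π ^ (a - max a b)) * r ^ max a b
        ≤ (π/2) ^ b * π ^ (a - max a b) * r ^ max a b :=
          mul_le_mul_of_nonneg_right (min_le_right _ _) (Real.rpow_nonneg hr.le _)
      _ = (π ^ (a - max a b) * r ^ max a b) * (π/2) ^ b := by ring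
      _ ≤ r ^ a * (r + π - θ) ^ b :=
          mul_le_mul h2 h1 (Real.rpow_nonneg (by positivity) _) (Real.rpow_nonneg hr.le _)
      _ ≤ (r + θ) ^ a * (r + π - θ) ^ b :=
          mul_le_mul_of_nonneg_right h3 (Real.rpow_nonneg hB.le _)

set_option maxHeartbeats 1000000 in
private lemma key_est (a b : ℝ) (ha : 0 ≤ a) (hb : 0 ≤ b) {θ r : ℝ}
    (hθ0 : 0 < θ) (hθπ : θ < π) (hr : 0 < r) (hrπ : r < π) :
    (1/4) * ((8*π) ^ a)⁻¹ * ((8*π) ^ b)⁻¹ * (r * (r + θ) ^ a * (r + π - θ) ^ b)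
      ≤ (∫⁻ φ in Ioo (θ - r) (θ + r) ∩ Ioo 0 π,
          ENNReal.ofReal (Real.sin (φ/2) ^ a * Real.cos (φ/2) ^ b)).toReal ∧
    (∫⁻ φ in Ioo (θ - r) (θ + r) ∩ Ioo 0 π,
          ENNReal.ofReal (Real.sin (φ/2) ^ a * Real.cos (φ/2) ^ b)).toReal
      ≤ 2 * (r * (r + θ) ^ a * (r + π - θ) ^ b) := by
  have hπ := Real.pi_pos
  have hA : (0:ℝ) < r + θ := by linarith
  have hB : (0:ℝ) < r + π - θ := by linarith
  set S := Ioo (θ - r) (θ + r) ∩ Ioo 0 π with hS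
  set f : ℝ → ℝ≥0∞ := fun φ => ENNReal.ofReal (Real.sin (φ/2) ^ a * Real.cos (φ/2) ^ b) with hf
  have hmf : Measurable f := meas_density a b
  set D : ℝ := (r + θ) ^ a * (r + π - θ) ^ b with hD
  have hD0 : 0 ≤ D := by
    rw [hD]; exact mul_nonneg (Real.rpow_nonneg hA.le _) (Real.rpow_nonneg hB.le _)
  have hprod : 0 ≤ r * (r + θ) ^ a * (r + π - θ) ^ b :=
    mul_nonneg (mul_nonneg hr.le (Real.rpow_nonneg hA.le _)) (Real.rpow_nonneg hB.le _)
  -- pointwise facts on (0, π)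
  have hcos_eq : ∀ φ : ℝ, Real.cos (φ/2) = Real.sin ((π - φ)/2) := by
    intro φ
    rw [show (π - φ)/2 = π/2 - φ/2 by ring, Real.sin_pi_div_two_sub]
  -- Upper bound
  have hub : ∀ φ ∈ S, f φ ≤ ENNReal.ofReal D := by
    rintro φ ⟨⟨hφ1, hφ2⟩, hφ3, hφ4⟩
    apply ENNReal.ofReal_le_ofReal
    have hs0 : 0 ≤ Real.sin (φ/2) :=
      Real.sin_nonneg_of_nonneg_of_le_pi (by linarith) (by linarith)
    have hc0 : 0 ≤ Real.cos (φ/2) := by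
      rw [hcos_eq φ]
      exact Real.sin_nonneg_of_nonneg_of_le_pi (by linarith) (by linarith)
    have hs1 : Real.sin (φ/2) ≤ r + θ := by
      have := Real.sin_le (by linarith : (0:ℝ) ≤ φ/2)
      linarith
    have hc1 : Real.cos (φ/2) ≤ r + π - θ := by
      rw [hcos_eq φ]
      have := Real.sin_le (by linarith : (0:ℝ) ≤ (π - φ)/2)
      linarith
    exact mul_le_mul (Real.rpow_le_rpow hs0 hs1 ha) (Real.rpow_le_rpow hc0 hc1 hb)
      (Real.rpow_nonneg hc0 _) (Real.rpow_nonneg hA.le _)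
  have hub2 : (∫⁻ φ in S, f φ) ≤ ENNReal.ofReal (2 * (r * (r + θ) ^ a * (r + π - θ) ^ b)) := by
    calc (∫⁻ φ in S, f φ) ≤ ∫⁻ _ in S, ENNReal.ofReal D := setLIntegral_mono measurable_const hub
      _ = ENNReal.ofReal D * volume S := setLIntegral_const _ _
      _ ≤ ENNReal.ofReal D * ENNReal.ofReal (2*r) := by
          apply mul_le_mul_right
          calc volume S ≤ volume (Ioo (θ - r) (θ + r)) := measure_mono inter_subset_left
            _ = ENNReal.ofReal (2*r) := by rw [Real.volume_Ioo]; ring_nf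
      _ = ENNReal.ofReal (2 * (r * (r + θ) ^ a * (r + π - θ) ^ b)) := by
          rw [← ENNReal.ofReal_mul hD0, hD]; ring_nf
  have hfin : (∫⁻ φ in S, f φ) ≠ ⊤ :=
    ne_top_of_le_ne_top ENNReal.ofReal_ne_top hub2
  constructor
  · -- Lower bound
    set l : ℝ := max (θ - r) 0 with hl
    set u : ℝ := min (θ + r) π with hu
    have hl1 : θ - r ≤ l := le_max_left _ _
    have hl0 : 0 ≤ l := le_max_right _ _
    have hu1 : u ≤ θ + r := min_le_left _ _
    have hu2 : u ≤ π := min_le_right _ _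
    have hlu : l + r ≤ u := by
      have h1 : θ ≤ u := le_min (by linarith) hθπ.le
      have h2 : r ≤ u := le_min (by linarith) hrπ.le
      have : l ≤ u - r := max_le (by linarith) (by linarith)
      linarith
    set m : ℝ := (l + u)/2 with hm
    have hml : l + r/2 ≤ m := by rw [hm]; linarith
    have hmu : m ≤ u - r/2 := by rw [hm]; linarith
    set J : Set ℝ := Ioo (m - r/8) (m + r/8) with hJ
    have hJS : J ⊆ S := by
      rintro φ ⟨h1, h2⟩
      exact ⟨⟨by linarith, by linarith⟩, by linarith, by linarith⟩
    set d₀ : ℝ := ((r + θ)/(8*π)) ^ a * ((r + π - θ)/(8*π)) ^ b with hd₀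
    have hd₀0 : 0 ≤ d₀ := by
      rw [hd₀]
      exact mul_nonneg (Real.rpow_nonneg (by positivity) _)
        (Real.rpow_nonneg (div_nonneg hB.le (by positivity)) _)
    have hlb : ∀ φ ∈ J, ENNReal.ofReal d₀ ≤ f φ := by
      rintro φ ⟨h1, h2⟩
      apply ENNReal.ofReal_le_ofReal
      have hφθ : (r + θ)/8 ≤ φ := by
        rcases le_total θ (2*r) with h | h
        · linarith
        · linarith
      have hφπ : (r + π - θ)/8 ≤ π - φ := by
        have hπu : 0 ≤ π - u := by linarith
        have hπu2 : π - θ - r ≤ π - u := by linarith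
        rcases le_total (π - θ) (2*r) with h | h
        · linarith
        · linarith
      have hφ0 : 0 < φ := by
        have : (0:ℝ) < (r + θ)/8 := by linarith
        linarith
      have hφπ' : φ < π := by
        have : (0:ℝ) < (r + π - θ)/8 := by linarith
        linarith
      have hsin : (r + θ)/(8*π) ≤ Real.sin (φ/2) := by
        have hj := Real.mul_le_sin (x := φ/2) (by linarith) (by linarith)
        have h2π : φ/π ≤ Real.sin (φ/2) := by
          calc φ/π = 2/π * (φ/2) := by field_simp
            _ ≤ Real.sin (φ/2) := hj
        calc (r + θ)/(8*π) ≤ φ/π := by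
              rw [div_le_div_iff₀ (by positivity) hπ]
              nlinarith [mul_le_mul_of_nonneg_right hφθ hπ.le]
          _ ≤ Real.sin (φ/2) := h2π
      have hcos : (r + π - θ)/(8*π) ≤ Real.cos (φ/2) := by
        rw [hcos_eq φ]
        have hj := Real.mul_le_sin (x := (π - φ)/2) (by linarith) (by linarith)
        have h2π : (π - φ)/π ≤ Real.sin ((π - φ)/2) := by
          calc (π - φ)/π = 2/π * ((π - φ)/2) := by field_simp
            _ ≤ Real.sin ((π - φ)/2) := hj
        calc (r + π - θ)/(8*π) ≤ (π - φ)/π := by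
              rw [div_le_div_iff₀ (by positivity) hπ]
              nlinarith [mul_le_mul_of_nonneg_right hφπ hπ.le]
          _ ≤ Real.sin ((π - φ)/2) := h2π
      exact mul_le_mul (Real.rpow_le_rpow (div_nonneg hA.le (by positivity)) hsin ha)
        (Real.rpow_le_rpow (div_nonneg hB.le (by positivity)) hcos hb)
        (Real.rpow_nonneg (div_nonneg hB.le (by positivity)) _)
        (Real.rpow_nonneg (Real.sin_nonneg_of_nonneg_of_le_pi (by linarith) (by linarith)) _)
    have hlb2 : ENNReal.ofReal (d₀ * (r/4)) ≤ ∫⁻ φ in S, f φ := by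
      calc ENNReal.ofReal (d₀ * (r/4)) = ENNReal.ofReal d₀ * ENNReal.ofReal (r/4) := by
            rw [ENNReal.ofReal_mul hd₀0]
        _ = ENNReal.ofReal d₀ * volume J := by
            rw [hJ, Real.volume_Ioo]; ring_nf
        _ = ∫⁻ _ in J, ENNReal.ofReal d₀ := (setLIntegral_const _ _).symm
        _ ≤ ∫⁻ φ in J, f φ := setLIntegral_mono hmf hlb
        _ ≤ ∫⁻ φ in S, f φ := lintegral_mono_set hJS
    have hmono := ENNReal.toReal_mono hfin hlb2
    rw [ENNReal.toReal_ofReal (mul_nonneg hd₀0 (by linarith))] at hmono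
    refine le_trans (le_of_eq ?_) hmono
    rw [hd₀, Real.div_rpow hA.le (by positivity),
      Real.div_rpow hB.le (by positivity), div_eq_mul_inv, div_eq_mul_inv]
    ring
  · -- Upper bound, real version
    have hmono := ENNReal.toReal_mono ENNReal.ofReal_ne_top hub2
    rwa [ENNReal.toReal_ofReal (by linarith)] at hmono

theorem stmt15 (α β : ℝ) (hα : -1/2 ≤ α) (hβ : -1/2 ≤ β) :
    ∃ c c' C' : ℝ, 0 < c ∧ 0 < c' ∧ 0 < C' ∧
      ∀ θ ∈ Set.Ioo (0 : ℝ) π, ∀ r : ℝ, 0 < r → r < π →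
        c * r ^ (2 * max (max (α + 1) (β + 1)) (1/2))
            ≤ ((jacobiMeasure α β) (Set.Ioo (θ - r) (θ + r))).toReal ∧
        c' * (r * (r + θ) ^ (2 * α + 1) * (r + π - θ) ^ (2 * β + 1))
            ≤ ((jacobiMeasure α β) (Set.Ioo (θ - r) (θ + r))).toReal ∧
        ((jacobiMeasure α β) (Set.Ioo (θ - r) (θ + r))).toReal
            ≤ C' * (r * (r + θ) ^ (2 * α + 1) * (r + π - θ) ^ (2 * β + 1)) := by
  have hπ := Real.pi_pos
  have ha : (0:ℝ) ≤ 2*α + 1 := by linarith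
  have hb : (0:ℝ) ≤ 2*β + 1 := by linarith
  set a : ℝ := 2*α + 1 with ha_def
  set b : ℝ := 2*β + 1 with hb_def
  set c' : ℝ := (1/4) * ((8*π) ^ a)⁻¹ * ((8*π) ^ b)⁻¹ with hc'_def
  set K : ℝ := min ((π/2) ^ a * π ^ (b - max a b)) ((π/2) ^ b * π ^ (a - max a b)) with hK_def
  have hc' : 0 < c' := by rw [hc'_def]; positivity
  have hK : 0 < K := by
    rw [hK_def]
    apply lt_min <;> positivity
  have hexp : 2 * max (max (α + 1) (β + 1)) (1/2) = 1 + max a b := by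
    rw [max_eq_left (le_trans (by linarith : (1:ℝ)/2 ≤ α + 1) (le_max_left _ _))]
    rcases le_total α β with h | h
    · rw [max_eq_right (by linarith : α + 1 ≤ β + 1),
        max_eq_right (by rw [ha_def, hb_def]; linarith : a ≤ b), hb_def]
      ring
    · rw [max_eq_left (by linarith : β + 1 ≤ α + 1),
        max_eq_left (by rw [ha_def, hb_def]; linarith : b ≤ a), ha_def]
      ring
  refine ⟨c' * K, c', 2, mul_pos hc' hK, hc', two_pos, ?_⟩
  rintro θ ⟨hθ0, hθπ⟩ r hr hrπ
  have hμrw : jacobiMeasure α β (Set.Ioo (θ - r) (θ + r))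
      = ∫⁻ φ in Ioo (θ - r) (θ + r) ∩ Ioo 0 π,
          ENNReal.ofReal (Real.sin (φ/2) ^ a * Real.cos (φ/2) ^ b) := by
    rw [jacobiMeasure, withDensity_apply _ measurableSet_Ioo,
      Measure.restrict_restrict measurableSet_Ioo]
  obtain ⟨h1, h2⟩ := key_est a b ha hb hθ0 hθπ hr hrπ
  rw [hμrw]
  refine ⟨?_, h1, ?_⟩
  · have haux := aux_pow_min a b ha hb hθ0 hθπ hr hrπ
    calc c' * K * r ^ (2 * max (max (α + 1) (β + 1)) (1/2))
        = c' * K * (r * r ^ max a b) := by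
          rw [hexp, Real.rpow_add hr, Real.rpow_one]
      _ = (c' * r) * (K * r ^ max a b) := by ring
      _ ≤ (c' * r) * ((r + θ) ^ a * (r + π - θ) ^ b) :=
          mul_le_mul_of_nonneg_left haux (mul_pos hc' hr).le
      _ = c' * (r * (r + θ) ^ a * (r + π - θ) ^ b) := by ring
      _ ≤ _ := h1
  · exact h2
end

section
/- Let α, β > −1. Then μ_{α,β}(B(θ, |θ−φ|)) ≍ |θ−φ|·(θ+φ)^{2α+1}·(2π−θ−φ)^{2β+1} uniformly in θ, φ ∈ (0, π), where B(θ,r) is the interval (θ−r, θ+r) intersected with (0,π). -/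
open Real MeasureTheory Set
open scoped ENNReal

namespace Stmt16Aux

lemma rpow_bounds {a l h x : ℝ} (hl : 0 < l) (h1 : l ≤ x) (h2 : x ≤ h) :
    min (l ^ a) (h ^ a) ≤ x ^ a ∧ x ^ a ≤ max (l ^ a) (h ^ a) := by
  have hx : (0:ℝ) < x := hl.trans_le h1
  rcases le_or_gt 0 a with ha | ha
  · exact ⟨(min_le_left _ _).trans (Real.rpow_le_rpow hl.le h1 ha),
      (Real.rpow_le_rpow hx.le h2 ha).trans (le_max_right _ _)⟩
  · exact ⟨(min_le_right _ _).trans (Real.rpow_le_rpow_of_nonpos hx h2 ha.le),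
      (Real.rpow_le_rpow_of_nonpos hl h1 ha.le).trans (le_max_left _ _)⟩

lemma div_rpow_eq {v c : ℝ} (hv : 0 ≤ v) (hc : 0 < c) (a : ℝ) :
    (v / c) ^ a = c ^ (-a) * v ^ a := by
  rw [Real.div_rpow hv hc.le, Real.rpow_neg hc.le]
  ring

lemma rpow_half_lower {a v x : ℝ} (hv : 0 < v) (h1 : v / 2 ≤ x) (h2 : x ≤ v) :
    min ((2:ℝ) ^ (-a)) 1 * v ^ a ≤ x ^ a := by
  refine le_trans ?_ (rpow_bounds (by positivity) h1 h2).1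
  have hva : (0:ℝ) ≤ v ^ a := Real.rpow_nonneg hv.le a
  refine le_min ?_ ?_
  · rw [div_rpow_eq hv.le two_pos a]
    exact mul_le_mul_of_nonneg_right (min_le_left _ _) hva
  · calc min ((2:ℝ) ^ (-a)) 1 * v ^ a ≤ 1 * v ^ a :=
        mul_le_mul_of_nonneg_right (min_le_right _ _) hva
      _ = v ^ a := one_mul _

lemma rpow_half_upper {a v x : ℝ} (hv : 0 < v) (h1 : v / 2 ≤ x) (h2 : x ≤ v) :
    x ^ a ≤ max ((2:ℝ) ^ (-a)) 1 * v ^ a := by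
  refine le_trans (rpow_bounds (by positivity) h1 h2).2 ?_
  have hva : (0:ℝ) ≤ v ^ a := Real.rpow_nonneg hv.le a
  refine max_le ?_ ?_
  · rw [div_rpow_eq hv.le two_pos a]
    exact mul_le_mul_of_nonneg_right (le_max_left _ _) hva
  · calc v ^ a = 1 * v ^ a := (one_mul _).symm
      _ ≤ max ((2:ℝ) ^ (-a)) 1 * v ^ a :=
        mul_le_mul_of_nonneg_right (le_max_right _ _) hva

lemma rpow_comp {a K x y : ℝ} (hx : 0 < x) (hy : 0 < y) (hK : 1 ≤ K)
    (h1 : x ≤ K * y) (h2 : y ≤ K * x) : x ^ a ≤ K ^ |a| * y ^ a := by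
  have hK0 : (0:ℝ) < K := one_pos.trans_le hK
  rcases le_or_gt 0 a with ha | ha
  · rw [abs_of_nonneg ha]
    calc x ^ a ≤ (K * y) ^ a := Real.rpow_le_rpow hx.le h1 ha
      _ = K ^ a * y ^ a := Real.mul_rpow hK0.le hy.le
  · rw [abs_of_neg ha]
    have hyx : y / K ≤ x := by
      rw [div_le_iff₀ hK0]
      calc y ≤ K * x := h2
        _ = x * K := mul_comm _ _
    calc x ^ a ≤ (y / K) ^ a := Real.rpow_le_rpow_of_nonpos (by positivity) hyx ha.le
      _ = K ^ (-a) * y ^ a := div_rpow_eq hy.le hK0 a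

lemma integrableOn_rpow {a : ℝ} (ha : -1 < a) (u v : ℝ) :
    IntegrableOn (fun s : ℝ => s ^ a) (Set.Ioo u v) := by
  rcases le_or_gt u v with h | h
  · exact (intervalIntegrable_iff_integrableOn_Ioo_of_le h).mp
      (intervalIntegral.intervalIntegrable_rpow' ha)
  · rw [Set.Ioo_eq_empty (not_lt.mpr h.le)]
    exact integrableOn_empty

lemma integrableOn_rpow_mirror {b : ℝ} (hb : -1 < b) (u v : ℝ) :
    IntegrableOn (fun s : ℝ => (π - s) ^ b) (Set.Ioo u v) := by
  rcases le_or_gt u v with h | h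
  · have h1 : IntervalIntegrable (fun x : ℝ => x ^ b) volume (π - u) (π - v) :=
      intervalIntegral.intervalIntegrable_rpow' hb
    have h2 := h1.comp_sub_left π
    simp only [sub_sub_cancel] at h2
    exact (intervalIntegrable_iff_integrableOn_Ioo_of_le h).mp h2
  · rw [Set.Ioo_eq_empty (not_lt.mpr h.le)]
    exact integrableOn_empty

lemma const_setIntegral {m v : ℝ} (h : m ≤ v) (c : ℝ) :
    ∫ _ in Set.Ioo m v, c = (v - m) * c := by
  rw [setIntegral_const, measureReal_def, Real.volume_Ioo, ENNReal.toReal_ofReal (by linarith), smul_eq_mul]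

lemma intA {a : ℝ} (ha : -1 < a) : ∃ c C : ℝ, 0 < c ∧ 0 < C ∧ ∀ u v : ℝ, 0 ≤ u → u ≤ v →
    c * ((v - u) * v ^ a) ≤ (∫ s in Set.Ioo u v, s ^ a) ∧
    (∫ s in Set.Ioo u v, s ^ a) ≤ C * ((v - u) * v ^ a) := by
  have ha1 : (0:ℝ) < a + 1 := by linarith
  refine ⟨min ((2:ℝ) ^ (-a)) 1 / 2, max (max ((2:ℝ) ^ (-a)) 1) (2 / (a + 1)),
    by positivity, by positivity, ?_⟩
  intro u v hu huv
  rcases eq_or_lt_of_le huv with rfl | hlt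
  · simp
  have hv : (0:ℝ) < v := hu.trans_lt hlt
  set m := max u (v / 2) with hm
  have hm1 : u ≤ m := le_max_left _ _
  have hm2 : v / 2 ≤ m := le_max_right _ _
  have hm3 : m ≤ v := max_le hlt.le (by linarith)
  have hvm : (v - u) / 2 ≤ v - m := by
    have : m ≤ (u + v) / 2 := max_le (by linarith) (by linarith)
    linarith
  have hnn : ∀ p : ℝ, 0 ≤ p → (0 ≤ᵐ[volume.restrict (Set.Ioo p v)] fun s : ℝ => s ^ a) := by
    intro p hp
    refine (ae_restrict_iff' measurableSet_Ioo).mpr (ae_of_all _ fun s hs => ?_)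
    exact Real.rpow_nonneg (hp.trans hs.1.le) a
  constructor
  · have key1 : ∀ s ∈ Set.Ioo m v, min ((2:ℝ) ^ (-a)) 1 * v ^ a ≤ s ^ a := by
      intro s hs
      exact rpow_half_lower hv (hm2.trans hs.1.le) hs.2.le
    have h1' := mul_le_mul_of_nonneg_right hvm
      (by positivity : (0:ℝ) ≤ min ((2:ℝ) ^ (-a)) 1 * v ^ a)
    calc min ((2:ℝ) ^ (-a)) 1 / 2 * ((v - u) * v ^ a)
        = (v - u) / 2 * (min ((2:ℝ) ^ (-a)) 1 * v ^ a) := by ring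
      _ ≤ (v - m) * (min ((2:ℝ) ^ (-a)) 1 * v ^ a) := h1'
      _ = ∫ _ in Set.Ioo m v, min ((2:ℝ) ^ (-a)) 1 * v ^ a := (const_setIntegral hm3 _).symm
      _ ≤ ∫ s in Set.Ioo m v, s ^ a :=
          setIntegral_mono_on (integrableOn_const measure_Ioo_lt_top.ne)
            (integrableOn_rpow ha m v) measurableSet_Ioo key1
      _ ≤ ∫ s in Set.Ioo u v, s ^ a :=
          setIntegral_mono_set (integrableOn_rpow ha u v) (hnn u hu)
            ((Set.Ioo_subset_Ioo_left hm1).eventuallyLE)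
  · rcases le_or_gt u (v / 2) with hc | hc
    · have hint : (∫ s in Set.Ioo 0 v, s ^ a) = v ^ (a + 1) / (a + 1) := by
        rw [← MeasureTheory.integral_Ioc_eq_integral_Ioo,
          ← intervalIntegral.integral_of_le hv.le,
          integral_rpow (Or.inl ha)]
        rw [Real.zero_rpow (by linarith : a + 1 ≠ 0)]
        ring
      calc (∫ s in Set.Ioo u v, s ^ a)
          ≤ ∫ s in Set.Ioo 0 v, s ^ a :=
            setIntegral_mono_set (integrableOn_rpow ha 0 v) (hnn 0 le_rfl)
              ((Set.Ioo_subset_Ioo_left hu).eventuallyLE)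
        _ = v ^ (a + 1) / (a + 1) := hint
        _ = v * v ^ a / (a + 1) := by
            rw [Real.rpow_add_one hv.ne' a]; ring
        _ ≤ 2 / (a + 1) * ((v - u) * v ^ a) := by
            rw [div_le_iff₀ ha1, div_mul_eq_mul_div, div_mul_eq_mul_div,
              mul_div_cancel_right₀ _ ha1.ne']
            nlinarith [Real.rpow_nonneg hv.le a]
        _ ≤ max (max ((2:ℝ) ^ (-a)) 1) (2 / (a + 1)) * ((v - u) * v ^ a) := by
            have : (0:ℝ) ≤ (v - u) * v ^ a := by
              have := Real.rpow_nonneg hv.le a; nlinarith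
            exact mul_le_mul_of_nonneg_right (le_max_right _ _) this
    · have key2 : ∀ s ∈ Set.Ioo u v, s ^ a ≤ max ((2:ℝ) ^ (-a)) 1 * v ^ a := by
        intro s hs
        exact rpow_half_upper hv (by linarith [hs.1]) hs.2.le
      calc (∫ s in Set.Ioo u v, s ^ a)
          ≤ ∫ _ in Set.Ioo u v, max ((2:ℝ) ^ (-a)) 1 * v ^ a :=
            setIntegral_mono_on (integrableOn_rpow ha u v)
              (integrableOn_const measure_Ioo_lt_top.ne) measurableSet_Ioo key2
        _ = (v - u) * (max ((2:ℝ) ^ (-a)) 1 * v ^ a) := const_setIntegral huv _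
        _ = max ((2:ℝ) ^ (-a)) 1 * ((v - u) * v ^ a) := by ring
        _ ≤ max (max ((2:ℝ) ^ (-a)) 1) (2 / (a + 1)) * ((v - u) * v ^ a) := by
            have : (0:ℝ) ≤ (v - u) * v ^ a := by
              have := Real.rpow_nonneg hv.le a; nlinarith
            exact mul_le_mul_of_nonneg_right (le_max_left _ _) this

lemma intA' {b : ℝ} (hb : -1 < b) : ∃ c C : ℝ, 0 < c ∧ 0 < C ∧
    ∀ u v : ℝ, 0 ≤ u → u ≤ v → v ≤ π →
    c * ((v - u) * (π - u) ^ b) ≤ (∫ s in Set.Ioo u v, (π - s) ^ b) ∧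
    (∫ s in Set.Ioo u v, (π - s) ^ b) ≤ C * ((v - u) * (π - u) ^ b) := by
  obtain ⟨c, C, hc, hC, H⟩ := intA hb
  refine ⟨c, C, hc, hC, fun u v hu huv hv => ?_⟩
  have hkey : (∫ s in Set.Ioo u v, (π - s) ^ b) = ∫ s in Set.Ioo (π - v) (π - u), s ^ b := by
    rw [← MeasureTheory.integral_Ioc_eq_integral_Ioo, ← intervalIntegral.integral_of_le huv,
      intervalIntegral.integral_comp_sub_left (fun s : ℝ => s ^ b) π,
      intervalIntegral.integral_of_le (by linarith), MeasureTheory.integral_Ioc_eq_integral_Ioo]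
  have h2 := H (π - v) (π - u) (by linarith) (by linarith)
  have h3 : π - u - (π - v) = v - u := by ring
  rw [h3] at h2
  rw [hkey]
  exact h2


lemma integrableOn_w {a b : ℝ} (ha : -1 < a) (hb : -1 < b) :
    IntegrableOn (fun s : ℝ => s ^ a * (π - s) ^ b) (Set.Ioo 0 π) := by
  have hmeas : AEStronglyMeasurable (fun s : ℝ => s ^ a * (π - s) ^ b)
      (volume.restrict (Set.Ioo 0 π)) := by
    refine ContinuousOn.aestronglyMeasurable ?_ measurableSet_Ioo
    refine ContinuousOn.mul ?_ ?_
    · exact continuousOn_id.rpow_const fun x hx => Or.inl (ne_of_gt hx.1)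
    · refine (continuousOn_const.sub continuousOn_id).rpow_const fun x hx => Or.inl ?_
      have := hx.2; simp only [Pi.sub_apply, id]; intro h; linarith [sub_eq_zero.mp h]
  set Ma := max ((π / 2 : ℝ) ^ a) (π ^ a) with hMa
  set Mb := max ((π / 2 : ℝ) ^ b) (π ^ b) with hMb
  have hMa0 : 0 ≤ Ma := le_trans (Real.rpow_nonneg pi_pos.le a) (le_max_right _ _)
  have hMb0 : 0 ≤ Mb := le_trans (Real.rpow_nonneg pi_pos.le b) (le_max_right _ _)
  refine Integrable.mono' (g := fun s : ℝ => Mb * s ^ a + Ma * (π - s) ^ b)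
    (((integrableOn_rpow ha 0 π).const_mul Mb).add
      ((integrableOn_rpow_mirror hb 0 π).const_mul Ma)) hmeas ?_
  refine (ae_restrict_iff' measurableSet_Ioo).mpr (ae_of_all _ fun s hs => ?_)
  have h0s : (0:ℝ) < s := hs.1
  have hsπ : s < π := hs.2
  have hπs : (0:ℝ) < π - s := by linarith
  rw [Real.norm_eq_abs, abs_of_nonneg (by positivity)]
  rcases le_total s (π / 2) with h | h
  · have h1 : (π - s) ^ b ≤ Mb := (rpow_bounds (by positivity) (by linarith) (by linarith)).2
    have h2 : s ^ a * (π - s) ^ b ≤ Mb * s ^ a := by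
      calc s ^ a * (π - s) ^ b ≤ s ^ a * Mb :=
            mul_le_mul_of_nonneg_left h1 (Real.rpow_nonneg h0s.le a)
        _ = Mb * s ^ a := mul_comm _ _
    have h3 : (0:ℝ) ≤ Ma * (π - s) ^ b := mul_nonneg hMa0 (Real.rpow_nonneg hπs.le b)
    show s ^ a * (π - s) ^ b ≤ Mb * s ^ a + Ma * (π - s) ^ b
    linarith
  · have h1 : s ^ a ≤ Ma := (rpow_bounds (by positivity) (by linarith) (by linarith)).2
    have h2 : s ^ a * (π - s) ^ b ≤ Ma * (π - s) ^ b :=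
      mul_le_mul_of_nonneg_right h1 (Real.rpow_nonneg hπs.le b)
    have h3 : (0:ℝ) ≤ Mb * s ^ a := mul_nonneg hMb0 (Real.rpow_nonneg h0s.le a)
    show s ^ a * (π - s) ^ b ≤ Mb * s ^ a + Ma * (π - s) ^ b
    linarith

lemma intB {a b : ℝ} (ha : -1 < a) (hb : -1 < b) : ∃ c C : ℝ, 0 < c ∧ 0 < C ∧
    ∀ u v : ℝ, 0 ≤ u → u ≤ v → v ≤ π →
    c * ((v - u) * v ^ a * (π - u) ^ b) ≤ (∫ s in Set.Ioo u v, s ^ a * (π - s) ^ b) ∧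
    (∫ s in Set.Ioo u v, s ^ a * (π - s) ^ b) ≤ C * ((v - u) * v ^ a * (π - u) ^ b) := by
  obtain ⟨cA, CA, hcA, hCA, HA⟩ := intA ha
  obtain ⟨cB, CB, hcB, hCB, HB⟩ := intA' hb
  set ca0 := min ((2:ℝ) ^ (-a)) 1 with hca0
  set Ca0 := max ((2:ℝ) ^ (-a)) 1 with hCa0
  set cb0 := min ((2:ℝ) ^ (-b)) 1 with hcb0
  set Cb0 := max ((2:ℝ) ^ (-b)) 1 with hCb0
  have hca0p : 0 < ca0 := lt_min (by positivity) one_pos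
  have hcb0p : 0 < cb0 := lt_min (by positivity) one_pos
  have hCa0p : 0 < Ca0 := lt_of_lt_of_le one_pos (le_max_right _ _)
  have hCb0p : 0 < Cb0 := lt_of_lt_of_le one_pos (le_max_right _ _)
  refine ⟨cA * ca0 * cb0 / 2, (CA + CB) * Ca0 * Cb0, by positivity, by positivity, ?_⟩
  intro u v hu huv hv
  rcases eq_or_lt_of_le huv with rfl | hlt
  · simp
  have hv0 : (0:ℝ) < v := hu.trans_lt hlt
  have hπu : (0:ℝ) < π - u := by linarith
  set m := (u + v) / 2 with hm
  have hum : u < m := by rw [hm]; linarith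
  have hmv : m < v := by rw [hm]; linarith
  have hm2 : v / 2 ≤ m := by rw [hm]; linarith
  have hm3 : m ≤ v := hmv.le
  have hπm : (π - u) / 2 ≤ π - m := by rw [hm]; linarith
  have hπm2 : π - m ≤ π - u := by rw [hm]; linarith
  have hmu : m - u = (v - u) / 2 := by rw [hm]; ring
  -- integrability
  have hW : ∀ p q : ℝ, 0 ≤ p → q ≤ π →
      IntegrableOn (fun s : ℝ => s ^ a * (π - s) ^ b) (Set.Ioo p q) :=
    fun p q hp hq => (integrableOn_w ha hb).mono_set (Set.Ioo_subset_Ioo hp hq)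
  have hwnn : (0:ℝ → ℝ) ≤ᵐ[volume.restrict (Set.Ioo u v)] fun s : ℝ => s ^ a * (π - s) ^ b := by
    refine (ae_restrict_iff' measurableSet_Ioo).mpr (ae_of_all _ fun s hs => ?_)
    have h1 : (0:ℝ) ≤ s := hu.trans hs.1.le
    have h2 : (0:ℝ) ≤ π - s := by have := hs.2; linarith
    exact mul_nonneg (Real.rpow_nonneg h1 a) (Real.rpow_nonneg h2 b)
  constructor
  · -- lower bound
    have keyL : ∀ s ∈ Set.Ioo u m, cb0 * (π - u) ^ b * s ^ a ≤ s ^ a * (π - s) ^ b := by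
      intro s hs
      have h1 : cb0 * (π - u) ^ b ≤ (π - s) ^ b :=
        rpow_half_lower hπu (by linarith [hs.2]) (by linarith [hs.1])
      calc cb0 * (π - u) ^ b * s ^ a = s ^ a * (cb0 * (π - u) ^ b) := by ring
        _ ≤ s ^ a * (π - s) ^ b :=
          mul_le_mul_of_nonneg_left h1 (Real.rpow_nonneg (hu.trans hs.1.le) a)
    have hma : ca0 * v ^ a ≤ m ^ a := rpow_half_lower hv0 hm2 hm3
    have step1 : cA * ((m - u) * (ca0 * v ^ a)) ≤ cA * ((m - u) * m ^ a) := by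
      have h0 : (0:ℝ) ≤ m - u := by linarith
      have := mul_le_mul_of_nonneg_left hma h0
      exact mul_le_mul_of_nonneg_left this hcA.le
    have step2 : cA * ((m - u) * m ^ a) ≤ ∫ s in Set.Ioo u m, s ^ a := (HA u m hu hum.le).1
    calc cA * ca0 * cb0 / 2 * ((v - u) * v ^ a * (π - u) ^ b)
        = cb0 * (π - u) ^ b * (cA * ((m - u) * (ca0 * v ^ a))) := by rw [hmu]; ring
      _ ≤ cb0 * (π - u) ^ b * (∫ s in Set.Ioo u m, s ^ a) := by
          refine mul_le_mul_of_nonneg_left (step1.trans step2) ?_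
          positivity
      _ = ∫ s in Set.Ioo u m, cb0 * (π - u) ^ b * s ^ a := by
          rw [MeasureTheory.integral_const_mul]
      _ ≤ ∫ s in Set.Ioo u m, s ^ a * (π - s) ^ b :=
          setIntegral_mono_on ((integrableOn_rpow ha u m).const_mul _)
            (hW u m hu (by linarith)) measurableSet_Ioo keyL
      _ ≤ ∫ s in Set.Ioo u v, s ^ a * (π - s) ^ b :=
          setIntegral_mono_set (hW u v hu hv) hwnn
            ((Set.Ioo_subset_Ioo_right hm3).eventuallyLE)
  · -- upper bound
    have hsplit : (∫ s in Set.Ioo u v, s ^ a * (π - s) ^ b) =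
        (∫ s in Set.Ioo u m, s ^ a * (π - s) ^ b) + ∫ s in Set.Ioo m v, s ^ a * (π - s) ^ b := by
      rw [← Set.Ioo_union_Ico_eq_Ioo hum hmv.le,
        setIntegral_union ?hd measurableSet_Ico (hW u m hu (by linarith)) ?hi,
        MeasureTheory.integral_Ico_eq_integral_Ioo]
      case hd => exact Set.disjoint_left.mpr fun s hs hs' => absurd hs.2 (not_lt.mpr hs'.1)
      case hi => exact (integrableOn_Ico_iff_integrableOn_Ioo).mpr (hW m v (by linarith) hv)
    have keyU1 : ∀ s ∈ Set.Ioo u m, s ^ a * (π - s) ^ b ≤ Cb0 * (π - u) ^ b * s ^ a := by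
      intro s hs
      have h1 : (π - s) ^ b ≤ Cb0 * (π - u) ^ b :=
        rpow_half_upper hπu (by linarith [hs.2]) (by linarith [hs.1])
      calc s ^ a * (π - s) ^ b ≤ s ^ a * (Cb0 * (π - u) ^ b) :=
            mul_le_mul_of_nonneg_left h1 (Real.rpow_nonneg (hu.trans hs.1.le) a)
        _ = Cb0 * (π - u) ^ b * s ^ a := by ring
    have keyU2 : ∀ s ∈ Set.Ioo m v, s ^ a * (π - s) ^ b ≤ Ca0 * v ^ a * (π - s) ^ b := by
      intro s hs
      have h1 : s ^ a ≤ Ca0 * v ^ a :=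
        rpow_half_upper hv0 (by linarith [hs.1]) hs.2.le
      have h2 : (0:ℝ) ≤ π - s := by have := hs.2; linarith
      exact mul_le_mul_of_nonneg_right h1 (Real.rpow_nonneg h2 b)
    have bound1 : (∫ s in Set.Ioo u m, s ^ a * (π - s) ^ b) ≤
        CA * Ca0 * Cb0 * ((v - u) * v ^ a * (π - u) ^ b) := by
      calc (∫ s in Set.Ioo u m, s ^ a * (π - s) ^ b)
          ≤ ∫ s in Set.Ioo u m, Cb0 * (π - u) ^ b * s ^ a :=
            setIntegral_mono_on (hW u m hu (by linarith))
              ((integrableOn_rpow ha u m).const_mul _) measurableSet_Ioo keyU1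
        _ = Cb0 * (π - u) ^ b * ∫ s in Set.Ioo u m, s ^ a := by
            rw [MeasureTheory.integral_const_mul]
        _ ≤ Cb0 * (π - u) ^ b * (CA * ((m - u) * m ^ a)) := by
            refine mul_le_mul_of_nonneg_left (HA u m hu hum.le).2 ?_
            positivity
        _ ≤ Cb0 * (π - u) ^ b * (CA * ((v - u) * (Ca0 * v ^ a))) := by
            refine mul_le_mul_of_nonneg_left (mul_le_mul_of_nonneg_left ?_ hCA.le) (by positivity)
            have hmva : m ^ a ≤ Ca0 * v ^ a := rpow_half_upper hv0 hm2 hm3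
            have h0 : (0:ℝ) ≤ m - u := by linarith
            have h1 : m - u ≤ v - u := by linarith
            calc (m - u) * m ^ a ≤ (m - u) * (Ca0 * v ^ a) :=
                  mul_le_mul_of_nonneg_left hmva h0
              _ ≤ (v - u) * (Ca0 * v ^ a) :=
                  mul_le_mul_of_nonneg_right h1 (by positivity)
        _ = CA * Ca0 * Cb0 * ((v - u) * v ^ a * (π - u) ^ b) := by ring
    have bound2 : (∫ s in Set.Ioo m v, s ^ a * (π - s) ^ b) ≤
        CB * Ca0 * Cb0 * ((v - u) * v ^ a * (π - u) ^ b) := by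
      calc (∫ s in Set.Ioo m v, s ^ a * (π - s) ^ b)
          ≤ ∫ s in Set.Ioo m v, Ca0 * v ^ a * (π - s) ^ b :=
            setIntegral_mono_on (hW m v (by linarith) hv)
              ((integrableOn_rpow_mirror hb m v).const_mul _) measurableSet_Ioo keyU2
        _ = Ca0 * v ^ a * ∫ s in Set.Ioo m v, (π - s) ^ b := by
            rw [MeasureTheory.integral_const_mul]
        _ ≤ Ca0 * v ^ a * (CB * ((v - m) * (π - m) ^ b)) := by
            refine mul_le_mul_of_nonneg_left (HB m v (by linarith) hmv.le hv).2 ?_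
            positivity
        _ ≤ Ca0 * v ^ a * (CB * ((v - u) * (Cb0 * (π - u) ^ b))) := by
            refine mul_le_mul_of_nonneg_left (mul_le_mul_of_nonneg_left ?_ hCB.le) (by positivity)
            have hmvb : (π - m) ^ b ≤ Cb0 * (π - u) ^ b := rpow_half_upper hπu hπm hπm2
            have h0 : (0:ℝ) ≤ v - m := by linarith
            have h1 : v - m ≤ v - u := by linarith
            calc (v - m) * (π - m) ^ b ≤ (v - m) * (Cb0 * (π - u) ^ b) :=
                  mul_le_mul_of_nonneg_left hmvb h0
              _ ≤ (v - u) * (Cb0 * (π - u) ^ b) :=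
                  mul_le_mul_of_nonneg_right h1 (by positivity)
        _ = CB * Ca0 * Cb0 * ((v - u) * v ^ a * (π - u) ^ b) := by ring
    rw [hsplit]
    calc (∫ s in Set.Ioo u m, s ^ a * (π - s) ^ b) + ∫ s in Set.Ioo m v, s ^ a * (π - s) ^ b
        ≤ CA * Ca0 * Cb0 * ((v - u) * v ^ a * (π - u) ^ b)
          + CB * Ca0 * Cb0 * ((v - u) * v ^ a * (π - u) ^ b) := add_le_add bound1 bound2
      _ = (CA + CB) * Ca0 * Cb0 * ((v - u) * v ^ a * (π - u) ^ b) := by ring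


lemma sin_half_bounds {s : ℝ} (h0 : 0 < s) (hπ : s ≤ π) :
    s / π ≤ Real.sin (s / 2) ∧ Real.sin (s / 2) ≤ s / 2 := by
  constructor
  · have := Real.mul_le_sin (x := s / 2) (by linarith) (by linarith)
    calc s / π = 2 / π * (s / 2) := by field_simp
      _ ≤ Real.sin (s / 2) := this
  · exact (Real.sin_lt (by linarith)).le

lemma gw_bounds (a b : ℝ) : ∃ c C : ℝ, 0 < c ∧ 0 < C ∧ ∀ s ∈ Set.Ioo (0:ℝ) π,
    c * (s ^ a * (π - s) ^ b) ≤ Real.sin (s / 2) ^ a * Real.cos (s / 2) ^ b ∧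
    Real.sin (s / 2) ^ a * Real.cos (s / 2) ^ b ≤ C * (s ^ a * (π - s) ^ b) := by
  set c1 := min ((π:ℝ) ^ (-a)) ((2:ℝ) ^ (-a)) with hc1
  set C1 := max ((π:ℝ) ^ (-a)) ((2:ℝ) ^ (-a)) with hC1
  set c2 := min ((π:ℝ) ^ (-b)) ((2:ℝ) ^ (-b)) with hc2
  set C2 := max ((π:ℝ) ^ (-b)) ((2:ℝ) ^ (-b)) with hC2
  have hπ0 := pi_pos
  have hc1p : 0 < c1 := lt_min (by positivity) (by positivity)
  have hc2p : 0 < c2 := lt_min (by positivity) (by positivity)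
  have hC1p : 0 < C1 := lt_of_lt_of_le (by positivity) (le_max_left _ _)
  have hC2p : 0 < C2 := lt_of_lt_of_le (by positivity) (le_max_left _ _)
  refine ⟨c1 * c2, C1 * C2, by positivity, by positivity, fun s hs => ?_⟩
  obtain ⟨h0s, hsπ⟩ := hs
  have hπs : (0:ℝ) < π - s := by linarith
  have hsin := sin_half_bounds h0s hsπ.le
  have hcoseq : Real.cos (s / 2) = Real.sin ((π - s) / 2) := by
    rw [← Real.sin_pi_div_two_sub]
    congr 1
    ring
  have hcos : (π - s) / π ≤ Real.cos (s / 2) ∧ Real.cos (s / 2) ≤ (π - s) / 2 := by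
    rw [hcoseq]
    exact sin_half_bounds hπs (by linarith)
  -- bounds on sin(s/2)^a
  have hb1 := rpow_bounds (a := a) (by positivity : (0:ℝ) < s / π) hsin.1 hsin.2
  have hb2 := rpow_bounds (a := b) (by positivity : (0:ℝ) < (π - s) / π) hcos.1 hcos.2
  have e1 : (s / π) ^ a = (π:ℝ) ^ (-a) * s ^ a := div_rpow_eq h0s.le hπ0 a
  have e2 : (s / 2) ^ a = (2:ℝ) ^ (-a) * s ^ a := div_rpow_eq h0s.le two_pos a
  have e3 : ((π - s) / π) ^ b = (π:ℝ) ^ (-b) * (π - s) ^ b := div_rpow_eq hπs.le hπ0 b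
  have e4 : ((π - s) / 2) ^ b = (2:ℝ) ^ (-b) * (π - s) ^ b := div_rpow_eq hπs.le two_pos b
  have hsa : (0:ℝ) ≤ s ^ a := Real.rpow_nonneg h0s.le a
  have hsb : (0:ℝ) ≤ (π - s) ^ b := Real.rpow_nonneg hπs.le b
  have low1 : c1 * s ^ a ≤ Real.sin (s / 2) ^ a := by
    refine le_trans (le_min ?_ ?_) hb1.1
    · rw [e1]; exact mul_le_mul_of_nonneg_right (min_le_left _ _) hsa
    · rw [e2]; exact mul_le_mul_of_nonneg_right (min_le_right _ _) hsa
  have up1 : Real.sin (s / 2) ^ a ≤ C1 * s ^ a := by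
    refine le_trans hb1.2 (max_le ?_ ?_)
    · rw [e1]; exact mul_le_mul_of_nonneg_right (le_max_left _ _) hsa
    · rw [e2]; exact mul_le_mul_of_nonneg_right (le_max_right _ _) hsa
  have low2 : c2 * (π - s) ^ b ≤ Real.cos (s / 2) ^ b := by
    refine le_trans (le_min ?_ ?_) hb2.1
    · rw [e3]; exact mul_le_mul_of_nonneg_right (min_le_left _ _) hsb
    · rw [e4]; exact mul_le_mul_of_nonneg_right (min_le_right _ _) hsb
  have up2 : Real.cos (s / 2) ^ b ≤ C2 * (π - s) ^ b := by
    refine le_trans hb2.2 (max_le ?_ ?_)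
    · rw [e3]; exact mul_le_mul_of_nonneg_right (le_max_left _ _) hsb
    · rw [e4]; exact mul_le_mul_of_nonneg_right (le_max_right _ _) hsb
  have hsinnn : (0:ℝ) ≤ Real.sin (s / 2) ^ a :=
    Real.rpow_nonneg (le_trans (by positivity) hsin.1) a
  constructor
  · calc c1 * c2 * (s ^ a * (π - s) ^ b) = (c1 * s ^ a) * (c2 * (π - s) ^ b) := by ring
      _ ≤ Real.sin (s / 2) ^ a * Real.cos (s / 2) ^ b :=
        mul_le_mul low1 low2 (by positivity) hsinnn
  · calc Real.sin (s / 2) ^ a * Real.cos (s / 2) ^ b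
        ≤ (C1 * s ^ a) * (C2 * (π - s) ^ b) :=
          mul_le_mul up1 up2 (Real.rpow_nonneg (le_trans (by positivity) hcos.1) b)
            (by positivity)
      _ = C1 * C2 * (s ^ a * (π - s) ^ b) := by ring

lemma integrableOn_g {a b : ℝ} (ha : -1 < a) (hb : -1 < b) :
    IntegrableOn (fun s : ℝ => Real.sin (s / 2) ^ a * Real.cos (s / 2) ^ b) (Set.Ioo 0 π) := by
  obtain ⟨c, C, hc, hC, H⟩ := gw_bounds a b
  have hmeas : AEStronglyMeasurable (fun s : ℝ => Real.sin (s / 2) ^ a * Real.cos (s / 2) ^ b)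
      (volume.restrict (Set.Ioo 0 π)) := by
    have hcs : Continuous fun s : ℝ => Real.sin (s / 2) := by fun_prop
    have hcc : Continuous fun s : ℝ => Real.cos (s / 2) := by fun_prop
    refine ContinuousOn.aestronglyMeasurable (ContinuousOn.mul ?_ ?_) measurableSet_Ioo
    · exact hcs.continuousOn.rpow_const fun x hx => Or.inl (ne_of_gt
        (Real.sin_pos_of_pos_of_lt_pi (by linarith [hx.1]) (by linarith [hx.2, pi_pos])))
    · exact hcc.continuousOn.rpow_const fun x hx => Or.inl (ne_of_gt
        (Real.cos_pos_of_mem_Ioo (Set.mem_Ioo.mpr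
          ⟨by linarith [hx.1, pi_pos], by linarith [hx.2]⟩)))
  refine Integrable.mono' (((integrableOn_w ha hb).const_mul C)) hmeas ?_
  refine (ae_restrict_iff' measurableSet_Ioo).mpr (ae_of_all _ fun s hs => ?_)
  have h1 := (H s hs).1
  have h2 := (H s hs).2
  have hnn : (0:ℝ) ≤ Real.sin (s / 2) ^ a * Real.cos (s / 2) ^ b := by
    have := mul_pos hc (mul_pos (Real.rpow_pos_of_pos hs.1 a)
      (Real.rpow_pos_of_pos (by linarith [hs.2] : (0:ℝ) < π - s) b))
    linarith
  rw [Real.norm_eq_abs, abs_of_nonneg hnn]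
  exact h2

lemma jacobi_trunc (α β x y : ℝ) :
    jacobiMeasure α β (Set.Ioo x y) = jacobiMeasure α β (Set.Ioo (max x 0) (min y π)) := by
  have hset : Set.Ioo x y ∩ Set.Ioo 0 π = Set.Ioo (max x 0) (min y π) ∩ Set.Ioo 0 π := by
    simp [Set.Ioo_inter_Ioo, sup_assoc, inf_assoc]
  rw [jacobiMeasure, withDensity_apply _ measurableSet_Ioo, withDensity_apply _ measurableSet_Ioo,
    Measure.restrict_restrict measurableSet_Ioo, Measure.restrict_restrict measurableSet_Ioo,
    hset]

lemma jacobi_val {α β : ℝ} (ha : -1 < 2 * α + 1) (hb : -1 < 2 * β + 1) {u v : ℝ}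
    (hu : 0 ≤ u) (hv : v ≤ π) :
    (jacobiMeasure α β (Set.Ioo u v)).toReal =
      ∫ s in Set.Ioo u v, Real.sin (s / 2) ^ (2 * α + 1) * Real.cos (s / 2) ^ (2 * β + 1) := by
  have hsub : Set.Ioo u v ⊆ Set.Ioo (0:ℝ) π := Set.Ioo_subset_Ioo hu hv
  have hint : IntegrableOn
      (fun s : ℝ => Real.sin (s / 2) ^ (2 * α + 1) * Real.cos (s / 2) ^ (2 * β + 1))
      (Set.Ioo u v) := (integrableOn_g ha hb).mono_set hsub
  have hnn : (0:ℝ → ℝ) ≤ᵐ[volume.restrict (Set.Ioo u v)]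
      fun s : ℝ => Real.sin (s / 2) ^ (2 * α + 1) * Real.cos (s / 2) ^ (2 * β + 1) := by
    refine (ae_restrict_iff' measurableSet_Ioo).mpr (ae_of_all _ fun s hs => ?_)
    have h1 : (0:ℝ) ≤ Real.sin (s / 2) :=
      Real.sin_nonneg_of_nonneg_of_le_pi (by linarith [(hsub hs).1])
        (by linarith [(hsub hs).2, pi_pos])
    have h2 : (0:ℝ) ≤ Real.cos (s / 2) := by
      have hx1 := (hsub hs).1; have hx2 := (hsub hs).2
      exact (Real.cos_pos_of_mem_Ioo (Set.mem_Ioo.mpr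
        ⟨by linarith [pi_pos], by linarith⟩)).le
    exact mul_nonneg (Real.rpow_nonneg h1 _) (Real.rpow_nonneg h2 _)
  rw [jacobiMeasure, withDensity_apply _ measurableSet_Ioo,
    Measure.restrict_restrict measurableSet_Ioo,
    Set.inter_eq_left.mpr hsub,
    ← MeasureTheory.ofReal_integral_eq_lintegral_ofReal hint hnn,
    ENNReal.toReal_ofReal]
  exact setIntegral_nonneg measurableSet_Ioo fun s hs => by
    have h1 : (0:ℝ) ≤ Real.sin (s / 2) :=
      Real.sin_nonneg_of_nonneg_of_le_pi (by linarith [(hsub hs).1])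
        (by linarith [(hsub hs).2, pi_pos])
    have h2 : (0:ℝ) ≤ Real.cos (s / 2) := by
      have hx1 := (hsub hs).1; have hx2 := (hsub hs).2
      exact (Real.cos_pos_of_mem_Ioo (Set.mem_Ioo.mpr
        ⟨by linarith [pi_pos], by linarith⟩)).le
    exact mul_nonneg (Real.rpow_nonneg h1 _) (Real.rpow_nonneg h2 _)

end Stmt16Aux

theorem stmt16 (α β : ℝ) (hα : -1 < α) (hβ : -1 < β) :
    ∃ c C : ℝ, 0 < c ∧ 0 < C ∧ ∀ θ ∈ Set.Ioo (0 : ℝ) π, ∀ φ ∈ Set.Ioo (0 : ℝ) π,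
      c * (|θ - φ| * (θ + φ) ^ (2 * α + 1) * (2 * π - θ - φ) ^ (2 * β + 1))
          ≤ ((jacobiMeasure α β) (Set.Ioo (θ - |θ - φ|) (θ + |θ - φ|))).toReal ∧
      ((jacobiMeasure α β) (Set.Ioo (θ - |θ - φ|) (θ + |θ - φ|))).toReal
          ≤ C * (|θ - φ| * (θ + φ) ^ (2 * α + 1) * (2 * π - θ - φ) ^ (2 * β + 1)) := by
  have ha : (-1:ℝ) < 2 * α + 1 := by linarith
  have hb : (-1:ℝ) < 2 * β + 1 := by linarith
  obtain ⟨cB, CB, hcB, hCB, HB⟩ := Stmt16Aux.intB ha hb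
  obtain ⟨cg, Cg, hcg, hCg, Hg⟩ := Stmt16Aux.gw_bounds (2 * α + 1) (2 * β + 1)
  have h4a : (0:ℝ) < (4:ℝ) ^ |2 * α + 1| := by positivity
  have h4b : (0:ℝ) < (4:ℝ) ^ |2 * β + 1| := by positivity
  refine ⟨cg * cB / (2 * ((4:ℝ) ^ |2 * α + 1| * (4:ℝ) ^ |2 * β + 1|)),
    Cg * CB * (2 * ((4:ℝ) ^ |2 * α + 1| * (4:ℝ) ^ |2 * β + 1|)), by positivity, by positivity, ?_⟩
  intro θ hθ φ hφ
  by_cases hθφ : θ = φ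
  · subst hθφ
    simp
  obtain ⟨hθ0, hθπ⟩ := hθ
  obtain ⟨hφ0, hφπ⟩ := hφ
  have hπ0 := pi_pos
  set r := |θ - φ| with hrdef
  have habs1 : θ - φ ≤ r := le_abs_self _
  have habs2 : φ - θ ≤ r := by rw [hrdef, abs_sub_comm]; exact le_abs_self _
  have hr0 : 0 < r := abs_pos.mpr (sub_ne_zero.mpr hθφ)
  have hrπ : r < π := by rw [hrdef]; exact abs_sub_lt_iff.mpr ⟨by linarith, by linarith⟩
  have hrle : r ≤ θ + φ := by rw [hrdef]; exact abs_sub_le_iff.mpr ⟨by linarith, by linarith⟩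
  have hrle' : r ≤ (π - θ) + (π - φ) := by
    rw [hrdef]; exact abs_sub_le_iff.mpr ⟨by linarith, by linarith⟩
  have hval : ((jacobiMeasure α β) (Set.Ioo (θ - r) (θ + r))).toReal =
      ∫ s in Set.Ioo (max (θ - r) 0) (min (θ + r) π),
        Real.sin (s / 2) ^ (2 * α + 1) * Real.cos (s / 2) ^ (2 * β + 1) := by
    rw [Stmt16Aux.jacobi_trunc, Stmt16Aux.jacobi_val ha hb (le_max_right _ _) (min_le_right _ _)]
  set u := max (θ - r) 0 with hudef
  set v := min (θ + r) π with hvdef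
  have hu0 : (0:ℝ) ≤ u := le_max_right _ _
  have huθ : u < θ := by rw [hudef]; exact max_lt (by linarith) hθ0
  have hθv : θ < v := by rw [hvdef]; exact lt_min (by linarith) hθπ
  have huv : u ≤ v := (huθ.trans hθv).le
  have hvπ : v ≤ π := min_le_right _ _
  have hv0 : (0:ℝ) < v := lt_of_le_of_lt hu0 (huθ.trans hθv)
  have hπu : (0:ℝ) < π - u := by linarith
  have hu1 : θ - r ≤ u := le_max_left _ _
  have hvθr : v ≤ θ + r := min_le_left _ _
  have hvh : (θ + r) / 2 ≤ v := by rw [hvdef]; exact le_min (by linarith) (by linarith)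
  have hu3 : (π - θ + r) / 2 ≤ π - u := by
    rcases le_total (θ - r) 0 with h | h
    · rw [hudef, max_eq_right h]; linarith
    · rw [hudef, max_eq_left h]; linarith
  have hu2 : π - u ≤ π - θ + r := by linarith
  have hvu2 : v - u ≤ 2 * r := by linarith
  have hvu1 : r / 2 ≤ v - u := by
    rcases le_total θ (π / 2) with h | h
    · have hsub : r / 2 ≤ v - θ := by
        rcases min_cases (θ + r) π with ⟨h1, h2⟩ | ⟨h1, h2⟩ <;> rw [hvdef, h1] <;> linarith
      linarith
    · have hsub : r / 2 ≤ θ - u := by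
        rcases max_cases (θ - r) 0 with ⟨h1, h2⟩ | ⟨h1, h2⟩ <;> rw [hudef, h1] <;> linarith
      linarith
  have hθφpos : (0:ℝ) < θ + φ := by linarith
  have h2πθφ : (0:ℝ) < 2 * π - θ - φ := by linarith
  have hcmp1 : v ≤ 4 * (θ + φ) := by linarith
  have hcmp2 : θ + φ ≤ 4 * v := by linarith
  have hcmp3 : π - u ≤ 4 * (2 * π - θ - φ) := by linarith
  have hcmp4 : 2 * π - θ - φ ≤ 4 * (π - u) := by linarith
  have e2 : v ^ (2 * α + 1) ≤ 4 ^ |2 * α + 1| * (θ + φ) ^ (2 * α + 1) :=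
    Stmt16Aux.rpow_comp hv0 hθφpos (by norm_num) hcmp1 hcmp2
  have e2' : (θ + φ) ^ (2 * α + 1) ≤ 4 ^ |2 * α + 1| * v ^ (2 * α + 1) :=
    Stmt16Aux.rpow_comp hθφpos hv0 (by norm_num) hcmp2 hcmp1
  have e3 : (π - u) ^ (2 * β + 1) ≤ 4 ^ |2 * β + 1| * (2 * π - θ - φ) ^ (2 * β + 1) :=
    Stmt16Aux.rpow_comp hπu h2πθφ (by norm_num) hcmp3 hcmp4
  have e3' : (2 * π - θ - φ) ^ (2 * β + 1) ≤ 4 ^ |2 * β + 1| * (π - u) ^ (2 * β + 1) :=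
    Stmt16Aux.rpow_comp h2πθφ hπu (by norm_num) hcmp4 hcmp3
  -- nonnegativity facts
  have nn1 : (0:ℝ) ≤ v ^ (2 * α + 1) := Real.rpow_nonneg hv0.le _
  have nn2 : (0:ℝ) ≤ (π - u) ^ (2 * β + 1) := Real.rpow_nonneg hπu.le _
  have nn3 : (0:ℝ) ≤ (θ + φ) ^ (2 * α + 1) := Real.rpow_nonneg hθφpos.le _
  have nn4 : (0:ℝ) ≤ (2 * π - θ - φ) ^ (2 * β + 1) := Real.rpow_nonneg h2πθφ.le _
  -- comparison of the two products
  have hXlow : r * (θ + φ) ^ (2 * α + 1) * (2 * π - θ - φ) ^ (2 * β + 1) ≤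
      2 * ((4:ℝ) ^ |2 * α + 1| * (4:ℝ) ^ |2 * β + 1|) *
        ((v - u) * v ^ (2 * α + 1) * (π - u) ^ (2 * β + 1)) := by
    have t1 : r ≤ 2 * (v - u) := by linarith
    have step1 : r * (θ + φ) ^ (2 * α + 1) ≤
        (2 * (v - u)) * (4 ^ |2 * α + 1| * v ^ (2 * α + 1)) :=
      mul_le_mul t1 e2' nn3 (by linarith)
    calc r * (θ + φ) ^ (2 * α + 1) * (2 * π - θ - φ) ^ (2 * β + 1)
        ≤ (2 * (v - u)) * (4 ^ |2 * α + 1| * v ^ (2 * α + 1)) *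
            (4 ^ |2 * β + 1| * (π - u) ^ (2 * β + 1)) := by
          refine mul_le_mul step1 e3' nn4 ?_
          have : (0:ℝ) ≤ 2 * (v - u) := by linarith
          positivity
      _ = 2 * ((4:ℝ) ^ |2 * α + 1| * (4:ℝ) ^ |2 * β + 1|) *
            ((v - u) * v ^ (2 * α + 1) * (π - u) ^ (2 * β + 1)) := by ring
  have hXup : (v - u) * v ^ (2 * α + 1) * (π - u) ^ (2 * β + 1) ≤
      2 * ((4:ℝ) ^ |2 * α + 1| * (4:ℝ) ^ |2 * β + 1|) *
        (r * (θ + φ) ^ (2 * α + 1) * (2 * π - θ - φ) ^ (2 * β + 1)) := by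
    have t1 : v - u ≤ 2 * r := hvu2
    have step1 : (v - u) * v ^ (2 * α + 1) ≤
        (2 * r) * (4 ^ |2 * α + 1| * (θ + φ) ^ (2 * α + 1)) :=
      mul_le_mul t1 e2 nn1 (by linarith)
    calc (v - u) * v ^ (2 * α + 1) * (π - u) ^ (2 * β + 1)
        ≤ (2 * r) * (4 ^ |2 * α + 1| * (θ + φ) ^ (2 * α + 1)) *
            (4 ^ |2 * β + 1| * (2 * π - θ - φ) ^ (2 * β + 1)) := by
          refine mul_le_mul step1 e3 nn2 ?_
          positivity
      _ = 2 * ((4:ℝ) ^ |2 * α + 1| * (4:ℝ) ^ |2 * β + 1|) *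
            (r * (θ + φ) ^ (2 * α + 1) * (2 * π - θ - φ) ^ (2 * β + 1)) := by ring
  -- integral comparison between g and w
  have hsub : Set.Ioo u v ⊆ Set.Ioo (0:ℝ) π := Set.Ioo_subset_Ioo hu0 hvπ
  have hWint : IntegrableOn (fun s : ℝ => s ^ (2 * α + 1) * (π - s) ^ (2 * β + 1))
      (Set.Ioo u v) := (Stmt16Aux.integrableOn_w ha hb).mono_set hsub
  have hGint : IntegrableOn
      (fun s : ℝ => Real.sin (s / 2) ^ (2 * α + 1) * Real.cos (s / 2) ^ (2 * β + 1))
      (Set.Ioo u v) := (Stmt16Aux.integrableOn_g ha hb).mono_set hsub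
  have i1 := HB u v hu0 huv hvπ
  have i2low : cg * ∫ s in Set.Ioo u v, s ^ (2 * α + 1) * (π - s) ^ (2 * β + 1) ≤
      ∫ s in Set.Ioo u v, Real.sin (s / 2) ^ (2 * α + 1) * Real.cos (s / 2) ^ (2 * β + 1) := by
    rw [← MeasureTheory.integral_const_mul]
    exact setIntegral_mono_on (hWint.const_mul cg) hGint measurableSet_Ioo
      fun s hs => (Hg s (hsub hs)).1
  have i2up : (∫ s in Set.Ioo u v,
        Real.sin (s / 2) ^ (2 * α + 1) * Real.cos (s / 2) ^ (2 * β + 1)) ≤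
      Cg * ∫ s in Set.Ioo u v, s ^ (2 * α + 1) * (π - s) ^ (2 * β + 1) := by
    rw [← MeasureTheory.integral_const_mul]
    exact setIntegral_mono_on hGint (hWint.const_mul Cg) measurableSet_Ioo
      fun s hs => (Hg s (hsub hs)).2
  rw [hval]
  constructor
  · calc cg * cB / (2 * ((4:ℝ) ^ |2 * α + 1| * (4:ℝ) ^ |2 * β + 1|)) *
          (r * (θ + φ) ^ (2 * α + 1) * (2 * π - θ - φ) ^ (2 * β + 1))
        ≤ cg * cB / (2 * ((4:ℝ) ^ |2 * α + 1| * (4:ℝ) ^ |2 * β + 1|)) *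
            (2 * ((4:ℝ) ^ |2 * α + 1| * (4:ℝ) ^ |2 * β + 1|) *
              ((v - u) * v ^ (2 * α + 1) * (π - u) ^ (2 * β + 1))) :=
          mul_le_mul_of_nonneg_left hXlow (by positivity)
      _ = cg * (cB * ((v - u) * v ^ (2 * α + 1) * (π - u) ^ (2 * β + 1))) := by
          field_simp
      _ ≤ cg * ∫ s in Set.Ioo u v, s ^ (2 * α + 1) * (π - s) ^ (2 * β + 1) :=
          mul_le_mul_of_nonneg_left i1.1 hcg.le
      _ ≤ ∫ s in Set.Ioo u v,
            Real.sin (s / 2) ^ (2 * α + 1) * Real.cos (s / 2) ^ (2 * β + 1) := i2low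
  · calc (∫ s in Set.Ioo u v,
          Real.sin (s / 2) ^ (2 * α + 1) * Real.cos (s / 2) ^ (2 * β + 1))
        ≤ Cg * ∫ s in Set.Ioo u v, s ^ (2 * α + 1) * (π - s) ^ (2 * β + 1) := i2up
      _ ≤ Cg * (CB * ((v - u) * v ^ (2 * α + 1) * (π - u) ^ (2 * β + 1))) :=
          mul_le_mul_of_nonneg_left i1.2 hCg.le
      _ ≤ Cg * (CB * (2 * ((4:ℝ) ^ |2 * α + 1| * (4:ℝ) ^ |2 * β + 1|) *
            (r * (θ + φ) ^ (2 * α + 1) * (2 * π - θ - φ) ^ (2 * β + 1)))) := by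
          refine mul_le_mul_of_nonneg_left (mul_le_mul_of_nonneg_left hXup hCB.le) hCg.le
      _ = Cg * CB * (2 * ((4:ℝ) ^ |2 * α + 1| * (4:ℝ) ^ |2 * β + 1|)) *
            (r * (θ + φ) ^ (2 * α + 1) * (2 * π - θ - φ) ^ (2 * β + 1)) := by ring
end
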